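/- arXiv:math/0605678 — 5 statements merged into one kernel-verified Lean document; each statement's English description precedes it below -/
import Mathlib

section
/- Let h, g ∈ ℝ[z₁,…,zₙ] with f = h + ig not identically zero, and let z_{n+1} be a new indeterminate. Then the following are equivalent: (a) f = h + ig is stable; (b) h + z_{n+1}g ∈ ℝ[z₁,…,z_{n+1}] is real stable; (c) every nonzero polynomial in the pencil {αh + βg : α, β ∈ ℝ} is real stable, and for all 1 ≤ j ≤ n and all x ∈ ℝⁿ, (∂h/∂z_j)(x)·g(x) − h(x)·(∂g/∂z_j)(x) ≥ 0. -/
open MvPolynomial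

noncomputable section StmtAux

section Helpers
open Polynomial Complex

lemma aux_abs_conj_le : ∀ (d : ℕ) (F : ℂ[X]), F.natDegree ≤ d →
    (∀ w : ℂ, 0 < w.im → F.eval w ≠ 0) →
    ∀ w : ℂ, 0 ≤ w.im →
      ‖F.eval ((starRingEnd ℂ) w)‖ ≤ ‖F.eval w‖ := by
  intro d
  induction d with
  | zero =>
    intro F hd _ w _
    rw [Polynomial.eq_C_of_natDegree_le_zero hd]
    simp
  | succ d ih =>
    intro F hd hF w hw
    by_cases h0 : F.natDegree = 0
    · rw [Polynomial.eq_C_of_natDegree_le_zero h0.le]; simp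
    · have hdeg : 0 < F.degree := Polynomial.natDegree_pos_iff_degree_pos.mp
        (Nat.pos_of_ne_zero h0)
      obtain ⟨r, hr⟩ := Complex.exists_root hdeg
      obtain ⟨Q, hQ⟩ := Polynomial.dvd_iff_isRoot.mpr hr
      have hFne : F ≠ 0 := fun hz => by simp [hz] at h0
      have hQne : Q ≠ 0 := fun hz => hFne (by simp [hQ, hz])
      have hnd := Polynomial.natDegree_mul (Polynomial.X_sub_C_ne_zero r) hQne
      rw [← hQ, Polynomial.natDegree_X_sub_C] at hnd
      have hdQ : Q.natDegree ≤ d := by omega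
      have hQst : ∀ w : ℂ, 0 < w.im → Q.eval w ≠ 0 := by
        intro w hw hqz
        exact hF w hw (by simp [hQ, hqz])
      have hrim : r.im ≤ 0 := by
        by_contra hri
        exact hF r (by linarith) hr
      have h1 : ‖(starRingEnd ℂ) w - r‖ ≤ ‖w - r‖ := by
        rw [Complex.norm_def, Complex.norm_def]
        apply Real.sqrt_le_sqrt
        simp only [Complex.normSq_apply, Complex.sub_re, Complex.sub_im, Complex.conj_re,
          Complex.conj_im]
        nlinarith
      have e1 : F.eval ((starRingEnd ℂ) w) = ((starRingEnd ℂ) w - r) * Q.eval ((starRingEnd ℂ) w) := by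
        simp [hQ]
      have e2 : F.eval w = (w - r) * Q.eval w := by simp [hQ]
      rw [e1, e2, norm_mul, norm_mul]
      exact mul_le_mul h1 (ih Q hdQ hQst w hw) (norm_nonneg _) (norm_nonneg _)

/-- If `F` has no roots in the open upper half plane, then at real points the
imaginary part of `F' ⬝ conj F` is nonpositive. -/
lemma aux_wron_im : ∀ (d : ℕ) (F : ℂ[X]), F.natDegree ≤ d →
    (∀ w : ℂ, 0 < w.im → F.eval w ≠ 0) →
    ∀ s : ℝ, (F.derivative.eval (s : ℂ) * (starRingEnd ℂ) (F.eval (s : ℂ))).im ≤ 0 := by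
  intro d
  induction d with
  | zero =>
    intro F hd _ s
    rw [Polynomial.eq_C_of_natDegree_le_zero hd]
    simp
  | succ d ih =>
    intro F hd hF s
    by_cases h0 : F.natDegree = 0
    · rw [Polynomial.eq_C_of_natDegree_le_zero h0.le]; simp
    · have hdeg : 0 < F.degree := Polynomial.natDegree_pos_iff_degree_pos.mp
        (Nat.pos_of_ne_zero h0)
      obtain ⟨r, hr⟩ := Complex.exists_root hdeg
      obtain ⟨Q, hQ⟩ := Polynomial.dvd_iff_isRoot.mpr hr
      have hFne : F ≠ 0 := fun hz => by simp [hz] at h0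
      have hQne : Q ≠ 0 := fun hz => hFne (by simp [hQ, hz])
      have hnd := Polynomial.natDegree_mul (Polynomial.X_sub_C_ne_zero r) hQne
      rw [← hQ, Polynomial.natDegree_X_sub_C] at hnd
      have hdQ : Q.natDegree ≤ d := by omega
      have hQst : ∀ w : ℂ, 0 < w.im → Q.eval w ≠ 0 := by
        intro w hw hqz
        exact hF w hw (by simp [hQ, hqz])
      have hrim : r.im ≤ 0 := by
        by_contra hri
        exact hF r (by linarith) hr
      have hder : F.derivative = Q + (Polynomial.X - Polynomial.C r) * Q.derivative := by
        rw [hQ, derivative_mul]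
        simp [mul_comm]
      set w : ℂ := (s : ℂ) with hw
      set a : ℂ := Q.eval w with ha
      set b : ℂ := Q.derivative.eval w with hb
      set u : ℂ := w - r with hu
      have key : F.derivative.eval w * (starRingEnd ℂ) (F.eval w)
          = (starRingEnd ℂ) u * ((Complex.normSq a : ℝ) : ℂ)
            + ((Complex.normSq u : ℝ) : ℂ) * (b * (starRingEnd ℂ) a) := by
        rw [hder, hQ]
        simp only [Polynomial.eval_add, Polynomial.eval_mul, Polynomial.eval_sub,
          Polynomial.eval_X, Polynomial.eval_C, map_mul]
        rw [← Complex.mul_conj, ← Complex.mul_conj]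
        ring
      rw [key]
      have huim : 0 ≤ u.im := by
        simp [hu, hw, Complex.sub_im]
        linarith
      have hIH : (b * (starRingEnd ℂ) a).im ≤ 0 := ih Q hdQ hQst s
      simp only [Complex.add_im, Complex.mul_im, Complex.ofReal_re, Complex.ofReal_im,
        Complex.conj_im, Complex.conj_re]
      have h2 : 0 ≤ Complex.normSq a := Complex.normSq_nonneg a
      have h3 : 0 ≤ Complex.normSq u := Complex.normSq_nonneg u
      have hexp : (b * (starRingEnd ℂ) a).im = b.re * -a.im + b.im * a.re := by
        simp [Complex.mul_im]
      rw [hexp] at hIH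
      nlinarith

variable {n : ℕ}

/-- Restriction of a multivariate real polynomial to the line `s ↦ x + s y`. -/
def lmap (x y : Fin n → ℝ) : MvPolynomial (Fin n) ℝ →ₐ[ℝ] Polynomial ℝ :=
  MvPolynomial.aeval (fun j => Polynomial.C (x j) + Polynomial.C (y j) * Polynomial.X)

lemma lmap_aeval_complex (x y : Fin n → ℝ) (p : MvPolynomial (Fin n) ℝ) (t : ℂ) :
    Polynomial.aeval t (lmap x y p)
      = MvPolynomial.aeval (fun j => (x j : ℂ) + (y j : ℂ) * t) p := by
  have h := MvPolynomial.comp_aeval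
    (R := ℝ) (φ := (Polynomial.aeval t : Polynomial ℝ →ₐ[ℝ] ℂ))
    (f := fun j : Fin n => Polynomial.C (x j) + Polynomial.C (y j) * Polynomial.X)
  have h2 := AlgHom.congr_fun h p
  simpa [lmap] using h2

lemma lmap_eval_real (x y : Fin n → ℝ) (p : MvPolynomial (Fin n) ℝ) (s : ℝ) :
    Polynomial.eval s (lmap x y p)
      = MvPolynomial.eval (fun j => x j + y j * s) p := by
  have h := MvPolynomial.comp_aeval
    (R := ℝ) (φ := (Polynomial.aeval s : Polynomial ℝ →ₐ[ℝ] ℝ))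
    (f := fun j : Fin n => Polynomial.C (x j) + Polynomial.C (y j) * Polynomial.X)
  have h2 := AlgHom.congr_fun h p
  simp only [AlgHom.coe_comp, Function.comp_apply, Polynomial.coe_aeval_eq_eval] at h2
  rw [show Polynomial.eval s (lmap x y p)
      = Polynomial.eval s ((MvPolynomial.aeval fun j : Fin n =>
          Polynomial.C (x j) + Polynomial.C (y j) * Polynomial.X) p) from rfl, h2]
  have e3 : (fun i : Fin n => Polynomial.eval s (Polynomial.C (x i) + Polynomial.C (y i)
      * Polynomial.X)) = fun j => x j + y j * s := by
    funext i; simp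
  rw [e3, MvPolynomial.aeval_def, show algebraMap ℝ ℝ = RingHom.id ℝ from Algebra.algebraMap_self]
  rfl

/-- chain rule for the line restriction. -/
lemma lmap_derivative (x y : Fin n → ℝ) (p : MvPolynomial (Fin n) ℝ) :
    (lmap x y p).derivative
      = ∑ j : Fin n, Polynomial.C (y j) * lmap x y (MvPolynomial.pderiv j p) := by
  induction p using MvPolynomial.induction_on with
  | C a => simp [lmap]
  | add p q hp hq =>
    simp only [map_add, Polynomial.derivative_add, hp, hq, mul_add, Finset.sum_add_distrib]
  | mul_X p j hp =>
    classical
    have e1 : lmap x y (p * MvPolynomial.X j)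
        = lmap x y p * (Polynomial.C (x j) + Polynomial.C (y j) * Polynomial.X) := by
      simp [lmap]
    have e2 : ∀ k : Fin n, MvPolynomial.pderiv k (p * MvPolynomial.X j)
        = MvPolynomial.pderiv k p * MvPolynomial.X j + p * (if j = k then 1 else 0) := by
      intro k
      rw [MvPolynomial.pderiv_mul, MvPolynomial.pderiv_X, Pi.single_apply]
    have e3 : (Polynomial.C (x j) + Polynomial.C (y j) * Polynomial.X).derivative
        = Polynomial.C (y j) := by simp
    have s1 : ∑ k : Fin n, Polynomial.C (y k) * lmap x y (MvPolynomial.pderiv k p * MvPolynomial.X j)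
        = (∑ k : Fin n, Polynomial.C (y k) * lmap x y (MvPolynomial.pderiv k p))
            * (Polynomial.C (x j) + Polynomial.C (y j) * Polynomial.X) := by
      rw [Finset.sum_mul]
      apply Finset.sum_congr rfl
      intro k _
      simp [lmap]
      ring
    have s2 : ∑ k : Fin n, Polynomial.C (y k)
          * lmap x y (p * (if j = k then (1 : MvPolynomial (Fin n) ℝ) else 0))
        = Polynomial.C (y j) * lmap x y p := by
      rw [Finset.sum_eq_single j]
      · simp
      · intro k _ hk
        have : ¬ (j = k) := fun hh => hk hh.symm
        simp [this]
      · simp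
    have final : ∑ k : Fin n, Polynomial.C (y k)
          * lmap x y (MvPolynomial.pderiv k (p * MvPolynomial.X j))
        = (∑ k : Fin n, Polynomial.C (y k) * lmap x y (MvPolynomial.pderiv k p))
            * (Polynomial.C (x j) + Polynomial.C (y j) * Polynomial.X)
          + Polynomial.C (y j) * lmap x y p := by
      have hsplit : ∀ k : Fin n, Polynomial.C (y k)
            * lmap x y (MvPolynomial.pderiv k (p * MvPolynomial.X j))
          = Polynomial.C (y k) * lmap x y (MvPolynomial.pderiv k p * MvPolynomial.X j)
            + Polynomial.C (y k) * lmap x y (p * (if j = k then (1 : MvPolynomial (Fin n) ℝ) else 0)) := by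
        intro k
        rw [e2, map_add, mul_add]
      rw [Finset.sum_congr rfl (fun k _ => hsplit k), Finset.sum_add_distrib, s1, s2]
    rw [e1, Polynomial.derivative_mul, e3, hp, final]
    ring

lemma arith_final {A B w : ℂ} (ha : A + Complex.I * B ≠ 0)
    (hab : ‖A - Complex.I * B‖ ≤ ‖A + Complex.I * B‖)
    (hw : 0 < w.im) : A + w * B ≠ 0 := by
  intro heq
  have key : (A + Complex.I * B) * (1 - Complex.I * w)
      + (A - Complex.I * B) * (1 + Complex.I * w) = 2 * (A + w * B) := by
    linear_combination (-2 * w * B) * Complex.I_mul_I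
  rw [heq, mul_zero] at key
  have hprod : (A + Complex.I * B) * (1 - Complex.I * w)
      = -((A - Complex.I * B) * (1 + Complex.I * w)) := by linear_combination key
  have habs : ‖A + Complex.I * B‖ * ‖1 - Complex.I * w‖
      = ‖A - Complex.I * B‖ * ‖1 + Complex.I * w‖ := by
    rw [← norm_mul, ← norm_mul, hprod, norm_neg]
  have h1 : ‖1 + Complex.I * w‖ < ‖1 - Complex.I * w‖ := by
    rw [Complex.norm_def, Complex.norm_def]
    apply Real.sqrt_lt_sqrt (Complex.normSq_nonneg _)
    simp only [Complex.normSq_apply, Complex.add_re, Complex.add_im, Complex.sub_re,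
      Complex.sub_im, Complex.one_re, Complex.one_im, Complex.mul_re, Complex.mul_im,
      Complex.I_re, Complex.I_im]
    nlinarith
  have ha' : 0 < ‖A + Complex.I * B‖ := by
    simpa using norm_pos_iff.mpr ha
  nlinarith [norm_nonneg (A - Complex.I * B), norm_nonneg (1 + Complex.I * w)]


lemma coreAB {n : ℕ} (h g : MvPolynomial (Fin n) ℝ)
    (hst : ∀ z : Fin n → ℂ, (∀ i, 0 < (z i).im) →
      MvPolynomial.aeval z h + Complex.I * MvPolynomial.aeval z g ≠ 0)
    (z : Fin n → ℂ) (hz : ∀ i, 0 < (z i).im) (w : ℂ) (hw : 0 < w.im) :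
    MvPolynomial.aeval z h + w * MvPolynomial.aeval z g ≠ 0 := by
  set x : Fin n → ℝ := fun j => (z j).re with hx
  set y : Fin n → ℝ := fun j => (z j).im with hy
  set H : Polynomial ℝ := lmap x y h with hH
  set G : Polynomial ℝ := lmap x y g with hG
  set Fc : Polynomial ℂ := H.map (algebraMap ℝ ℂ)
    + Polynomial.C Complex.I * G.map (algebraMap ℝ ℂ) with hFc
  have evalF : ∀ t : ℂ, Fc.eval t
      = MvPolynomial.aeval (fun j => (x j : ℂ) + (y j : ℂ) * t) h
        + Complex.I * MvPolynomial.aeval (fun j => (x j : ℂ) + (y j : ℂ) * t) g := by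
    intro t
    simp [hFc, Polynomial.eval_map_algebraMap, hH, hG, lmap_aeval_complex]
  have hpt : ∀ t : ℂ, 0 < t.im → ∀ i, 0 < (((x i : ℂ) + (y i : ℂ) * t)).im := by
    intro t ht i
    have : (((x i : ℂ) + (y i : ℂ) * t)).im = y i * t.im := by
      simp [Complex.add_im, Complex.mul_im]
    rw [this]
    exact mul_pos (hz i) ht
  have hFst : ∀ t : ℂ, 0 < t.im → Fc.eval t ≠ 0 := by
    intro t ht
    rw [evalF]
    exact hst _ (hpt t ht)
  have hzeq : (fun j => (x j : ℂ) + (y j : ℂ) * Complex.I) = z := by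
    funext j
    simpa [hx, hy] using Complex.re_add_im (z j)
  have hA : Fc.eval Complex.I
      = MvPolynomial.aeval z h + Complex.I * MvPolynomial.aeval z g := by
    rw [evalF, hzeq]
  set A := MvPolynomial.aeval z h with hAd
  set B := MvPolynomial.aeval z g with hBd
  have haneq : A + Complex.I * B ≠ 0 := by
    rw [← hA]
    exact hFst Complex.I (by simp)
  have hHI : Polynomial.aeval Complex.I H = (H.map (algebraMap ℝ ℂ)).eval Complex.I := by
    rw [Polynomial.eval_map_algebraMap]
  have hGI : Polynomial.aeval Complex.I G = (G.map (algebraMap ℝ ℂ)).eval Complex.I := by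
    rw [Polynomial.eval_map_algebraMap]
  have hHIv : Polynomial.aeval Complex.I H = A := by
    rw [hH, lmap_aeval_complex, hzeq]
  have hGIv : Polynomial.aeval Complex.I G = B := by
    rw [hG, lmap_aeval_complex, hzeq]
  have hconj : Fc.eval ((starRingEnd ℂ) Complex.I)
      = (starRingEnd ℂ) A + Complex.I * (starRingEnd ℂ) B := by
    rw [hFc]
    simp only [Polynomial.eval_add, Polynomial.eval_mul, Polynomial.eval_C]
    rw [Polynomial.eval_map_algebraMap, Polynomial.eval_map_algebraMap,
      Polynomial.aeval_conj, Polynomial.aeval_conj, hHIv, hGIv]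
  have hb : (starRingEnd ℂ) (Fc.eval ((starRingEnd ℂ) Complex.I)) = A - Complex.I * B := by
    rw [hconj]
    simp [Complex.ext_iff, Complex.add_im, Complex.mul_im]
    constructor <;> ring
  have hU1 := aux_abs_conj_le Fc.natDegree Fc le_rfl hFst Complex.I (by simp)
  have hab : ‖A - Complex.I * B‖ ≤ ‖A + Complex.I * B‖ := by
    rw [← hb, ← hA]
    rw [Complex.norm_conj]
    exact hU1
  exact arith_final haneq hab hw


lemma exists_uhp_ne_zero {n : ℕ} (p : MvPolynomial (Fin n) ℝ) (hp : p ≠ 0) :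
    ∃ z : Fin n → ℂ, (∀ i, 0 < (z i).im) ∧ MvPolynomial.aeval z p ≠ 0 := by
  have hx : ∃ x : Fin n → ℝ, MvPolynomial.eval x p ≠ 0 := by
    by_contra hc
    push_neg at hc
    exact hp (MvPolynomial.funext fun x => by simpa using hc x)
  obtain ⟨x, hx⟩ := hx
  set P : Polynomial ℝ := lmap x (fun _ => 1) p with hPdef
  have hP0 : P.eval 0 = MvPolynomial.eval x p := by
    rw [hPdef, lmap_eval_real]
    simp
  set Pc : Polynomial ℂ := P.map (algebraMap ℝ ℂ) with hPc
  have hPcne : Pc ≠ 0 := by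
    intro hzero
    apply hx
    rw [← hP0]
    have : Pc.eval 0 = 0 := by rw [hzero]; simp
    rw [hPc, Polynomial.eval_map_algebraMap] at this
    have h0 : ((0:ℂ)) = algebraMap ℝ ℂ (0:ℝ) := by simp
    rw [h0, Polynomial.aeval_algebraMap_apply] at this
    simpa using this
  have hroot : ¬ ∀ s : ℝ, 0 < s → Pc.eval ((s : ℂ) * Complex.I) = 0 := by
    intro hall
    apply hPcne
    apply Polynomial.eq_zero_of_infinite_isRoot
    apply Set.Infinite.mono (s := (fun s : ℝ => (s : ℂ) * Complex.I) '' Set.Ioi 0)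
    · rintro t ⟨s, hs, rfl⟩
      exact hall s hs
    · apply Set.Infinite.image
      · intro a _ b _ hab
        have := mul_right_cancel₀ Complex.I_ne_zero hab
        exact_mod_cast this
      · exact Set.Ioi_infinite 0
  push_neg at hroot
  obtain ⟨s, hs, hsne⟩ := hroot
  refine ⟨fun j => (x j : ℂ) + ((1:ℝ) : ℂ) * ((s : ℂ) * Complex.I), ?_, ?_⟩
  · intro i
    simp
    exact hs
  · have := hsne
    rw [hPc, Polynomial.eval_map_algebraMap, hPdef, lmap_aeval_complex] at this
    exact this

lemma cruxC {n : ℕ} (h g : MvPolynomial (Fin n) ℝ)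
    (hst : ∀ z : Fin n → ℂ, (∀ i, 0 < (z i).im) →
      MvPolynomial.aeval z h + Complex.I * MvPolynomial.aeval z g ≠ 0)
    (hh : h ≠ 0) (z : Fin n → ℂ) (hz : ∀ i, 0 < (z i).im) :
    MvPolynomial.aeval z h ≠ 0 := by
  intro hz0
  have hgz : MvPolynomial.aeval z g ≠ 0 := by
    intro hg0
    exact hst z hz (by rw [hz0, hg0, mul_zero, add_zero])
  obtain ⟨zs, hzs, hzsne⟩ := exists_uhp_ne_zero h hh
  set c : ℂ → (Fin n → ℂ) := fun s => fun j => z j + s * (zs j - z j) with hc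
  have evalP : ∀ (p : MvPolynomial (Fin n) ℝ) (s : ℂ),
      Polynomial.eval s (MvPolynomial.aeval
        (fun j => Polynomial.C (z j) + Polynomial.X * Polynomial.C (zs j - z j)) p : Polynomial ℂ)
      = MvPolynomial.aeval (c s) p := by
    intro p s
    have hcomp := MvPolynomial.comp_aeval (R := ℝ)
      (φ := ((Polynomial.aeval s : Polynomial ℂ →ₐ[ℂ] ℂ).restrictScalars ℝ))
      (f := fun j : Fin n => Polynomial.C (z j) + Polynomial.X * Polynomial.C (zs j - z j))
    have h2 := AlgHom.congr_fun hcomp p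
    simp only [AlgHom.coe_comp, AlgHom.coe_restrictScalars', Function.comp_apply,
      map_add, map_mul, Polynomial.aeval_C, Polynomial.aeval_X] at h2
    rw [show ((Polynomial.aeval s : Polynomial ℂ →ₐ[ℂ] ℂ) : Polynomial ℂ → ℂ)
      = Polynomial.eval s from funext fun q => Polynomial.coe_aeval_eq_eval s ▸ rfl] at h2
    rw [h2]
    rfl
  set P : Polynomial ℂ := MvPolynomial.aeval
      (fun j => Polynomial.C (z j) + Polynomial.X * Polynomial.C (zs j - z j)) h with hP
  set Q : Polynomial ℂ := MvPolynomial.aeval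
      (fun j => Polynomial.C (z j) + Polynomial.X * Polynomial.C (zs j - z j)) g with hQ
  have hc0 : c 0 = z := by funext j; simp [hc]
  have hc1 : c 1 = zs := by funext j; simp [hc]
  have hP0 : Polynomial.eval 0 P = 0 := by rw [hP, evalP, hc0]; exact hz0
  have hQ0 : Polynomial.eval 0 Q = MvPolynomial.aeval z g := by rw [hQ, evalP, hc0]
  have hPne : P ≠ 0 := by
    intro h0
    apply hzsne
    rw [← hc1, ← evalP h 1, ← hP, h0]
    simp
  set ρ : ℂ → ℂ := fun s => Polynomial.eval s P / Polynomial.eval s Q with hρ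
  have hρ0 : ρ 0 = 0 := by simp [hρ, hP0]
  have han : AnalyticAt ℂ ρ 0 := by
    apply AnalyticAt.div
    · exact (Polynomial.differentiable P).analyticAt 0
    · exact (Polynomial.differentiable Q).analyticAt 0
    · rw [hQ0]; exact hgz
  rcases han.eventually_constant_or_nhds_le_map_nhds with hconst | hopen
  · -- constant branch : P ≡ 0 near 0, contradiction
    have hQcont : ContinuousAt (fun s => Polynomial.eval s Q) 0 :=
      (Polynomial.continuous Q).continuousAt
    have hQev : ∀ᶠ s in nhds (0:ℂ), Polynomial.eval s Q ≠ 0 := by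
      apply hQcont.eventually_ne
      rw [hQ0]; exact hgz
    have hPz : ∀ᶠ s in nhds (0:ℂ), Polynomial.eval s P = 0 := by
      filter_upwards [hconst, hQev] with s h1 h2
      rw [hρ0] at h1
      rcases div_eq_zero_iff.mp h1 with h3 | h3
      · exact h3
      · exact absurd h3 h2
    obtain ⟨U, hUnhds, hUsub⟩ := Filter.eventually_iff_exists_mem.mp hPz
    obtain ⟨δ, hδ, hball⟩ := Metric.mem_nhds_iff.mp hUnhds
    apply hPne
    apply Polynomial.eq_zero_of_infinite_isRoot
    apply Set.Infinite.mono (s := (fun r : ℝ => (r : ℂ)) '' Set.Ioo 0 (δ/2))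
    · rintro t ⟨r, hr, rfl⟩
      apply hUsub
      apply hball
      simp only [Metric.mem_ball, Complex.dist_eq, sub_zero]
      rw [Complex.norm_real, Real.norm_eq_abs, abs_of_pos hr.1]
      linarith [hr.2]
    · apply Set.Infinite.image
      · intro a _ b _ hab
        exact Complex.ofReal_injective (by simpa using hab)
      · exact Set.Ioo_infinite (half_pos hδ)
  · -- open branch
    set U : Set ℂ := {s | (∀ j, 0 < ((c s) j).im) ∧ Polynomial.eval s Q ≠ 0} with hUdef
    have hUopen : IsOpen U := by
      have : U = (⋂ j, {s | 0 < ((c s) j).im}) ∩ {s | Polynomial.eval s Q ≠ 0} := by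
        ext t
        simp [hUdef, Set.mem_iInter]
      rw [this]
      apply IsOpen.inter
      · apply isOpen_iInter_of_finite
        intro j
        apply isOpen_lt continuous_const
        exact Complex.continuous_im.comp (by fun_prop)
      · exact isOpen_compl_singleton.preimage (Polynomial.continuous Q)
    have hU0 : U ∈ nhds (0:ℂ) := by
      apply hUopen.mem_nhds
      constructor
      · intro j; rw [hc0]; exact hz j
      · rw [hQ0]; exact hgz
    have himg : ρ '' U ∈ nhds (0:ℂ) := by
      have h1 : ρ '' U ∈ Filter.map ρ (nhds 0) := Filter.image_mem_map hU0
      have := hopen h1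
      rwa [hρ0] at this
    obtain ⟨δ, hδpos, hball⟩ := Metric.mem_nhds_iff.mp himg
    have hmem : -Complex.I * ((δ/2 : ℝ) : ℂ) ∈ Metric.ball (0:ℂ) δ := by
      simp only [Metric.mem_ball, Complex.dist_eq, sub_zero, norm_mul, norm_neg,
        Complex.norm_I, Complex.norm_real, Real.norm_eq_abs, one_mul]
      rw [abs_of_pos (by linarith)]
      linarith
    obtain ⟨s, hsU, hs⟩ := hball hmem
    have hQs : Polynomial.eval s Q ≠ 0 := hsU.2
    have hval : MvPolynomial.aeval (c s) h
        = -Complex.I * ((δ/2 : ℝ) : ℂ) * MvPolynomial.aeval (c s) g := by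
      rw [← evalP h s, ← evalP g s, ← hP, ← hQ]
      have : Polynomial.eval s P = ρ s * Polynomial.eval s Q := by
        rw [hρ]
        field_simp
      rw [this, hs]
    apply coreAB h g hst (c s) hsU.1 (Complex.I * ((δ/2 : ℝ) : ℂ))
      (by simp; linarith)
    rw [hval]
    ring
lemma wron_zero_dep (H G : Polynomial ℝ)
    (hw : H.derivative * G - H * G.derivative = 0) :
    ∃ α β : ℝ, ¬(α = 0 ∧ β = 0) ∧ α • H + β • G = 0 := by
  by_cases hH : H = 0
  · exact ⟨1, 0, by norm_num, by simp [hH]⟩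
  by_cases hG : G = 0
  · exact ⟨0, 1, by norm_num, by simp [hG]⟩
  have hdne : GCDMonoid.gcd H G ≠ 0 := by
    intro h0
    exact hH (zero_dvd_iff.mp (h0 ▸ gcd_dvd_left H G))
  have hH1 : GCDMonoid.gcd H G * (H / GCDMonoid.gcd H G) = H :=
    EuclideanDomain.mul_div_cancel' hdne (gcd_dvd_left H G)
  have hG1 : GCDMonoid.gcd H G * (G / GCDMonoid.gcd H G) = G :=
    EuclideanDomain.mul_div_cancel' hdne (gcd_dvd_right H G)
  set d := GCDMonoid.gcd H G
  set H1 := H / d with hH1d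
  set G1 := G / d with hG1d
  have hH1ne : H1 ≠ 0 := by
    intro h0
    exact hH (by rw [← hH1, h0, mul_zero])
  have hG1ne : G1 ≠ 0 := by
    intro h0
    exact hG (by rw [← hG1, h0, mul_zero])
  have hcop : IsCoprime H1 G1 := isCoprime_div_gcd_div_gcd hG
  have hgen : ∀ D A B : Polynomial ℝ,
      (D * A).derivative * (D * B) - (D * A) * (D * B).derivative
        = D ^ 2 * (A.derivative * B - A * B.derivative) := by
    intro D A B
    rw [derivative_mul, derivative_mul]
    ring
  have hw' : d ^ 2 * (H1.derivative * G1 - H1 * G1.derivative) = 0 := by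
    rw [← hgen d H1 G1, hH1, hG1]
    exact hw
  have hw1 : H1.derivative * G1 - H1 * G1.derivative = 0 := by
    rcases mul_eq_zero.mp hw' with h0 | h0
    · exact absurd h0 (pow_ne_zero 2 hdne)
    · exact h0
  have hdvd : H1 ∣ H1.derivative * G1 := by
    rw [sub_eq_zero] at hw1
    exact ⟨G1.derivative, hw1⟩
  have hdvd2 : H1 ∣ H1.derivative := hcop.dvd_of_dvd_mul_right hdvd
  have hH1der : H1.derivative = 0 := by
    by_cases hder : H1.derivative = 0
    · exact hder
    · exact absurd (Polynomial.eq_zero_of_dvd_of_degree_lt hdvd2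
        (Polynomial.degree_derivative_lt hH1ne)) hder
  have hdvdG : G1 ∣ G1.derivative * H1 := by
    rw [sub_eq_zero] at hw1
    exact ⟨H1.derivative, by linear_combination -hw1⟩
  have hdvdG2 : G1 ∣ G1.derivative := (hcop.symm).dvd_of_dvd_mul_right hdvdG
  have hG1der : G1.derivative = 0 := by
    by_cases hder : G1.derivative = 0
    · exact hder
    · exact absurd (Polynomial.eq_zero_of_dvd_of_degree_lt hdvdG2
        (Polynomial.degree_derivative_lt hG1ne)) hder
  obtain ⟨cH, hcH⟩ : ∃ c : ℝ, H1 = Polynomial.C c :=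
    ⟨H1.coeff 0, Polynomial.eq_C_of_natDegree_eq_zero
      (Polynomial.natDegree_eq_zero_of_derivative_eq_zero hH1der)⟩
  obtain ⟨cG, hcG⟩ : ∃ c : ℝ, G1 = Polynomial.C c :=
    ⟨G1.coeff 0, Polynomial.eq_C_of_natDegree_eq_zero
      (Polynomial.natDegree_eq_zero_of_derivative_eq_zero hG1der)⟩
  have hcHne : cH ≠ 0 := by
    intro h0
    exact hH1ne (by rw [hcH, h0, Polynomial.C_0])
  refine ⟨cG, -cH, fun hc => hcHne (by simpa using hc.2), ?_⟩
  rw [← hH1, ← hG1, hcH, hcG, Polynomial.smul_eq_C_mul, Polynomial.smul_eq_C_mul]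
  rw [map_neg]
  ring

lemma hko_converse (H G : Polynomial ℝ)
    (hpen : ∀ α β : ℝ, (α • H + β • G = 0) ∨
      (∀ t : ℂ, 0 < t.im → Polynomial.aeval t (α • H + β • G) ≠ 0))
    (hwr : ∀ s : ℝ, 0 ≤ Polynomial.eval s H.derivative * Polynomial.eval s G
              - Polynomial.eval s H * Polynomial.eval s G.derivative)
    (hne : Polynomial.aeval Complex.I H ≠ 0 ∨ Polynomial.aeval Complex.I G ≠ 0) :
    Polynomial.aeval Complex.I H + Complex.I * Polynomial.aeval Complex.I G ≠ 0 := by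
  intro heq
  have haeval : ∀ (α β : ℝ) (t : ℂ), Polynomial.aeval t (α • H + β • G)
      = (α : ℂ) * Polynomial.aeval t H + (β : ℂ) * Polynomial.aeval t G := by
    intro α β t
    simp [map_add, map_smul, Complex.real_smul]
  set A := Polynomial.aeval Complex.I H with hA
  set B := Polynomial.aeval Complex.I G with hB
  have hAB : A = -Complex.I * B := by linear_combination heq
  have hBne : B ≠ 0 := by
    rcases hne with hne | hne
    · intro h0
      rw [h0, mul_zero] at hAB
      exact hne hAB
    · exact hne
  have hAne : A ≠ 0 := by
    rw [hAB]
    exact mul_ne_zero (by simp [Complex.I_ne_zero]) hBne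
  by_cases hdep : ∃ α β : ℝ, ¬(α = 0 ∧ β = 0) ∧ α • H + β • G = 0
  · obtain ⟨α, β, hαβ, h0⟩ := hdep
    have hval : (α : ℂ) * A + (β : ℂ) * B = 0 := by
      rw [← haeval α β Complex.I, h0]
      simp
    rw [hAB] at hval
    have hfac : ((β : ℂ) - (α : ℂ) * Complex.I) * B = 0 := by linear_combination hval
    rcases mul_eq_zero.mp hfac with h1 | h1
    · apply hαβ
      constructor
      · have := congrArg Complex.im h1
        simpa using this
      · have := congrArg Complex.re h1
        simpa using this
    · exact hBne h1
  · have hindep : ∀ α β : ℝ, α • H + β • G = 0 → α = 0 ∧ β = 0 := by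
      intro α β h0
      by_contra hc
      exact hdep ⟨α, β, hc, h0⟩
    have hstab : ∀ α β : ℝ, ¬(α = 0 ∧ β = 0) →
        ∀ t : ℂ, 0 < t.im →
          (α : ℂ) * Polynomial.aeval t H + (β : ℂ) * Polynomial.aeval t G ≠ 0 := by
      intro α β hab t ht
      have h1 := (hpen α β).resolve_left (fun h0 => hab (hindep α β h0))
      have h2 := h1 t ht
      rwa [haeval] at h2
    have hGstab : ∀ t : ℂ, 0 < t.im → Polynomial.aeval t G ≠ 0 := by
      intro t ht
      have := hstab 0 1 (by norm_num) t ht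
      simpa using this
    have hHne : H ≠ 0 := by
      intro h0
      have := (hindep 1 0 (by simp [h0])).1
      norm_num at this
    have hGne : G ≠ 0 := by
      intro h0
      have := (hindep 0 1 (by simp [h0])).2
      norm_num at this
    have hWne : H.derivative * G - H * G.derivative ≠ 0 := by
      intro h0
      obtain ⟨α, β, hab, hcomb⟩ := wron_zero_dep H G h0
      exact hab (hindep α β hcomb)
    have hex : ∃ s : ℝ,
        Polynomial.eval s ((H.derivative * G - H * G.derivative) * G) ≠ 0 := by
      by_contra hc
      push_neg at hc
      apply mul_ne_zero hWne hGne
      apply Polynomial.eq_zero_of_infinite_isRoot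
      exact Set.infinite_univ.mono (fun x _ => hc x)
    obtain ⟨s₀, hs₀⟩ := hex
    rw [Polynomial.eval_mul] at hs₀
    have hGs : Polynomial.eval s₀ G ≠ 0 := fun h0 => hs₀ (by rw [h0, mul_zero])
    have hWs0 : Polynomial.eval s₀ (H.derivative * G - H * G.derivative) ≠ 0 :=
      fun h0 => hs₀ (by rw [h0, zero_mul])
    have hWs : 0 < Polynomial.eval s₀ H.derivative * Polynomial.eval s₀ G
        - Polynomial.eval s₀ H * Polynomial.eval s₀ G.derivative := by
      rcases (hwr s₀).lt_or_eq with h1 | h1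
      · exact h1
      · exfalso
        apply hWs0
        rw [Polynomial.eval_sub, Polynomial.eval_mul, Polynomial.eval_mul]
        linarith
    set q : ℂ → ℝ :=
      fun w => (Polynomial.aeval w H * (starRingEnd ℂ) (Polynomial.aeval w G)).im with hq
    have hevalH : ∀ w : ℂ, Polynomial.aeval w H = (H.map (algebraMap ℝ ℂ)).eval w :=
      fun w => by rw [Polynomial.eval_map_algebraMap]
    have hevalG : ∀ w : ℂ, Polynomial.aeval w G = (G.map (algebraMap ℝ ℂ)).eval w :=
      fun w => by rw [Polynomial.eval_map_algebraMap]
    have hqcont : Continuous q := by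
      apply Complex.continuous_im.comp
      apply Continuous.mul
      · have : (fun w : ℂ => Polynomial.aeval w H)
            = fun w => (H.map (algebraMap ℝ ℂ)).eval w := funext hevalH
        rw [this]
        exact Polynomial.continuous _
      · apply continuous_star.comp
        have : (fun w : ℂ => Polynomial.aeval w G)
            = fun w => (G.map (algebraMap ℝ ℂ)).eval w := funext hevalG
        rw [this]
        exact Polynomial.continuous _
    have hqne : ∀ w : ℂ, 0 < w.im → q w ≠ 0 := by
      intro w hw h0
      have hGw : Polynomial.aeval w G ≠ 0 := hGstab w hw
      have hnsne : Complex.normSq (Polynomial.aeval w G) ≠ 0 := by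
        simpa using hGw
      set r : ℝ := (Polynomial.aeval w H * (starRingEnd ℂ) (Polynomial.aeval w G)).re
          / Complex.normSq (Polynomial.aeval w G) with hr
      have hreal : Polynomial.aeval w H * (starRingEnd ℂ) (Polynomial.aeval w G)
          = (((Polynomial.aeval w H * (starRingEnd ℂ) (Polynomial.aeval w G)).re : ℝ) : ℂ) := by
        apply Complex.ext
        · simp
        · simpa [hq] using h0
      have h2 : ((r : ℂ) * Polynomial.aeval w G) * (starRingEnd ℂ) (Polynomial.aeval w G)
          = (r : ℂ) * ((Complex.normSq (Polynomial.aeval w G) : ℝ) : ℂ) := by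
        rw [mul_assoc, Complex.mul_conj]
      have hzero : (Polynomial.aeval w H - (r : ℂ) * Polynomial.aeval w G)
          * (starRingEnd ℂ) (Polynomial.aeval w G) = 0 := by
        rw [sub_mul, h2, hreal, ← Complex.ofReal_mul]
        rw [show r * Complex.normSq (Polynomial.aeval w G)
          = (Polynomial.aeval w H * (starRingEnd ℂ) (Polynomial.aeval w G)).re by
            rw [hr]; field_simp]
        rw [← hreal, sub_self]
      rcases mul_eq_zero.mp hzero with h1 | h1
      · apply hstab 1 (-r) (by norm_num) w hw
        push_cast
        linear_combination h1
      · exact hGw (by simpa using h1)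
    have hqI : q Complex.I < 0 := by
      have he : q Complex.I = (A * (starRingEnd ℂ) B).im := rfl
      rw [he, hAB]
      have h3 : -Complex.I * B * (starRingEnd ℂ) B
          = -Complex.I * ((Complex.normSq B : ℝ) : ℂ) := by
        rw [mul_assoc, Complex.mul_conj]
      rw [h3]
      have h4 : 0 < Complex.normSq B := Complex.normSq_pos.mpr hBne
      simp only [neg_mul, Complex.neg_im, Complex.mul_im, Complex.I_re, Complex.I_im,
        Complex.ofReal_re, Complex.ofReal_im]
      nlinarith
    -- derivative / positivity point step
    set Hc := H.map (algebraMap ℝ ℂ) with hHc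
    set Gc := G.map (algebraMap ℝ ℂ) with hGc
    set φ : ℝ → ℂ := fun ε => (s₀ : ℂ) + (ε : ℂ) * Complex.I with hφ
    have hφ0 : φ 0 = ((s₀ : ℝ) : ℂ) := by simp [hφ]
    have hφd : HasDerivAt φ Complex.I 0 := by
      have h1 : HasDerivAt (fun ε : ℝ => (ε : ℂ)) 1 0 := by
        exact (hasDerivAt_id (0:ℝ)).ofReal_comp.congr_deriv (by simp)
      have h2 := (h1.mul_const Complex.I).const_add ((s₀ : ℝ) : ℂ)
      simpa [hφ] using h2
    set Ψ : ℝ → ℂ := fun ε => Hc.eval (φ ε) * star (Gc.eval (φ ε)) with hΨ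
    have hHd : HasDerivAt (fun ε : ℝ => Hc.eval (φ ε))
        (Complex.I • Hc.derivative.eval (φ 0)) 0 := by
      have := HasDerivAt.scomp (x := (0:ℝ)) (g₁ := fun x : ℂ => Hc.eval x)
        (h := φ) (Polynomial.hasDerivAt Hc (φ 0)) hφd
      simp only [smul_eq_mul] at this ⊢
      exact this
    have hGd : HasDerivAt (fun ε : ℝ => Gc.eval (φ ε))
        (Complex.I • Gc.derivative.eval (φ 0)) 0 := by
      have := HasDerivAt.scomp (x := (0:ℝ)) (g₁ := fun x : ℂ => Gc.eval x)
        (h := φ) (Polynomial.hasDerivAt Gc (φ 0)) hφd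
      simp only [smul_eq_mul] at this ⊢
      exact this
    have hGds := hGd.star
    have hΨd : HasDerivAt Ψ
        ((Complex.I • Hc.derivative.eval (φ 0)) * star (Gc.eval (φ 0))
          + Hc.eval (φ 0) * star (Complex.I • Gc.derivative.eval (φ 0))) 0 :=
      hHd.mul hGds
    have hvalre : ∀ p : Polynomial ℝ,
        (p.map (algebraMap ℝ ℂ)).eval ((s₀ : ℝ) : ℂ) = ((p.eval s₀ : ℝ) : ℂ) := by
      intro p
      rw [Polynomial.eval_map_algebraMap,
        show ((s₀ : ℝ) : ℂ) = algebraMap ℝ ℂ s₀ from rfl,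
        Polynomial.aeval_algebraMap_apply]
      norm_num
    have hDim : ((Complex.I • Hc.derivative.eval (φ 0)) * star (Gc.eval (φ 0))
          + Hc.eval (φ 0) * star (Complex.I • Gc.derivative.eval (φ 0))).im
        = Polynomial.eval s₀ H.derivative * Polynomial.eval s₀ G
          - Polynomial.eval s₀ H * Polynomial.eval s₀ G.derivative := by
      rw [hφ0, hHc, hGc, Polynomial.derivative_map, Polynomial.derivative_map]
      simp only [hvalre]
      simp [Complex.mul_im, Complex.mul_re, smul_eq_mul]
      ring
    have hslope := hasDerivAt_iff_tendsto_slope.mp hΨd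
    have htend : Filter.Tendsto (fun ε : ℝ => (slope Ψ 0 ε).im)
        (nhdsWithin 0 {(0 : ℝ)}ᶜ)
        (nhds (((Complex.I • Hc.derivative.eval (φ 0)) * star (Gc.eval (φ 0))
          + Hc.eval (φ 0) * star (Complex.I • Gc.derivative.eval (φ 0))).im)) :=
      (Complex.continuous_im.tendsto _).comp hslope
    have hevent : ∀ᶠ ε in nhdsWithin 0 {(0 : ℝ)}ᶜ, 0 < (slope Ψ 0 ε).im :=
      htend.eventually (lt_mem_nhds (by rw [hDim]; exact hWs))
    have hevent2 : ∀ᶠ ε in nhdsWithin (0 : ℝ) (Set.Ioi 0), 0 < (slope Ψ 0 ε).im :=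
      hevent.filter_mono (nhdsWithin_mono 0 (fun x hx => ne_of_gt hx))
    obtain ⟨ε, hεs, hεpos⟩ := (hevent2.and self_mem_nhdsWithin).exists
    have hΨim0 : (Ψ 0).im = 0 := by
      rw [hΨ]
      simp only [hφ0, hHc, hGc, hvalre H, hvalre G]
      simp [Complex.mul_im]
    have hqφ : ∀ e : ℝ, q (φ e) = (Ψ e).im := by
      intro e
      have h1 := hevalH (φ e)
      have h2 := hevalG (φ e)
      simp only [hq, hΨ, h1, h2, starRingEnd_apply]
    have hqεpos : 0 < q (φ ε) := by
      rw [hqφ]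
      have hsl : slope Ψ 0 ε = (ε - 0)⁻¹ • (Ψ ε - Ψ 0) := rfl
      rw [hsl] at hεs
      simp only [sub_zero] at hεs
      have him : ((ε⁻¹ : ℝ) • (Ψ ε - Ψ 0)).im = ε⁻¹ * ((Ψ ε).im - (Ψ 0).im) := by
        rw [Complex.smul_im, Complex.sub_im, smul_eq_mul]
      rw [him, hΨim0, sub_zero] at hεs
      have hεgt : 0 < ε := hεpos
      nlinarith [hεs, inv_pos.mpr hεgt]
    -- IVT
    set w₁ := φ ε with hw₁
    have hw₁im : w₁.im = ε := by simp [hw₁, hφ]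
    set γ : ℝ → ℂ := fun t => ((1 - t : ℝ) : ℂ) * w₁ + ((t : ℝ) : ℂ) * Complex.I with hγ
    have hγ0 : γ 0 = w₁ := by simp [hγ]
    have hγ1 : γ 1 = Complex.I := by simp [hγ]
    have hγcont : Continuous γ := by fun_prop
    have hivt := intermediate_value_Icc' (by norm_num : (0:ℝ) ≤ 1)
      ((hqcont.comp hγcont).continuousOn)
    have h0mem : (0 : ℝ) ∈ Set.Icc ((q ∘ γ) 1) ((q ∘ γ) 0) := by
      constructor
      · simp only [Function.comp_apply, hγ1]
        exact le_of_lt hqI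
      · simp only [Function.comp_apply, hγ0]
        exact le_of_lt hqεpos
    obtain ⟨t, htmem, ht0⟩ := hivt h0mem
    apply hqne (γ t) ?_ ht0
    have hγim : (γ t).im = (1 - t) * ε + t := by
      simp [hγ, Complex.add_im, Complex.mul_im, hw₁im]
    rw [hγim]
    obtain ⟨ht0', ht1⟩ := htmem
    have hεgt : (0:ℝ) < ε := hεpos
    rcases eq_or_lt_of_le ht0' with hteq | htlt
    · rw [← hteq]
      simpa using hεgt
    · have h5 : 0 ≤ (1 - t) * ε := mul_nonneg (by linarith) hεgt.le
      linarith



end Helpers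

lemma eps_limit {W S : ℝ} (key : ∀ ε : ℝ, 0 < ε → 0 ≤ ε * S + W) : 0 ≤ W := by
  by_contra hneg
  push_neg at hneg
  have hεpos : 0 < -W / (2 * (|S| + 1)) := by
    apply div_pos (by linarith)
    positivity
  have h1 := key _ hεpos
  have h2 : -W / (2 * (|S| + 1)) * S ≤ -W / (2 * (|S| + 1)) * |S| :=
    mul_le_mul_of_nonneg_left (le_abs_self S) hεpos.le
  have h3 : -W / (2 * (|S| + 1)) * (|S| + 1) = -W / 2 := by
    have hd : (2 * (|S| + 1)) ≠ 0 := by positivity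
    field_simp
  nlinarith [abs_nonneg S]

/-- For `h, g ∈ ℝ[z₁,…,zₙ]` with `f = h + ig ≠ 0`, the following are
equivalent: (a) `f` is stable; (b) `h + z_{n+1} g` is real stable;
(c) every nonzero member of the real pencil `αh + βg` is real stable and
all the Wronskians `(∂h/∂z_j)·g − h·(∂g/∂z_j)` are nonnegative on `ℝⁿ`. -/
theorem stmt_11 {n : ℕ} (h g : MvPolynomial (Fin n) ℝ) (hne : ¬(h = 0 ∧ g = 0)) :
    ((∀ z : Fin n → ℂ, (∀ i, 0 < (z i).im) →
        aeval z h + Complex.I * aeval z g ≠ 0) ↔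
      (∀ z : Fin (n + 1) → ℂ, (∀ i, 0 < (z i).im) →
        aeval z (rename (Fin.castSucc) h +
          X (Fin.last n) * rename (Fin.castSucc) g) ≠ 0)) ∧
    ((∀ z : Fin n → ℂ, (∀ i, 0 < (z i).im) →
        aeval z h + Complex.I * aeval z g ≠ 0) ↔
      ((∀ α β : ℝ, α • h + β • g ≠ 0 →
          ∀ z : Fin n → ℂ, (∀ i, 0 < (z i).im) → aeval z (α • h + β • g) ≠ 0) ∧
        (∀ j : Fin n, ∀ x : Fin n → ℝ,
          0 ≤ eval x (pderiv j h) * eval x g - eval x h * eval x (pderiv j g)))) := by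
  constructor
  · -- (a) ↔ (b)
    constructor
    · intro hst z hz
      have hval : aeval z (rename (Fin.castSucc) h + X (Fin.last n) * rename (Fin.castSucc) g)
          = aeval (z ∘ Fin.castSucc) h + z (Fin.last n) * aeval (z ∘ Fin.castSucc) g := by
        simp [aeval_rename]
      rw [hval]
      exact coreAB h g hst (z ∘ Fin.castSucc) (fun i => hz _) (z (Fin.last n)) (hz _)
    · intro hb z hz
      set Z : Fin (n + 1) → ℂ := Fin.snoc z Complex.I with hZ
      have hZim : ∀ i, 0 < (Z i).im := by
        intro i
        induction i using Fin.lastCases with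
        | last => simp [hZ]
        | cast i => simpa [hZ] using hz i
      have := hb Z hZim
      have hval : aeval Z (rename (Fin.castSucc) h + X (Fin.last n) * rename (Fin.castSucc) g)
          = aeval z h + Complex.I * aeval z g := by
        have hcomp : Z ∘ Fin.castSucc = z := by
          funext i
          simp [hZ]
        simp [aeval_rename, hcomp, hZ]
      rwa [hval] at this
  · -- (a) ↔ (c)
    constructor
    · intro hst
      constructor
      · -- pencil
        intro α β hq z hz
        have haev : ∀ (p : MvPolynomial (Fin n) ℝ) (c : ℝ) (w : Fin n → ℂ),
            aeval w (c • p) = (c : ℂ) * aeval w p := by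
          intro p c w
          simp [map_smul, Complex.real_smul]
        have hab : ¬(α = 0 ∧ β = 0) := by
          rintro ⟨h1, h2⟩
          apply hq
          rw [h1, h2]
          simp
        have hst' : ∀ w : Fin n → ℂ, (∀ i, 0 < (w i).im) →
            aeval w (α • h + β • g) + Complex.I * aeval w (α • g - β • h) ≠ 0 := by
          intro w hw
          have hfac : aeval w (α • h + β • g) + Complex.I * aeval w (α • g - β • h)
              = ((α : ℂ) - Complex.I * (β : ℂ)) * (aeval w h + Complex.I * aeval w g) := by
            rw [map_add, map_sub, haev, haev, haev, haev]
            linear_combination ((β : ℂ) * aeval w g) * Complex.I_sq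
          rw [hfac]
          apply mul_ne_zero ?_ (hst w hw)
          intro h0
          apply hab
          constructor
          · simpa using congrArg Complex.re h0
          · simpa using congrArg Complex.im h0
        exact cruxC (α • h + β • g) (α • g - β • h) hst' hq z hz
      · -- wronskian
        intro j x
        set S : ℝ := ∑ k : Fin n, (eval x (pderiv k h) * eval x g
          - eval x h * eval x (pderiv k g)) with hS
        have key : ∀ ε : ℝ, 0 < ε →
            0 ≤ ε * S + (eval x (pderiv j h) * eval x g - eval x h * eval x (pderiv j g)) := by
          intro ε hε
          set y : Fin n → ℝ := fun k => ε + if k = j then 1 else 0 with hy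
          have hypos : ∀ k, 0 < y k := by
            intro k
            rw [hy]
            by_cases hk : k = j <;> simp [hk] <;> linarith
          set H : Polynomial ℝ := lmap x y h with hH
          set G : Polynomial ℝ := lmap x y g with hG
          set Fc : Polynomial ℂ := H.map (algebraMap ℝ ℂ)
            + Polynomial.C Complex.I * G.map (algebraMap ℝ ℂ) with hFc
          have evalF : ∀ t : ℂ, Fc.eval t
              = MvPolynomial.aeval (fun k => (x k : ℂ) + (y k : ℂ) * t) h
                + Complex.I * MvPolynomial.aeval (fun k => (x k : ℂ) + (y k : ℂ) * t) g := by
            intro t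
            simp [hFc, Polynomial.eval_map_algebraMap, hH, hG, lmap_aeval_complex]
          have hFst : ∀ t : ℂ, 0 < t.im → Fc.eval t ≠ 0 := by
            intro t ht
            rw [evalF]
            apply hst
            intro i
            have : (((x i : ℂ)) + (y i : ℂ) * t).im = y i * t.im := by
              simp [Complex.add_im, Complex.mul_im]
            rw [this]
            exact mul_pos (hypos i) ht
          have hW := aux_wron_im Fc.natDegree Fc le_rfl hFst 0
          have hvalre : ∀ p : Polynomial ℝ,
              (p.map (algebraMap ℝ ℂ)).eval (((0 : ℝ) : ℂ)) = ((p.eval 0 : ℝ) : ℂ) := by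
            intro p
            rw [Polynomial.eval_map_algebraMap,
              show ((0 : ℝ) : ℂ) = algebraMap ℝ ℂ 0 from rfl,
              Polynomial.aeval_algebraMap_apply]
            norm_num
          have hx0 : (fun k => x k + y k * 0) = x := by
            funext k
            ring
          have hH0 : H.eval 0 = eval x h := by
            rw [hH, lmap_eval_real, hx0]
          have hG0 : G.eval 0 = eval x g := by
            rw [hG, lmap_eval_real, hx0]
          have hHd0 : H.derivative.eval 0 = ∑ k : Fin n, y k * eval x (pderiv k h) := by
            rw [hH, lmap_derivative, Polynomial.eval_finset_sum]
            apply Finset.sum_congr rfl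
            intro k _
            rw [Polynomial.eval_mul, Polynomial.eval_C, lmap_eval_real, hx0]
          have hGd0 : G.derivative.eval 0 = ∑ k : Fin n, y k * eval x (pderiv k g) := by
            rw [hG, lmap_derivative, Polynomial.eval_finset_sum]
            apply Finset.sum_congr rfl
            intro k _
            rw [Polynomial.eval_mul, Polynomial.eval_C, lmap_eval_real, hx0]
          have hder : Fc.derivative
              = (Polynomial.derivative H).map (algebraMap ℝ ℂ)
                + Polynomial.C Complex.I * (Polynomial.derivative G).map (algebraMap ℝ ℂ) := by
            rw [hFc, Polynomial.derivative_add, Polynomial.derivative_mul,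
              Polynomial.derivative_C, Polynomial.derivative_map, Polynomial.derivative_map,
              zero_mul, zero_add]
          have hcomp : (Fc.derivative.eval (((0 : ℝ) : ℂ))
                * (starRingEnd ℂ) (Fc.eval (((0 : ℝ) : ℂ)))).im
              = (G.derivative.eval 0) * (H.eval 0) - (H.derivative.eval 0) * (G.eval 0) := by
            rw [hder, hFc]
            simp only [Polynomial.eval_add, Polynomial.eval_mul, Polynomial.eval_C, hvalre]
            simp only [map_add, map_mul, Complex.conj_ofReal, Complex.conj_I]
            simp [Complex.mul_im, Complex.mul_re, Complex.add_im, Complex.add_re]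
            ring
          rw [hcomp] at hW
          rw [hH0, hG0, hHd0, hGd0] at hW
          rw [Finset.sum_mul, Finset.sum_mul] at hW
          have hWj : eval x (pderiv j h) * eval x g - eval x h * eval x (pderiv j g)
              = ∑ k : Fin n, (if k = j then (1:ℝ) else 0) * (eval x (pderiv k h) * eval x g
                  - eval x h * eval x (pderiv k g)) := by
            symm
            simp [ite_mul]
          have hexp : ∑ k : Fin n, y k * eval x (pderiv k h) * eval x g
              - ∑ k : Fin n, y k * eval x (pderiv k g) * eval x h
              = ε * S + (eval x (pderiv j h) * eval x g - eval x h * eval x (pderiv j g)) := by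
            rw [← Finset.sum_sub_distrib, hS, Finset.mul_sum, hWj, ← Finset.sum_add_distrib]
            apply Finset.sum_congr rfl
            intro k _
            simp only [hy]
            ring
          have h6 : 0 ≤ ∑ k : Fin n, y k * eval x (pderiv k h) * eval x g
              - ∑ k : Fin n, y k * eval x (pderiv k g) * eval x h := by linarith
          rw [hexp] at h6
          exact h6
        exact eps_limit key
    · -- (c) → (a)
      rintro ⟨hpen, hwr⟩ z hz
      set x : Fin n → ℝ := fun j => (z j).re with hx
      set y : Fin n → ℝ := fun j => (z j).im with hy
      set H : Polynomial ℝ := lmap x y h with hH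
      set G : Polynomial ℝ := lmap x y g with hG
      have hzeq : (fun j => (x j : ℂ) + (y j : ℂ) * Complex.I) = z := by
        funext j
        simpa [hx, hy] using Complex.re_add_im (z j)
      have hpt : ∀ t : ℂ, 0 < t.im → ∀ i, 0 < (((x i : ℂ) + (y i : ℂ) * t)).im := by
        intro t ht i
        have : (((x i : ℂ) + (y i : ℂ) * t)).im = y i * t.im := by
          simp [Complex.add_im, Complex.mul_im]
        rw [this]
        exact mul_pos (hz i) ht
      have hlin : ∀ (α β : ℝ), α • H + β • G = lmap x y (α • h + β • g) := by
        intro α β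
        rw [map_add, map_smul, map_smul, hH, hG]
      have hpen' : ∀ α β : ℝ, (α • H + β • G = 0) ∨
          (∀ t : ℂ, 0 < t.im → Polynomial.aeval t (α • H + β • G) ≠ 0) := by
        intro α β
        by_cases hq : α • h + β • g = 0
        · left
          rw [hlin, hq, map_zero]
        · right
          intro t ht
          rw [hlin, lmap_aeval_complex]
          exact hpen α β hq _ (hpt t ht)
      have hwr' : ∀ s : ℝ, 0 ≤ Polynomial.eval s H.derivative * Polynomial.eval s G
          - Polynomial.eval s H * Polynomial.eval s G.derivative := by
        intro s
        rw [hH, hG, lmap_derivative, lmap_derivative, Polynomial.eval_finset_sum,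
          Polynomial.eval_finset_sum, Finset.sum_mul, Finset.mul_sum]
        rw [← Finset.sum_sub_distrib]
        apply Finset.sum_nonneg
        intro k _
        rw [Polynomial.eval_mul, Polynomial.eval_mul, Polynomial.eval_C,
          lmap_eval_real, lmap_eval_real, lmap_eval_real, lmap_eval_real]
        have := hwr k (fun j => x j + y j * s)
        have hyk : 0 ≤ y k := (hz k).le
        nlinarith [mul_nonneg hyk this]
      have hne' : Polynomial.aeval Complex.I H ≠ 0 ∨ Polynomial.aeval Complex.I G ≠ 0 := by
        have hHI : Polynomial.aeval Complex.I H = aeval z h := by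
          rw [hH, lmap_aeval_complex, hzeq]
        have hGI : Polynomial.aeval Complex.I G = aeval z g := by
          rw [hG, lmap_aeval_complex, hzeq]
        rcases not_and_or.mp hne with hh0 | hg0
        · left
          rw [hHI]
          have := hpen 1 0 (by simpa using hh0) z hz
          simpa using this
        · right
          rw [hGI]
          have := hpen 0 1 (by simpa using hg0) z hz
          simpa using this
      have := hko_converse H G hpen' hwr' hne'
      have hHI : Polynomial.aeval Complex.I H = aeval z h := by
        rw [hH, lmap_aeval_complex, hzeq]
      have hGI : Polynomial.aeval Complex.I G = aeval z g := by
        rw [hG, lmap_aeval_complex, hzeq]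
      rwa [hHI, hGI] at this

end StmtAux
end

section
/- Let a₀₀, a₀₁, a₁₀, a₁₁ ∈ ℝ, not all zero, and let f(z₁,z₂) = a₀₀ + a₀₁z₂ + a₁₀z₁ + a₁₁z₁z₂. Then f is stable if and only if a₀₀a₁₁ − a₀₁a₁₀ ≤ 0. -/
/-- The bivariate multi-affine polynomial
`f(z₁,z₂) = a₀₀ + a₀₁z₂ + a₁₀z₁ + a₁₁z₁z₂` (with real coefficients, not all
zero) is stable iff `a₀₀a₁₁ − a₀₁a₁₀ ≤ 0`. -/
theorem stmt_13 (a00 a01 a10 a11 : ℝ)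
    (hne : ¬(a00 = 0 ∧ a01 = 0 ∧ a10 = 0 ∧ a11 = 0)) :
    (∀ z₁ z₂ : ℂ, 0 < z₁.im → 0 < z₂.im →
        (a00 : ℂ) + (a01 : ℂ) * z₂ + (a10 : ℂ) * z₁ + (a11 : ℂ) * z₁ * z₂ ≠ 0) ↔
      a00 * a11 - a01 * a10 ≤ 0 := by
  constructor
  · intro hstable
    by_contra h
    push_neg at h
    -- h : 0 < a00 * a11 - a01 * a10
    have hS : (0:ℝ) < a01 ^ 2 + a11 ^ 2 := by
      rcases eq_or_ne a01 0 with h01 | h01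
      · rcases eq_or_ne a11 0 with h11 | h11
        · exfalso; rw [h01, h11] at h; nlinarith
        · positivity
      · positivity
    set S : ℝ := a01 ^ 2 + a11 ^ 2 with hSdef
    set x₂ : ℝ := -(a00 * a01 + a10 * a11) / S with hx2
    set y₂ : ℝ := (a00 * a11 - a01 * a10) / S with hy2
    have hy2pos : 0 < y₂ := div_pos h hS
    have him : (Complex.ofReal x₂ + Complex.ofReal y₂ * Complex.I).im = y₂ := by
      simp
    apply hstable Complex.I (Complex.ofReal x₂ + Complex.ofReal y₂ * Complex.I)
      (by simp) (by rw [him]; exact hy2pos)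
    rw [Complex.ext_iff]
    constructor
    · simp only [Complex.add_re, Complex.mul_re, Complex.ofReal_re, Complex.ofReal_im,
        Complex.I_re, Complex.I_im, Complex.mul_im, Complex.add_im]
      rw [hx2, hy2, hSdef]
      field_simp [Complex.zero_re, Complex.zero_im, (show a01 ^ 2 + a11 ^ 2 ≠ 0 from ne_of_gt hS)]
      rw [show Complex.re 0 = (0:ℝ) from rfl]
      ring
    · simp only [Complex.add_re, Complex.mul_re, Complex.ofReal_re, Complex.ofReal_im,
        Complex.I_re, Complex.I_im, Complex.mul_im, Complex.add_im]
      rw [hx2, hy2, hSdef]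
      field_simp [Complex.zero_re, Complex.zero_im, (show a01 ^ 2 + a11 ^ 2 ≠ 0 from ne_of_gt hS)]
      rw [show Complex.im 0 = (0:ℝ) from rfl]
      ring
  · intro hD z₁ z₂ h1 h2 hf
    obtain ⟨x₁, y₁⟩ := z₁
    obtain ⟨x₂, y₂⟩ := z₂
    simp only [Complex.im] at h1 h2  -- may be no-op
    have hre := congrArg Complex.re hf
    have him := congrArg Complex.im hf
    simp only [Complex.add_re, Complex.mul_re, Complex.ofReal_re, Complex.ofReal_im,
      Complex.add_im, Complex.mul_im, Complex.zero_re, Complex.zero_im] at hre him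
    -- key identity
    have key : (a00 * a11 - a01 * a10) * y₁ =
        y₂ * ((a01 + a11 * x₁) ^ 2 + (a11 * y₁) ^ 2) := by
      linear_combination (a11 * y₁) * hre - (a01 + a11 * x₁) * him
    have hBsq : (a01 + a11 * x₁) ^ 2 + (a11 * y₁) ^ 2 = 0 := by
      nlinarith [sq_nonneg (a01 + a11 * x₁), sq_nonneg (a11 * y₁)]
    have h1' : a01 + a11 * x₁ = 0 := by nlinarith [sq_nonneg (a01 + a11 * x₁), sq_nonneg (a11 * y₁)]
    have h2' : a11 * y₁ = 0 := by nlinarith [sq_nonneg (a01 + a11 * x₁), sq_nonneg (a11 * y₁)]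
    have h11 : a11 = 0 := by
      rcases mul_eq_zero.mp h2' with h | h
      · exact h
      · exact absurd h (by linarith)
    have h01 : a01 = 0 := by rw [h11] at h1'; linarith
    rw [h11, h01] at hre him
    have h10 : a10 = 0 := by
      have : a10 * y₁ = 0 := by linarith
      rcases mul_eq_zero.mp this with h | h
      · exact h
      · exact absurd h (by linarith)
    have h00 : a00 = 0 := by rw [h10] at hre; linarith
    exact hne ⟨h00, h01, h10, h11⟩
end

section
/- Let f ∈ ℂ[z₁,…,zₙ] have degree dᵢ in the variable zᵢ, and let P(f) be its polarization: the unique polynomial in the variables {z_{ij} : 1 ≤ i ≤ n, 1 ≤ j ≤ dᵢ} that is multi-affine, symmetric in the variables z_{i1},…,z_{i dᵢ} for each i, and recovers f upon substituting z_{ij} = zᵢ for all i, j. Then for any open half-plane H ⊆ ℂ whose boundary contains the origin, f is H-stable if and only if P(f) is H-stable. -/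
set_option maxHeartbeats 1000000

noncomputable section
section UnivariateCore

open Polynomial Complex
set_option maxHeartbeats 1000000

lemma normSq_le_of_disk {z : ℂ} {R : ℝ} (h : ‖z - R‖ ≤ R) :
    Complex.normSq z ≤ 2 * R * z.re := by
  have h2 : Complex.normSq (z - R) ≤ R ^ 2 := by
    rw [← Complex.sq_norm]
    have hR : 0 ≤ R := le_trans (norm_nonneg _) h
    exact pow_le_pow_left₀ (norm_nonneg _) h 2
  have he : Complex.normSq (z - R) = Complex.normSq z - 2 * R * z.re + R ^ 2 := by
    simp [Complex.normSq_apply, Complex.sub_re, Complex.sub_im]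
    ring
  linarith [he ▸ h2]

lemma disk_of_normSq_le {z : ℂ} {R : ℝ} (hR : 0 ≤ R)
    (h : Complex.normSq z ≤ 2 * R * z.re) : ‖z - R‖ ≤ R := by
  have he : Complex.normSq (z - R) = Complex.normSq z - 2 * R * z.re + R ^ 2 := by
    simp [Complex.normSq_apply, Complex.sub_re, Complex.sub_im]
    ring
  calc ‖z - R‖ = Real.sqrt (Complex.normSq (z - R)) := Complex.norm_def _
    _ ≤ Real.sqrt (R ^ 2) := Real.sqrt_le_sqrt (by linarith)
    _ = R := by rw [Real.sqrt_sq hR]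

/-- the inverse of a complex number with real part `≥ ρ > 0` lies in the disk `D(1/(2ρ),1/(2ρ))`. -/
lemma inv_mem_disk {c : ℂ} {ρ : ℝ} (hρ : 0 < ρ) (hc : ρ ≤ c.re) :
    ‖c⁻¹ - (1/(2*ρ) : ℝ)‖ ≤ 1/(2*ρ) := by
  have hc0 : c ≠ 0 := by
    intro h; rw [h] at hc; simp at hc; linarith
  apply disk_of_normSq_le (by positivity)
  have hns : 0 < Complex.normSq c := Complex.normSq_pos.mpr hc0
  rw [Complex.normSq_inv, Complex.inv_re]
  have : (1 : ℝ) ≤ (2 * (1/(2*ρ)) * c.re) := by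
    rw [show 2 * (1/(2*ρ)) * c.re = c.re / ρ by field_simp]
    rw [le_div_iff₀ hρ]; linarith
  calc (Complex.normSq c)⁻¹ = 1 * (Complex.normSq c)⁻¹ := (one_mul _).symm
    _ ≤ (2 * (1/(2*ρ)) * c.re) * (Complex.normSq c)⁻¹ := by
        apply mul_le_mul_of_nonneg_right this (by positivity)
    _ = 2 * (1/(2*ρ)) * (c.re / Complex.normSq c) := by
        field_simp

/-- if `z ∈ D(R,R)`, `z ≠ 0` then `Re(z⁻¹) ≥ 1/(2R)`. -/
lemma inv_re_ge_of_disk {z : ℂ} {R : ℝ} (hR : 0 < R) (hz : ‖z - R‖ ≤ R)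
    (hz0 : z ≠ 0) : 1/(2*R) ≤ (z⁻¹).re := by
  have h := normSq_le_of_disk hz
  have hns : 0 < Complex.normSq z := Complex.normSq_pos.mpr hz0
  rw [Complex.inv_re, le_div_iff₀ hns]
  calc 1/(2*R) * Complex.normSq z ≤ 1/(2*R) * (2 * R * z.re) := by
        apply mul_le_mul_of_nonneg_left h (by positivity)
    _ = z.re := by field_simp

/-- a sum of `m` elements of the disk `D(R,R)` lies in `D(mR,mR)`. -/
lemma multiset_sum_disk (R : ℝ) (M : Multiset ℂ)
    (h : ∀ q ∈ M, ‖q - R‖ ≤ R) :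
    ‖M.sum - (M.card : ℝ) * R‖ ≤ (M.card : ℝ) * R := by
  induction M using Multiset.induction with
  | empty => simp
  | cons q M ih =>
      have hq := h q (Multiset.mem_cons_self q M)
      have hM := ih (fun x hx => h x (Multiset.mem_cons_of_mem hx))
      simp only [Multiset.sum_cons, Multiset.card_cons]
      have : (q + M.sum) - ((M.card + 1 : ℕ) : ℝ) * R
          = (q - (R:ℂ)) + (M.sum - (M.card : ℝ) * R) := by
        push_cast; ring
      rw [this]
      calc ‖_‖ ≤ ‖q - (R:ℂ)‖ + ‖M.sum - (M.card : ℝ) * R‖ :=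
            norm_add_le _ _
        _ ≤ R + (M.card : ℝ) * R := add_le_add hq hM
        _ = ((M.card + 1 : ℕ) : ℝ) * R := by push_cast; ring

/-- logarithmic derivative formula for a split polynomial. -/
lemma eval_derivative_prod_roots (M : Multiset ℂ) (c s : ℂ) (h : ∀ ζ ∈ M, s ≠ ζ) :
    (Polynomial.derivative (Polynomial.C c * (M.map (fun ζ => Polynomial.X - Polynomial.C ζ)).prod)).eval s
      = (Polynomial.C c * (M.map (fun ζ => Polynomial.X - Polynomial.C ζ)).prod).eval s
        * (M.map (fun ζ => (s - ζ)⁻¹)).sum := by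
  induction M using Multiset.induction with
  | empty => simp
  | cons ζ M ih =>
      have hζ : s - ζ ≠ 0 := sub_ne_zero.mpr (h ζ (Multiset.mem_cons_self ζ M))
      have hM := ih (fun x hx => h x (Multiset.mem_cons_of_mem hx))
      have hre : Polynomial.C c * ((ζ ::ₘ M).map (fun ζ => Polynomial.X - Polynomial.C ζ)).prod
          = (Polynomial.X - Polynomial.C ζ) *
            (Polynomial.C c * (M.map (fun ζ => Polynomial.X - Polynomial.C ζ)).prod) := by
        rw [Multiset.map_cons, Multiset.prod_cons]; ring
      rw [hre, Polynomial.derivative_mul]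
      simp only [Polynomial.derivative_sub, Polynomial.derivative_X, Polynomial.derivative_C,
        sub_zero, one_mul, Polynomial.eval_add, Polynomial.eval_mul, Polynomial.eval_sub,
        Polynomial.eval_X, Polynomial.eval_C, Multiset.map_cons, Multiset.sum_cons]
      rw [hM]
      simp only [Polynomial.eval_mul, Polynomial.eval_C]
      field_simp

/-- Laguerre-type lemma for half planes. -/
lemma laguerre (w : ℂ) (n : ℕ) (hn : 0 < n) (φ : Polynomial ℂ) (hφ : φ ≠ 0)
    (hdeg : φ.natDegree ≤ n) (hstab : ∀ z : ℂ, 0 < (w * z).re → ¬ φ.IsRoot z)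
    (s t : ℂ) (hs : 0 < (w * s).re) (ht : 0 < (w * t).re) :
    (n : ℂ) * φ.eval s + (t - s) * (Polynomial.derivative φ).eval s ≠ 0 := by
  have hw : w ≠ 0 := by rintro rfl; simp at hs
  set M := φ.roots with hM
  have hcard : M.card = φ.natDegree :=
    (Polynomial.splits_iff_card_roots.mp (IsAlgClosed.splits φ))
  have hroots : ∀ ζ ∈ M, ¬ (0 < (w * ζ).re) := by
    intro ζ hζ
    exact fun hc => hstab ζ hc (Polynomial.isRoot_of_mem_roots hζ)
  have hsroot : ∀ ζ ∈ M, s ≠ ζ := by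
    intro ζ hζ he
    exact hroots ζ hζ (he ▸ hs)
  have hrepr : Polynomial.C φ.leadingCoeff * (M.map (fun ζ => Polynomial.X - Polynomial.C ζ)).prod = φ :=
    Polynomial.C_leadingCoeff_mul_prod_multiset_X_sub_C hcard
  have hder : (Polynomial.derivative φ).eval s = φ.eval s * (M.map (fun ζ => (s - ζ)⁻¹)).sum := by
    conv_lhs => rw [← hrepr]
    conv_rhs => rw [← hrepr]
    exact eval_derivative_prod_roots M φ.leadingCoeff s hsroot
  have hφs : φ.eval s ≠ 0 := fun hc => hstab s hs hc
  rw [hder]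
  have key : (n : ℂ) + (t - s) * (M.map (fun ζ => (s - ζ)⁻¹)).sum ≠ 0 := by
    set Q := (M.map (fun ζ => (s - ζ)⁻¹)).sum with hQ
    set Qh := (M.map (fun ζ => (w*s - w*ζ)⁻¹)).sum with hQh
    have hQQh : Q = w * Qh := by
      rw [hQ, hQh, ← Multiset.sum_map_mul_left]
      apply congrArg
      apply Multiset.map_congr rfl
      intro ζ hζ
      have h1 : s - ζ ≠ 0 := sub_ne_zero.mpr (hsroot ζ hζ)
      rw [show w*s - w*ζ = w * (s - ζ) by ring, mul_inv]
      field_simp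
    set ρ := (w*s).re with hρ
    have hρ0 : 0 < ρ := hs
    set R := 1/(2*ρ) with hR
    have hR0 : 0 < R := by rw [hR]; positivity
    -- each term is in the disk D(R,R)
    have hdisk : ∀ q ∈ M.map (fun ζ => (w*s - w*ζ)⁻¹), ‖q - R‖ ≤ R := by
      intro q hq
      rw [Multiset.mem_map] at hq
      obtain ⟨ζ, hζ, rfl⟩ := hq
      apply inv_mem_disk hρ0
      have : (w*ζ).re ≤ 0 := not_lt.mp (hroots ζ hζ)
      simp only [Complex.sub_re]
      linarith
    have hsum := multiset_sum_disk R _ hdisk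
    rw [Multiset.card_map, hcard] at hsum
    set m := φ.natDegree with hm
    have hmn : (m : ℝ) ≤ (n : ℝ) := by exact_mod_cast hdeg
    set NR := (n : ℝ) * R with hNR'
    have hQhd : ‖Qh - (NR : ℂ)‖ ≤ NR := by
      have habs : ‖((((m : ℝ) * R - NR : ℝ)) : ℂ)‖ = NR - (m : ℝ) * R := by
        rw [Complex.norm_real, Real.norm_eq_abs, abs_of_nonpos (by rw [hNR']; nlinarith)]
        ring
      calc ‖Qh - (NR : ℂ)‖
          = ‖(Qh - (((m : ℝ) * R : ℝ) : ℂ)) + ((((m : ℝ) * R - NR : ℝ)) : ℂ)‖ := by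
            apply congrArg; push_cast; ring
        _ ≤ ‖Qh - (((m : ℝ) * R : ℝ) : ℂ)‖ +
            ‖((((m : ℝ) * R - NR : ℝ)) : ℂ)‖ := norm_add_le _ _
        _ ≤ (m : ℝ) * R + (NR - (m : ℝ) * R) := by
            apply add_le_add _ habs.le
            refine le_trans (le_of_eq ?_) hsum
            apply congrArg; push_cast; ring_nf; rw [hQh]; ring
        _ = NR := by ring
    -- now conclude
    intro hcon
    have hn0 : ((n : ℂ)) ≠ 0 := by exact_mod_cast hn.ne'
    set u := w*s - w*t with hu
    have hun : u * Qh = (n : ℂ) := by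
      rw [hQQh] at hcon
      rw [hu]; linear_combination -hcon
    have hQh0 : Qh ≠ 0 := by
      intro h0; rw [h0, mul_zero] at hun; exact hn0 hun.symm
    have hu0 : u ≠ 0 := by
      intro h0; rw [h0, zero_mul] at hun; exact hn0 hun.symm
    have hinv : Qh⁻¹ = u / (n : ℂ) := by
      field_simp
      linear_combination -hun
    have hNR0 : 0 < NR := by rw [hNR']; positivity
    have hge := inv_re_ge_of_disk hNR0 hQhd hQh0
    rw [hinv] at hge
    have hcast : (n : ℂ) = (((n : ℝ)) : ℂ) := by push_cast; rfl
    rw [hcast, Complex.div_ofReal_re] at hge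
    have hn0' : (0:ℝ) < n := by exact_mod_cast hn
    have hure : ρ ≤ u.re := by
      have h1 : 1/(2*NR) = ρ / n := by rw [hNR', hR]; field_simp
      rw [h1] at hge
      calc ρ = (ρ / n) * n := by field_simp
        _ ≤ (u.re / n) * n := by apply mul_le_mul_of_nonneg_right hge (le_of_lt hn0')
        _ = u.re := by field_simp
    have : (w*t).re ≤ 0 := by
      have : u.re = ρ - (w*t).re := by rw [hu, hρ]; simp [Complex.sub_re]
      linarith [hure, this]
    linarith [ht, this]
  intro hc
  apply key
  have h2 : Polynomial.eval s φ * ((n:ℂ) + (t-s) * (M.map (fun ζ => (s - ζ)⁻¹)).sum) = 0 := by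
    rw [← hc]; ring
  exact (mul_eq_zero.mp h2).resolve_left hφs

/-- ℕ identity: `(t+1).choose k * (t+1) = (t+1) * t.choose k + k * (t+1).choose k`. -/
lemma choose_identity (t k : ℕ) :
    (t+1).choose k * (t+1) = (t+1) * t.choose k + k * (t+1).choose k := by
  cases k with
  | zero => simp [Nat.mul_comm]
  | succ j =>
      have h1 : (t+1).choose (j+1) = t.choose j + t.choose (j+1) := Nat.choose_succ_succ t j
      have h2 : (t+1) * t.choose j = (t+1).choose (j+1) * (j+1) := Nat.add_one_mul_choose_eq t j
      calc (t+1).choose (j+1) * (t+1) = (t.choose j + t.choose (j+1)) * (t+1) := by rw [h1]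
        _ = (t+1) * t.choose (j+1) + (t+1) * t.choose j := by ring
        _ = (t+1) * t.choose (j+1) + (j+1) * (t+1).choose (j+1) := by rw [h2]; ring

/-- One Laguerre step for the scalar Grace–Walsh–Szegő induction. -/
lemma gws_step (w : ℂ) (a : ℕ → ℂ) (t : ℕ) (ζ v : ℂ)
    (hζ : 0 < (w * ζ).re) (hv : 0 < (w * v).re)
    (h : ∑ k ∈ Finset.range (t+1), (a k + v * a (k+1)) * (t.choose k : ℂ) * ζ^k = 0) :
    ∃ ξ : ℂ, 0 < (w * ξ).re ∧
      ∑ k ∈ Finset.range (t+2), a k * ((t+1).choose k : ℂ) * ξ^k = 0 := by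
  set φ : Polynomial ℂ :=
    ∑ k ∈ Finset.range (t+2), Polynomial.C (a k * ((t+1).choose k : ℂ)) * Polynomial.X^k with hφdef
  have heval : ∀ x : ℂ, φ.eval x = ∑ k ∈ Finset.range (t+2), a k * ((t+1).choose k : ℂ) * x^k := by
    intro x
    rw [hφdef, Polynomial.eval_finset_sum]
    simp
  by_cases hz : φ = 0
  · exact ⟨ζ, hζ, by rw [← heval, hz]; simp⟩
  by_cases hroot : ∃ ξ : ℂ, 0 < (w * ξ).re ∧ φ.eval ξ = 0
  · obtain ⟨ξ, hξ1, hξ2⟩ := hroot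
    exact ⟨ξ, hξ1, by rw [← heval]; exact hξ2⟩
  push_neg at hroot
  have hstab : ∀ z : ℂ, 0 < (w * z).re → ¬ φ.IsRoot z := by
    intro z hz' hr; exact (hroot z hz') hr
  have hdeg : φ.natDegree ≤ t + 1 := by
    rw [hφdef]
    apply Polynomial.natDegree_sum_le_of_forall_le
    intro k hk
    refine le_trans (Polynomial.natDegree_C_mul_le _ _) ?_
    rw [Polynomial.natDegree_X_pow]
    exact Nat.le_of_lt_succ (Finset.mem_range.mp hk)
  have hlag := laguerre w (t+1) (Nat.succ_pos t) φ hz hdeg hstab ζ v hζ hv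
  apply absurd _ hlag
  -- derivative evaluation
  have hder : (Polynomial.derivative φ).eval ζ
      = ((t+1 : ℕ) : ℂ) * ∑ k ∈ Finset.range (t+1), a (k+1) * (t.choose k : ℂ) * ζ^k := by
    rw [hφdef, Polynomial.derivative_sum, Polynomial.eval_finset_sum]
    have : ∀ k ∈ Finset.range (t+2),
        ((Polynomial.derivative (Polynomial.C (a k * ((t+1).choose k : ℂ)) * Polynomial.X^k)).eval ζ)
        = a k * ((t+1).choose k : ℂ) * (k : ℂ) * ζ^(k-1) := by
      intro k hk
      rw [Polynomial.derivative_C_mul_X_pow]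
      simp
      try ring
    rw [Finset.sum_congr rfl this, Finset.sum_range_succ']
    have h0 : a 0 * (((t+1).choose 0 : ℕ) : ℂ) * ((0:ℕ) : ℂ) * ζ^(0-1) = 0 := by simp
    rw [show ((0:ℕ) : ℂ) = ((0:ℕ) : ℂ) from rfl]
    norm_num
    rw [Finset.mul_sum]
    apply Finset.sum_congr rfl
    intro k _
    have hnat : ((t+1).choose (k+1) : ℂ) * ((k+1 : ℕ) : ℂ) = ((t+1 : ℕ) : ℂ) * (t.choose k : ℂ) := by
      have := (Nat.add_one_mul_choose_eq t k).symm
      exact_mod_cast congrArg (Nat.cast : ℕ → ℂ) this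
    push_cast at hnat ⊢
    try simp only [Nat.add_sub_cancel]
    linear_combination a (k+1) * ζ^k * hnat
  -- combination identity
  have hcomb : ((t+1 : ℕ) : ℂ) * φ.eval ζ + (v - ζ) * (Polynomial.derivative φ).eval ζ
      = ((t+1 : ℕ) : ℂ) *
        ∑ k ∈ Finset.range (t+1), (a k + v * a (k+1)) * (t.choose k : ℂ) * ζ^k := by
    have hG : ((t+1 : ℕ) : ℂ) * φ.eval ζ - ζ * (Polynomial.derivative φ).eval ζ
        = ((t+1 : ℕ) : ℂ) * ∑ k ∈ Finset.range (t+1), a k * (t.choose k : ℂ) * ζ^k := by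
      have hDf : (Polynomial.derivative φ).eval ζ
          = ∑ k ∈ Finset.range (t+2), a k * ((t+1).choose k : ℂ) * (k : ℂ) * ζ^(k-1) := by
        rw [hφdef, Polynomial.derivative_sum, Polynomial.eval_finset_sum]
        apply Finset.sum_congr rfl
        intro k hk
        rw [Polynomial.derivative_C_mul_X_pow]
        simp
        try ring
      rw [heval, hDf, Finset.mul_sum, Finset.mul_sum, ← Finset.sum_sub_distrib]
      have hterm : ∀ k ∈ Finset.range (t+2),
          ((t+1 : ℕ) : ℂ) * (a k * ((t+1).choose k : ℂ) * ζ^k)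
            - ζ * (a k * ((t+1).choose k : ℂ) * (k : ℂ) * ζ^(k-1))
          = ((t+1 : ℕ) : ℂ) * (a k * (t.choose k : ℂ) * ζ^k) := by
        intro k hk
        have hnat : ((t+1).choose k : ℂ) * ((t+1 : ℕ) : ℂ)
            = ((t+1 : ℕ) : ℂ) * (t.choose k : ℂ) + (k : ℂ) * ((t+1).choose k : ℂ) := by
          exact_mod_cast congrArg (Nat.cast : ℕ → ℂ) (choose_identity t k)
        cases k with
        | zero => simp
        | succ j =>
            have hζpow : ζ * ζ^(j+1-1) = ζ^(j+1) := by
              simp only [Nat.add_sub_cancel]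
              ring
            rw [show ζ * (a (j+1) * ((t+1).choose (j+1) : ℂ) * ((j+1 : ℕ) : ℂ) * ζ^(j+1-1))
                = a (j+1) * ((t+1).choose (j+1) : ℂ) * ((j+1 : ℕ) : ℂ) * (ζ * ζ^(j+1-1)) by ring,
              hζpow]
            linear_combination a (j+1) * ζ^(j+1) * hnat
      rw [Finset.sum_congr rfl hterm, Finset.sum_range_succ]
      simp only [Nat.choose_succ_self, Nat.cast_zero, mul_zero, zero_mul, add_zero]
      push_cast
      rw [Finset.mul_sum]
    have hsplit : ((t+1 : ℕ) : ℂ) * φ.eval ζ + (v - ζ) * (Polynomial.derivative φ).eval ζ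
        = (((t+1 : ℕ) : ℂ) * φ.eval ζ - ζ * (Polynomial.derivative φ).eval ζ)
          + v * (Polynomial.derivative φ).eval ζ := by ring
    rw [hsplit, hG, hder]
    simp only [Finset.mul_sum, ← Finset.sum_add_distrib]
    apply Finset.sum_congr rfl
    intro k _
    push_cast
    ring
  rw [hcomb, h, mul_zero]

/-- Scalar Grace–Walsh–Szegő: if a "symmetric multiaffine expression" vanishes at a point of
the half plane, then its diagonal has a root in the half plane. -/
lemma gws_scalar {ι : Type*} [DecidableEq ι] (w : ℂ) (hw : w ≠ 0) (T : Finset ι) (v : ι → ℂ) :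
    ∀ a : ℕ → ℂ, (∀ j ∈ T, 0 < (w * v j).re) →
    (∑ S ∈ T.powerset, a S.card * ∏ j ∈ S, v j) = 0 →
    ∃ ζ : ℂ, 0 < (w * ζ).re ∧
      ∑ k ∈ Finset.range (T.card + 1), a k * (T.card.choose k : ℂ) * ζ ^ k = 0 := by
  induction T using Finset.cons_induction with
  | empty =>
      intro a _ h0
      simp only [Finset.powerset_empty, Finset.sum_singleton, Finset.card_empty,
        Finset.prod_empty, mul_one] at h0
      refine ⟨(starRingEnd ℂ) w, ?_, ?_⟩
      · rw [Complex.mul_conj]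
        simpa using Complex.normSq_pos.mpr hw
      · simp [h0]
  | cons x T' hx ih =>
      intro a hv h0
      rw [Finset.cons_eq_insert, Finset.sum_powerset_insert hx] at h0
      have hsec : ∑ S ∈ T'.powerset, a (insert x S).card * ∏ j ∈ insert x S, v j
          = ∑ S ∈ T'.powerset, v x * (a (S.card + 1) * ∏ j ∈ S, v j) := by
        apply Finset.sum_congr rfl
        intro S hS
        have hxS : x ∉ S := fun hc => hx (Finset.mem_powerset.mp hS hc)
        rw [Finset.card_insert_of_notMem hxS, Finset.prod_insert hxS]
        ring
      rw [hsec, ← Finset.sum_add_distrib] at h0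
      have h0' : ∑ S ∈ T'.powerset, (fun k => a k + v x * a (k+1)) S.card * ∏ j ∈ S, v j = 0 := by
        rw [← h0]
        apply Finset.sum_congr rfl
        intro S _
        ring
      have hv' : ∀ j ∈ T', 0 < (w * v j).re := fun j hj =>
        hv j (Finset.mem_cons_of_mem hj)
      obtain ⟨ζ, hζ, hsum⟩ := ih (fun k => a k + v x * a (k+1)) hv' h0'
      have hvx : 0 < (w * v x).re := hv x (Finset.mem_cons_self x T')
      obtain ⟨ξ, hξ, hξsum⟩ := gws_step w a T'.card ζ (v x) hζ hvx hsum
      refine ⟨ξ, hξ, ?_⟩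
      rw [Finset.card_cons]
      exact hξsum

end UnivariateCore


open Finset

/-- Given two finsets of equal cardinality in a fintype, some permutation maps one onto
the other. -/
lemma exists_perm_image {α : Type*} [Fintype α] [DecidableEq α] (S T : Finset α)
    (h : S.card = T.card) : ∃ σ : Equiv.Perm α, S.image σ = T := by
  have hc : Sᶜ.card = Tᶜ.card := by
    rw [Finset.card_compl, Finset.card_compl, h]
  let e1 : {x // x ∈ S} ≃ {x // x ∈ T} := Finset.equivOfCardEq h
  let e2 : {x // x ∈ Sᶜ} ≃ {x // x ∈ Tᶜ} := Finset.equivOfCardEq hc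
  let e2' : {x // ¬ x ∈ S} ≃ {x // ¬ x ∈ T} :=
    ((Equiv.subtypeEquivRight (fun x => (Finset.mem_compl (s := S)).symm)).trans e2).trans
      (Equiv.subtypeEquivRight (fun x => Finset.mem_compl (s := T)))
  let σ : Equiv.Perm α :=
    ((Equiv.sumCompl (· ∈ S)).symm.trans (e1.sumCongr e2')).trans (Equiv.sumCompl (· ∈ T))
  refine ⟨σ, ?_⟩
  have hmem : ∀ x ∈ S, σ x ∈ T := by
    intro x hxS
    show ((Equiv.sumCompl (· ∈ T)) ((e1.sumCongr e2') ((Equiv.sumCompl (· ∈ S)).symm x))) ∈ T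
    rw [Equiv.sumCompl_symm_apply_of_pos hxS]
    simp only [Equiv.sumCongr_apply, Sum.map_inl, Equiv.sumCompl_apply_inl]
    exact (e1 ⟨x, hxS⟩).2
  apply Finset.eq_of_subset_of_card_le
  · intro y hy
    rw [Finset.mem_image] at hy
    obtain ⟨x, hx, rfl⟩ := hy
    exact hmem x hx
  · rw [Finset.card_image_of_injective _ σ.injective, h]

open MvPolynomial

variable {ι : Type*} [Fintype ι] [DecidableEq ι]

/-- indicator finsupp of a finset. -/
noncomputable def ind (S : Finset ι) : ι →₀ ℕ := ∑ j ∈ S, Finsupp.single j 1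

lemma ind_apply (S : Finset ι) (j : ι) : ind S j = if j ∈ S then 1 else 0 := by
  classical
  rw [ind, Finset.sum_apply']
  simp only [Finsupp.single_apply]
  rw [Finset.sum_ite_eq' S j (fun _ => 1)]

lemma ind_injective : Function.Injective (ind (ι := ι)) := by
  intro S T h
  ext j
  have := congrArg (fun m => m j) h
  simp only [ind_apply] at this
  constructor <;> intro hj
  · by_contra hT; simp [hj, hT] at this
  · by_contra hS; simp [hj, hS] at this

lemma mapDomain_ind (σ : Equiv.Perm ι) (S : Finset ι) :
    Finsupp.mapDomain σ (ind S) = ind (S.image σ) := by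
  rw [ind, Finsupp.mapDomain_finset_sum]
  simp only [Finsupp.mapDomain_single]
  rw [ind, Finset.sum_image (fun x _ y _ h => σ.injective h)]

/-- Structure of a symmetric multiaffine polynomial, functional form. -/
lemma multiaffine_symm_form (q : MvPolynomial ι ℂ)
    (hma : ∀ m ∈ q.support, ∀ j, m j ≤ 1)
    (hsym : ∀ σ : Equiv.Perm ι, rename σ q = q) :
    ∃ a : ℕ → ℂ, ∀ v : ι → ℂ,
      eval v q = ∑ S ∈ (Finset.univ : Finset ι).powerset, a S.card * ∏ j ∈ S, v j := by
  classical
  set A : Finset ι → ℂ := fun S => q.coeff (ind S) with hA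
  have hconst : ∀ S T : Finset ι, S.card = T.card → A S = A T := by
    intro S T hST
    obtain ⟨σ, hσ⟩ := exists_perm_image S T hST
    have h1 : q.coeff (ind S) = (rename σ q).coeff (Finsupp.mapDomain σ (ind S)) :=
      (coeff_rename_mapDomain σ σ.injective q (ind S)).symm
    rw [hA]
    simp only
    rw [h1, hsym σ, mapDomain_ind, hσ]
  set a : ℕ → ℂ := fun k => if h : ∃ S : Finset ι, S.card = k then A h.choose else 0 with ha
  have haS : ∀ S : Finset ι, a S.card = A S := by
    intro S
    have h : ∃ T : Finset ι, T.card = S.card := ⟨S, rfl⟩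
    rw [ha]
    simp only [dif_pos h]
    exact hconst _ _ h.choose_spec
  refine ⟨a, fun v => ?_⟩
  rw [eval_eq']
  set F : (ι →₀ ℕ) → ℂ := fun m => q.coeff m * ∏ j, v j ^ m j with hF
  have hsub : q.support ⊆ (Finset.univ : Finset ι).powerset.image ind := by
    intro m hm
    rw [Finset.mem_image]
    refine ⟨Finset.univ.filter (fun j => m j = 1), Finset.mem_powerset.mpr (Finset.subset_univ _), ?_⟩
    ext j
    rw [ind_apply]
    simp only [Finset.mem_filter, Finset.mem_univ, true_and]
    have := hma m hm j
    interval_cases h : m j <;> simp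
  have h1 : ∑ m ∈ q.support, F m = ∑ m ∈ (Finset.univ : Finset ι).powerset.image ind, F m := by
    apply Finset.sum_subset hsub
    intro m _ hm
    rw [hF]
    simp only
    rw [MvPolynomial.notMem_support_iff.mp hm, zero_mul]
  have h2 : ∑ m ∈ (Finset.univ : Finset ι).powerset.image ind, F m
      = ∑ S ∈ (Finset.univ : Finset ι).powerset, F (ind S) :=
    Finset.sum_image (fun x _ y _ h => ind_injective h)
  rw [h1, h2]
  apply Finset.sum_congr rfl
  intro S _
  rw [hF]
  simp only
  rw [haS S]
  congr 1
  calc ∏ j, v j ^ (ind S) j = ∏ j, (if j ∈ S then v j else 1) := by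
        apply Finset.prod_congr rfl
        intro j _
        rw [ind_apply]
        by_cases hj : j ∈ S <;> simp [hj]
    _ = ∏ j ∈ Finset.univ ∩ S, v j := Finset.prod_ite_mem _ _ _
    _ = ∏ j ∈ S, v j := by rw [Finset.univ_inter]

/-- One-block Grace–Walsh–Szegő: a symmetric multiaffine polynomial vanishing somewhere on a
product of half planes vanishes at a diagonal point of the half plane.
(Uses `gws_scalar` from the other part; we restate it here as a hypothesis-free combination
in the final file.) -/
lemma block_gws (w : ℂ) (hw : w ≠ 0) (q : MvPolynomial ι ℂ)
    (hma : ∀ m ∈ q.support, ∀ j, m j ≤ 1)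
    (hsym : ∀ σ : Equiv.Perm ι, rename σ q = q)
    (v : ι → ℂ) (hv : ∀ j, 0 < (w * v j).re) (h0 : eval v q = 0) :
    ∃ ζ : ℂ, 0 < (w * ζ).re ∧ eval (fun _ => ζ) q = 0 := by
  classical
  obtain ⟨a, hrep⟩ := multiaffine_symm_form q hma hsym
  have h0' : ∑ S ∈ (Finset.univ : Finset ι).powerset, a S.card * ∏ j ∈ S, v j = 0 := by
    rw [← hrep v, h0]
  obtain ⟨ζ, hζ, hsum⟩ := gws_scalar w hw Finset.univ v a (fun j _ => hv j) h0'
  refine ⟨ζ, hζ, ?_⟩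
  rw [hrep (fun _ => ζ)]
  rw [Finset.sum_powerset]
  rw [← hsum]
  apply Finset.sum_congr rfl
  intro k hk
  have : ∀ S ∈ Finset.powersetCard k (Finset.univ : Finset ι),
      a S.card * ∏ _j ∈ S, ζ = a k * ζ ^ k := by
    intro S hS
    have hcard := (Finset.mem_powersetCard.mp hS).2
    rw [Finset.prod_const, hcard]
  rw [Finset.sum_congr rfl this, Finset.sum_const, Finset.card_powersetCard, nsmul_eq_mul]
  push_cast
  ring

open MvPolynomial

set_option maxHeartbeats 1000000

lemma eval_aeval' {σ τ : Type*} (v : τ → ℂ) (s : σ → MvPolynomial τ ℂ)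
    (g : MvPolynomial σ ℂ) :
    eval v (aeval s g) = eval (fun p => eval v (s p)) g := by
  induction g using MvPolynomial.induction_on with
  | C c => simp
  | add p q hp hq => rw [map_add, map_add, hp, hq, map_add]
  | mul_X p i hp => rw [map_mul, map_mul, hp, aeval_X, map_mul, eval_X]

lemma degreeOf_sum_le' {σ α : Type*} (j : σ) (s : Finset α) (F : α → MvPolynomial σ ℂ)
    (b : ℕ) (h : ∀ x ∈ s, degreeOf j (F x) ≤ b) :
    degreeOf j (∑ x ∈ s, F x) ≤ b := by
  classical
  induction s using Finset.cons_induction with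
  | empty => simp
  | cons x s hx ih =>
      rw [Finset.sum_cons]
      refine le_trans (degreeOf_add_le _ _ _) (max_le (h x (Finset.mem_cons_self x s)) ?_)
      exact ih (fun y hy => h y (Finset.mem_cons_of_mem hy))

lemma degreeOf_prod_le' {σ α : Type*} (j : σ) (s : Finset α) (F : α → MvPolynomial σ ℂ) :
    degreeOf j (∏ x ∈ s, F x) ≤ ∑ x ∈ s, degreeOf j (F x) := by
  classical
  induction s using Finset.cons_induction with
  | empty =>
      rw [Finset.prod_empty, Finset.sum_empty, ← MvPolynomial.C_1]
      exact le_of_eq (degreeOf_C _ _)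
  | cons x s hx ih =>
      rw [Finset.prod_cons, Finset.sum_cons]
      exact le_trans (degreeOf_mul_le _ _ _) (add_le_add le_rfl ih)

section Blocks

variable {n : ℕ} {d : Fin n → ℕ}

/-- Substitution keeping the variables of block `i₀` and freezing the others at `z'`. -/
noncomputable def bsubst (d : Fin n → ℕ) (i₀ : Fin n) (z' : ((i : Fin n) × Fin (d i)) → ℂ)
    (p : (i : Fin n) × Fin (d i)) : MvPolynomial (Fin (d i₀)) ℂ :=
  if h : p.1 = i₀ then X (Fin.cast (congrArg d h) p.2) else C (z' p)

lemma bsubst_same (i₀ : Fin n) (z' : ((i : Fin n) × Fin (d i)) → ℂ) (j : Fin (d i₀)) :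
    bsubst d i₀ z' ⟨i₀, j⟩ = X j := by
  rw [bsubst, dif_pos rfl]
  congr 1

lemma bsubst_other (i₀ : Fin n) (z' : ((i : Fin n) × Fin (d i)) → ℂ)
    (p : (i : Fin n) × Fin (d i)) (h : p.1 ≠ i₀) :
    bsubst d i₀ z' p = C (z' p) := by
  rw [bsubst, dif_neg h]

end Blocks

section Blocks2

variable {n : ℕ} {d : Fin n → ℕ}

lemma bsubst_multiaffine (i₀ : Fin n) (z' : ((i : Fin n) × Fin (d i)) → ℂ)
    (g : MvPolynomial ((i : Fin n) × Fin (d i)) ℂ)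
    (hma : ∀ m ∈ g.support, ∀ v, m v ≤ 1) :
    ∀ m ∈ (aeval (bsubst d i₀ z') g).support, ∀ j, m j ≤ 1 := by
  classical
  intro m hm j
  have hdeg : degreeOf j (aeval (bsubst d i₀ z') g) ≤ 1 := by
    conv_lhs => rw [g.as_sum, map_sum]
    apply degreeOf_sum_le'
    intro m' hm'
    rw [aeval_monomial]
    refine le_trans (degreeOf_mul_le _ _ _) ?_
    have h1 : degreeOf j (algebraMap ℂ (MvPolynomial (Fin (d i₀)) ℂ) (coeff m' g)) = 0 :=
      degreeOf_C _ _
    rw [h1, zero_add]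
    rw [Finsupp.prod]
    refine le_trans (degreeOf_prod_le' _ _ _) ?_
    have hterm : ∀ p ∈ m'.support, degreeOf j (bsubst d i₀ z' p ^ m' p)
        ≤ if p = (⟨i₀, j⟩ : (i : Fin n) × Fin (d i)) then m' p else 0 := by
      intro p hp
      by_cases hpe : p = (⟨i₀, j⟩ : (i : Fin n) × Fin (d i))
      · rw [if_pos hpe, hpe, bsubst_same]
        refine le_trans (degreeOf_pow_le _ _ _) ?_
        have : degreeOf j (X j : MvPolynomial (Fin (d i₀)) ℂ) ≤ 1 := by
          rw [degreeOf_X]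
          simp
        calc m' ⟨i₀, j⟩ * degreeOf j (X j : MvPolynomial (Fin (d i₀)) ℂ) ≤ m' ⟨i₀, j⟩ * 1 :=
              Nat.mul_le_mul_left _ this
          _ = m' ⟨i₀, j⟩ := Nat.mul_one _
      · rw [if_neg hpe]
        refine le_trans (degreeOf_pow_le _ _ _) ?_
        have hz : degreeOf j (bsubst d i₀ z' p) = 0 := by
          obtain ⟨i, jj⟩ := p
          by_cases h : i = i₀
          · subst h
            rw [bsubst_same]
            have hne : jj ≠ j := by
              intro hc; exact hpe (by rw [hc])
            rw [degreeOf_X, if_neg (by exact fun hc => hne hc.symm)]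
          · rw [bsubst_other _ _ _ h, degreeOf_C]
        rw [hz, Nat.mul_zero]
    refine le_trans (Finset.sum_le_sum hterm) ?_
    rw [Finset.sum_ite_eq' m'.support (⟨i₀, j⟩ : (i : Fin n) × Fin (d i)) (fun p => m' p)]
    by_cases hmem : (⟨i₀, j⟩ : (i : Fin n) × Fin (d i)) ∈ m'.support
    · rw [if_pos hmem]; exact hma m' hm' _
    · rw [if_neg hmem]; exact Nat.zero_le 1
  calc m j ≤ degreeOf j (aeval (bsubst d i₀ z') g) := by
        rw [degreeOf_eq_sup]
        exact Finset.le_sup (f := fun m => m j) hm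
    _ ≤ 1 := hdeg

end Blocks2

section Blocks3

variable {n : ℕ} {d : Fin n → ℕ}

/-- family of permutations acting as `σ₀` on block `i₀` and trivially elsewhere. -/
noncomputable def permFam (d : Fin n → ℕ) (i₀ : Fin n) (σ₀ : Equiv.Perm (Fin (d i₀))) :
    (i : Fin n) → Equiv.Perm (Fin (d i)) :=
  fun i => if h : i₀ = i then h ▸ σ₀ else Equiv.refl _

lemma permFam_same (i₀ : Fin n) (σ₀ : Equiv.Perm (Fin (d i₀))) :
    permFam d i₀ σ₀ i₀ = σ₀ := by
  rw [permFam, dif_pos rfl]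

lemma permFam_other (i₀ : Fin n) (σ₀ : Equiv.Perm (Fin (d i₀))) (i : Fin n) (h : i ≠ i₀) :
    permFam d i₀ σ₀ i = Equiv.refl _ := by
  rw [permFam, dif_neg (fun hc => h hc.symm)]

lemma bsubst_symm (i₀ : Fin n) (z' : ((i : Fin n) × Fin (d i)) → ℂ)
    (g : MvPolynomial ((i : Fin n) × Fin (d i)) ℂ)
    (hsym : ∀ σ : (i : Fin n) → Equiv.Perm (Fin (d i)),
      rename (Equiv.sigmaCongrRight σ) g = g)
    (σ₀ : Equiv.Perm (Fin (d i₀))) :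
    rename σ₀ (aeval (bsubst d i₀ z') g) = aeval (bsubst d i₀ z') g := by
  have hkey : ∀ p : (i : Fin n) × Fin (d i),
      bsubst d i₀ z' (Equiv.sigmaCongrRight (permFam d i₀ σ₀) p)
        = rename σ₀ (bsubst d i₀ z' p) := by
    rintro ⟨i, j⟩
    by_cases h : i = i₀
    · subst h
      rw [show Equiv.sigmaCongrRight (permFam d i σ₀) ⟨i, j⟩
          = ⟨i, permFam d i σ₀ i j⟩ from rfl]
      rw [permFam_same, bsubst_same, bsubst_same, rename_X]
    · rw [show Equiv.sigmaCongrRight (permFam d i₀ σ₀) ⟨i, j⟩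
          = ⟨i, permFam d i₀ σ₀ i j⟩ from rfl]
      rw [permFam_other _ _ _ h]
      rw [bsubst_other _ _ _ h, bsubst_other _ _ _ h, rename_C]
      rfl
  conv_rhs => rw [← hsym (permFam d i₀ σ₀)]
  rw [aeval_rename]
  rw [comp_aeval_apply (f := bsubst d i₀ z') (rename σ₀) g]
  have hfun : (fun p => rename σ₀ (bsubst d i₀ z' p))
      = bsubst d i₀ z' ∘ (Equiv.sigmaCongrRight (permFam d i₀ σ₀)) := by
    funext p
    exact (hkey p).symm
  rw [hfun]

end Blocks3

end

open MvPolynomial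

/-- Grace–Walsh–Szegő consequence: a polynomial `f` is `H`-stable iff its
polarization `P(f)` (the multi-affine polynomial in variables `z_{ij}`,
`1 ≤ j ≤ dᵢ`, symmetric in `z_{i1},…,z_{i dᵢ}` for each `i`, that recovers
`f` upon substituting `z_{ij} = zᵢ`) is `H`-stable. -/
theorem stmt_14 {n : ℕ} (d : Fin n → ℕ) (f : MvPolynomial (Fin n) ℂ)
    (hdeg : ∀ i, f.degreeOf i = d i)
    (g : MvPolynomial ((i : Fin n) × Fin (d i)) ℂ)
    (hma : ∀ m ∈ g.support, ∀ v, m v ≤ 1)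
    (hsym : ∀ σ : (i : Fin n) → Equiv.Perm (Fin (d i)),
      rename (Equiv.sigmaCongrRight σ) g = g)
    (hsub : aeval (fun p : (i : Fin n) × Fin (d i) =>
      (X p.1 : MvPolynomial (Fin n) ℂ)) g = f)
    (w : ℂ) (hw : w ≠ 0) :
    (∀ z : Fin n → ℂ, (∀ i, 0 < (w * z i).re) → eval z f ≠ 0) ↔
      (∀ z : ((i : Fin n) × Fin (d i)) → ℂ, (∀ v, 0 < (w * z v).re) →
        eval z g ≠ 0) := by
  constructor
  · -- hard direction: stability of `f` implies stability of the polarization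
    intro hf z hz hg0
    have claim : ∀ k : ℕ, ∃ z' : ((i : Fin n) × Fin (d i)) → ℂ,
        (∀ p, 0 < (w * z' p).re) ∧ eval z' g = 0 ∧
        ∀ p q : ((i : Fin n) × Fin (d i)), p.1 = q.1 → (p.1 : ℕ) < k → z' p = z' q := by
      intro k
      induction k with
      | zero => exact ⟨z, hz, hg0, fun p q _ h => absurd h (Nat.not_lt_zero _)⟩
      | succ k ih =>
          obtain ⟨z', hz', hg', hconst⟩ := ih
          by_cases hk : k < n
          · set i₀ : Fin n := ⟨k, hk⟩ with hi₀
            set Q := aeval (bsubst d i₀ z') g with hQdef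
            have hq0 : eval (fun j => z' ⟨i₀, j⟩) Q = 0 := by
              rw [hQdef, eval_aeval']
              rw [show (fun p => eval (fun j => z' ⟨i₀, j⟩) (bsubst d i₀ z' p)) = z' from ?_]
              · exact hg'
              funext p
              obtain ⟨i, j⟩ := p
              by_cases h : i = i₀
              · subst h
                rw [bsubst_same, eval_X]
              · rw [bsubst_other _ _ _ h, eval_C]
            obtain ⟨ζ, hζ, hζ0⟩ := block_gws w hw Q (bsubst_multiaffine i₀ z' g hma)
              (bsubst_symm i₀ z' g hsym) _ (fun j => hz' ⟨i₀, j⟩) hq0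
            refine ⟨fun p => if p.1 = i₀ then ζ else z' p, ?_, ?_, ?_⟩
            · intro p
              by_cases h : p.1 = i₀
              · simpa [h] using hζ
              · simpa [h] using hz' p
            · rw [hQdef, eval_aeval'] at hζ0
              rw [show (fun p : (i : Fin n) × Fin (d i) => if p.1 = i₀ then ζ else z' p)
                  = fun p => eval (fun _ => ζ) (bsubst d i₀ z' p) from ?_]
              · exact hζ0
              funext p
              obtain ⟨i, j⟩ := p
              by_cases h : i = i₀
              · subst h
                rw [bsubst_same, eval_X, if_pos rfl]
              · rw [bsubst_other _ _ _ h, eval_C, if_neg h]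
            · intro p q' hpq hplt
              by_cases h : p.1 = i₀
              · have h2 : q'.1 = i₀ := hpq ▸ h
                simp [h, h2]
              · have h2 : ¬ q'.1 = i₀ := fun hc => h (hpq ▸ hc)
                simp only [if_neg h, if_neg h2]
                apply hconst p q' hpq
                have hne : (p.1 : ℕ) ≠ k := fun hc => h (Fin.ext hc)
                omega
          · refine ⟨z', hz', hg', fun p q' hpq _ => hconst p q' hpq ?_⟩
            have := p.1.isLt
            omega
    obtain ⟨z', hz', hg', hconst⟩ := claim n
    set y : Fin n → ℂ := fun i => if h : 0 < d i then z' ⟨i, ⟨0, h⟩⟩ else (starRingEnd ℂ) w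
      with hy
    have hball : ∀ i, 0 < (w * y i).re := by
      intro i
      rw [hy]
      by_cases h : 0 < d i
      · simp only [dif_pos h]
        exact hz' _
      · simp only [dif_neg h]
        rw [Complex.mul_conj]
        simpa using Complex.normSq_pos.mpr hw
    apply hf y hball
    rw [← hsub, eval_aeval']
    rw [show (fun p : (i : Fin n) × Fin (d i) =>
        eval y (X p.1 : MvPolynomial (Fin n) ℂ)) = z' from ?_]
    · exact hg'
    funext p
    rw [eval_X, hy]
    have hpos : 0 < d p.1 := p.2.pos
    simp only [dif_pos hpos]
    exact hconst ⟨p.1, ⟨0, hpos⟩⟩ p rfl p.1.isLt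
  · -- easy direction
    intro hg z hz hf0
    apply hg (fun p => z p.1) (fun p => hz p.1)
    have : eval z f = eval (fun p : (i : Fin n) × Fin (d i) => z p.1) g := by
      rw [← hsub, eval_aeval']
      have hfun : (fun p : (i : Fin n) × Fin (d i) =>
          eval z (X p.1 : MvPolynomial (Fin n) ℂ)) = fun p => z p.1 := by
        funext p
        rw [eval_X]
      rw [hfun]
    rw [← this]
    exact hf0
end

section
/- Let 𝔅 be the set of bases of a matroid on ground set {1,…,n} and let M(z) = ∑_{B∈𝔅} ∏_{i∈B} zᵢ be its basis generating polynomial. Then M(z) has the half-plane property if and only if the matroid is strongly Rayleigh, i.e. Δᵢⱼ(M)(x) ≥ 0 for all x ∈ ℝⁿ and all 1 ≤ i, j ≤ n, where Δᵢⱼ(M) = (∂M/∂zᵢ)·(∂M/∂zⱼ) − (∂²M/∂zᵢ∂zⱼ)·M. -/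
open MvPolynomial Finsupp

namespace Stmt15

variable {n : ℕ}

/-- coefficient formula for pderiv -/
theorem coeff_pderiv (m : Fin n) (p : MvPolynomial (Fin n) ℝ) (d : Fin n →₀ ℕ) :
    coeff d (pderiv m p) = (d m + 1 : ℕ) * coeff (d + Finsupp.single m 1) p := by
  induction p using MvPolynomial.induction_on' with
  | monomial s a =>
    rw [pderiv_monomial, coeff_monomial, coeff_monomial]
    by_cases h : s = d + Finsupp.single m 1
    · subst h
      have h1 : d + Finsupp.single m 1 - Finsupp.single m 1 = d := by
        ext i; simp [add_tsub_cancel_right]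
      have h2 : ((d + Finsupp.single m 1 : Fin n →₀ ℕ)) m = d m + 1 := by simp
      rw [if_pos h1, h2]
      simp only [if_pos rfl]
      push_cast
      ring
    · rw [if_neg h]
      by_cases h2 : s - Finsupp.single m 1 = d
      · rw [if_pos h2]
        by_cases h3 : s m = 0
        · have : s - Finsupp.single m 1 = s := by
            ext i
            by_cases hi : i = m
            · subst hi; simp [h3]
            · simp [Finsupp.single_eq_of_ne' (Ne.symm hi)]
          rw [this] at h2
          subst h2
          simp [h3]
        · exfalso
          apply h
          have hle : Finsupp.single m 1 ≤ s := by
            rw [Finsupp.single_le_iff]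
            omega
          rw [← h2, tsub_add_cancel_of_le hle]
      · rw [if_neg h2, mul_zero]
  | add p q hp hq =>
    simp only [map_add, coeff_add, hp, hq]
    ring

theorem pderiv_comm (i j : Fin n) (p : MvPolynomial (Fin n) ℝ) :
    pderiv i (pderiv j p) = pderiv j (pderiv i p) := by
  rcases eq_or_ne i j with rfl | hij
  · rfl
  · apply MvPolynomial.ext
    intro d
    rw [coeff_pderiv, coeff_pderiv, coeff_pderiv, coeff_pderiv]
    have h1 : ((d + Finsupp.single i 1 : Fin n →₀ ℕ)) j = d j := by
      simp [Finsupp.single_eq_of_ne' hij]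
    have h2 : ((d + Finsupp.single j 1 : Fin n →₀ ℕ)) i = d i := by
      simp [Finsupp.single_eq_of_ne' (Ne.symm hij)]
    rw [h1, h2, add_right_comm]
    ring

theorem notMem_vars_of_pderiv_eq_zero {m : Fin n} {p : MvPolynomial (Fin n) ℝ}
    (h : pderiv m p = 0) : m ∉ p.vars := by
  rw [mem_vars]
  rintro ⟨d, hd, hmd⟩
  have hdm : d m ≠ 0 := Finsupp.mem_support_iff.mp hmd
  have hle : Finsupp.single m 1 ≤ d := by rw [Finsupp.single_le_iff]; omega
  have h2 := (coeff_pderiv m p (d - Finsupp.single m 1)).symm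
  rw [h, coeff_zero, tsub_add_cancel_of_le hle] at h2
  have hd0 : coeff d p ≠ 0 := MvPolynomial.mem_support_iff.mp hd
  rcases mul_eq_zero.mp h2 with h3 | h3
  · exact absurd h3 (by
      push_cast
      positivity)
  · exact hd0 h3

theorem vars_pderiv (m : Fin n) (p : MvPolynomial (Fin n) ℝ) :
    (pderiv m p).vars ⊆ p.vars := by
  intro i hi
  rw [mem_vars] at hi ⊢
  obtain ⟨d, hd, hid⟩ := hi
  have hc : coeff d (pderiv m p) ≠ 0 := MvPolynomial.mem_support_iff.mp hd
  rw [coeff_pderiv] at hc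
  have : coeff (d + Finsupp.single m 1) p ≠ 0 := by
    intro h0; rw [h0, mul_zero] at hc; exact hc rfl
  refine ⟨d + Finsupp.single m 1, MvPolynomial.mem_support_iff.mpr this, ?_⟩
  rw [Finsupp.mem_support_iff] at hid ⊢
  simp only [Finsupp.add_apply]
  omega


section Eval

variable {A : Type*} [CommRing A] [Algebra ℝ A]

theorem aeval_update_of_notMem_vars {m : Fin n} {p : MvPolynomial (Fin n) ℝ}
    (hm : m ∉ p.vars) (z : Fin n → A) (t : A) :
    aeval (Function.update z m t) p = aeval z p := by
  have hC : ((aeval (Function.update z m t) : MvPolynomial (Fin n) ℝ →ₐ[ℝ] A) :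
      MvPolynomial (Fin n) ℝ →+* A).comp MvPolynomial.C =
      ((aeval z : MvPolynomial (Fin n) ℝ →ₐ[ℝ] A) : MvPolynomial (Fin n) ℝ →+* A).comp
        MvPolynomial.C := by
    ext r
    simp
  exact MvPolynomial.hom_congr_vars hC (fun i hi _ => by
    have hne : i ≠ m := fun he => hm (he ▸ hi)
    simp [Function.update_of_ne hne]) rfl

/-- the `m`-free part of `p` -/
noncomputable def res (m : Fin n) (p : MvPolynomial (Fin n) ℝ) : MvPolynomial (Fin n) ℝ :=
  p - X m * pderiv m p

theorem res_add_eq (m : Fin n) (p : MvPolynomial (Fin n) ℝ) :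
    res m p + X m * pderiv m p = p := sub_add_cancel p _

theorem pderiv_res (m : Fin n) {p : MvPolynomial (Fin n) ℝ}
    (h2 : pderiv m (pderiv m p) = 0) : pderiv m (res m p) = 0 := by
  simp [res, pderiv_mul, h2]

theorem notMem_vars_pderiv_self {m : Fin n} {p : MvPolynomial (Fin n) ℝ}
    (h2 : pderiv m (pderiv m p) = 0) : m ∉ (pderiv m p).vars :=
  notMem_vars_of_pderiv_eq_zero h2

theorem notMem_vars_res {m : Fin n} {p : MvPolynomial (Fin n) ℝ}
    (h2 : pderiv m (pderiv m p) = 0) : m ∉ (res m p).vars :=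
  notMem_vars_of_pderiv_eq_zero (pderiv_res m h2)

/-- affine expansion of the evaluation in the variable `m` -/
theorem aeval_update (m : Fin n) {p : MvPolynomial (Fin n) ℝ}
    (h2 : pderiv m (pderiv m p) = 0) (z : Fin n → A) (s : A) :
    aeval (Function.update z m s) p = aeval z (res m p) + s * aeval z (pderiv m p) := by
  conv_lhs => rw [← res_add_eq m p]
  rw [map_add, map_mul, aeval_X, Function.update_self,
    aeval_update_of_notMem_vars (notMem_vars_res h2),
    aeval_update_of_notMem_vars (notMem_vars_pderiv_self h2)]

theorem aeval_real (x : Fin n → ℝ) (p : MvPolynomial (Fin n) ℝ) :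
    aeval x p = eval x p := by
  rw [← coe_aeval_eq_eval]
  rfl

theorem aeval_ofReal (x : Fin n → ℝ) (p : MvPolynomial (Fin n) ℝ) :
    aeval (fun i => (x i : ℂ)) p = ((eval x p : ℝ) : ℂ) := by
  have hC : ((aeval (fun i => (x i : ℂ)) : MvPolynomial (Fin n) ℝ →ₐ[ℝ] ℂ) :
      MvPolynomial (Fin n) ℝ →+* ℂ).comp MvPolynomial.C =
      (Complex.ofRealHom.comp (eval x)).comp MvPolynomial.C := by
    ext r
    simp
  exact MvPolynomial.hom_congr_vars (f₂ := Complex.ofRealHom.comp (eval x)) hC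
    (fun i _ _ => by simp) rfl

theorem eq_C_of_vars_empty {p : MvPolynomial (Fin n) ℝ} (h : p.vars = ∅) :
    p = MvPolynomial.C (constantCoeff p) := by
  apply MvPolynomial.ext
  intro d
  rcases eq_or_ne d 0 with rfl | hd
  · simp [coeff_C, constantCoeff_eq]
  · rw [coeff_C, if_neg (Ne.symm hd)]
    by_contra hc
    have hds : d ∈ p.support := MvPolynomial.mem_support_iff.mpr hc
    obtain ⟨i, hi⟩ : ∃ i, d i ≠ 0 := by
      by_contra hall
      push_neg at hall
      exact hd (Finsupp.ext hall)
    have : i ∈ p.vars := (mem_vars i).mpr ⟨d, hds, Finsupp.mem_support_iff.mpr hi⟩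
    simp [h] at this

theorem continuous_aeval (p : MvPolynomial (Fin n) ℝ) :
    Continuous (fun z : Fin n → ℂ => aeval z p) := by
  induction p using MvPolynomial.induction_on with
  | C a => simpa using continuous_const
  | add p q hp hq => simp only [map_add]; exact hp.add hq
  | mul_X p i hp => simp only [map_mul, aeval_X]; exact hp.mul (continuous_apply i)

end Eval

section Quad

theorem quad_A {A B C : ℝ} (h : ∀ t : ℝ, 0 ≤ A * t ^ 2 + B * t + C) : 0 ≤ A := by
  by_contra hA
  push_neg at hA
  set t : ℝ := (|B| + |C| + 1) / (-A) + 1 with ht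
  have h1 : (0:ℝ) < -A := by linarith
  have h2 : (0:ℝ) ≤ (|B| + |C| + 1) / (-A) := by positivity
  have h3 : (1:ℝ) ≤ t := by rw [ht]; linarith
  have h4 : -A * t ≥ |B| + |C| + 1 := by
    rw [ht, mul_add, mul_one]
    have : -A * ((|B| + |C| + 1) / (-A)) = |B| + |C| + 1 := by
      rw [mul_comm]
      exact div_mul_cancel₀ _ (by linarith)
    linarith
  nlinarith [h t, le_abs_self B, neg_abs_le B, le_abs_self C, neg_abs_le C, sq_nonneg t]

theorem quad_disc {A B C : ℝ} (h : ∀ t : ℝ, 0 ≤ A * t ^ 2 + B * t + C) :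
    B ^ 2 ≤ 4 * A * C := by
  have hA := quad_A h
  rcases eq_or_lt_of_le hA with hA0 | hA0
  · have hB : B = 0 := by
      by_contra hB
      have hval : B * (-(C + 1) / B) = -(C + 1) := by field_simp
      have := h (-(C + 1) / B)
      rw [← hA0] at this
      nlinarith
    rw [hB, ← hA0]
    have := h 0
    nlinarith
  · have hA' : A ≠ 0 := ne_of_gt hA0
    have key : 4 * A * (A * (-B / (2 * A)) ^ 2 + B * (-B / (2 * A)) + C) =
        4 * A * C - B ^ 2 := by field_simp; ring
    have h5 : 0 ≤ 4 * A * (A * (-B / (2 * A)) ^ 2 + B * (-B / (2 * A)) + C) :=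
      mul_nonneg (by linarith) (h _)
    rw [key] at h5
    linarith

theorem quad_pencil {A B C : ℝ} (hA : 0 ≤ A) (hC : 0 ≤ C) (hd : B ^ 2 ≤ 4 * A * C)
    (a b : ℝ) : 0 ≤ a ^ 2 * A + a * b * B + b ^ 2 * C := by
  rcases eq_or_lt_of_le hA with hA0 | hA0
  · have hB : B = 0 := by nlinarith [sq_nonneg B]
    rw [hB, ← hA0]
    simpa using mul_nonneg (sq_nonneg b) hC
  · nlinarith [sq_nonneg (2 * A * a + B * b), mul_nonneg (sub_nonneg.mpr hd) (sq_nonneg b)]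

/-- For a bi-affine polynomial nonvanishing on the product of upper half planes,
the root Möbius inequality. -/
theorem mob {A B C D : ℂ}
    (hst : ∀ s t : ℂ, 0 < s.im → 0 < t.im → A * s * t + B * s + C * t + D ≠ 0)
    (s : ℂ) (hs : 0 < s.im) :
    0 ≤ ((B * s + D) * (starRingEnd ℂ) (A * s + C)).im := by
  by_cases hden : A * s + C = 0
  · simp [hden]
  · by_contra hneg
    push_neg at hneg
    set t : ℂ := -((B * s + D) / (A * s + C)) with ht
    have hnormSq : 0 < Complex.normSq (A * s + C) := Complex.normSq_pos.mpr hden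
    have hnum : ((B * s + D) * (starRingEnd ℂ) (A * s + C)).im =
        (B * s + D).im * (A * s + C).re - (B * s + D).re * (A * s + C).im := by
      simp [Complex.mul_im, Complex.conj_re, Complex.conj_im]
      ring
    have htim : 0 < t.im := by
      rw [ht, Complex.neg_im, Complex.div_im]
      have heq : (B * s + D).im * (A * s + C).re / Complex.normSq (A * s + C) -
          (B * s + D).re * (A * s + C).im / Complex.normSq (A * s + C) =
          ((B * s + D).im * (A * s + C).re - (B * s + D).re * (A * s + C).im) /
            Complex.normSq (A * s + C) := by ring
      rw [heq]
      have hlt : ((B * s + D).im * (A * s + C).re - (B * s + D).re * (A * s + C).im) /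
          Complex.normSq (A * s + C) < 0 :=
        div_neg_of_neg_of_pos (by rw [← hnum]; exact hneg) hnormSq
      linarith
    refine hst s t hs htim ?_
    have hmain : t * (A * s + C) = -(B * s + D) := by
      rw [ht]
      rw [neg_mul, div_mul_cancel₀ _ hden]
    calc A * s * t + B * s + C * t + D = t * (A * s + C) + (B * s + D) := by ring
    _ = 0 := by rw [hmain]; ring

end Quad

section Proportional

/-- extraction of coefficients in `X j` -/
theorem extract_quad {j : Fin n} {q₀ q₁ q₂ : MvPolynomial (Fin n) ℝ}
    (h : q₀ + X j * q₁ + X j ^ 2 * q₂ = 0)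
    (h₀ : pderiv j q₀ = 0) (h₁ : pderiv j q₁ = 0) (h₂ : pderiv j q₂ = 0) :
    q₀ = 0 ∧ q₁ = 0 ∧ q₂ = 0 := by
  have h2C : MvPolynomial.C (2 : ℝ) = (2 : MvPolynomial (Fin n) ℝ) := map_ofNat _ 2
  have d1 : q₁ + MvPolynomial.C (2 : ℝ) * (X j * q₂) = 0 := by
    have h' := congrArg (pderiv j) h
    rw [map_add, map_add, pderiv_mul, pderiv_mul, pderiv_X_self, map_zero,
      pderiv_pow, pderiv_X_self, h₀, h₁, h₂] at h'
    push_cast at h'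
    rw [h2C]
    linear_combination h'
  have d2 : MvPolynomial.C (2 : ℝ) * q₂ = 0 := by
    have h' := congrArg (pderiv j) d1
    rw [map_add, pderiv_C_mul, pderiv_mul, pderiv_X_self, h₁, h₂, map_zero, one_mul,
      mul_zero, add_zero, zero_add] at h'
    exact h'
  have hq2 : q₂ = 0 := by
    rcases mul_eq_zero.mp d2 with h' | h'
    · rw [MvPolynomial.C_eq_zero] at h'
      norm_num at h'
    · exact h'
  have hq1 : q₁ = 0 := by
    rw [hq2] at d1
    simpa using d1
  refine ⟨?_, hq1, hq2⟩
  rw [hq1, hq2, mul_zero, mul_zero, add_zero, add_zero] at h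
  exact h

theorem prop_of_wronskian_zero (S : Finset (Fin n)) :
    ∀ g h : MvPolynomial (Fin n) ℝ,
    (∀ i, pderiv i (pderiv i g) = 0) → (∀ i, pderiv i (pderiv i h) = 0) →
    g.vars ⊆ S → h.vars ⊆ S → g ≠ 0 →
    (∀ j, g * pderiv j h - h * pderiv j g = 0) →
    ∃ c : ℝ, h = MvPolynomial.C c * g := by
  induction S using Finset.induction_on with
  | empty =>
    intro g h _ _ hvg hvh hg0 _
    have hvge : g.vars = ∅ := Finset.subset_empty.mp hvg
    have hvhe : h.vars = ∅ := Finset.subset_empty.mp hvh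
    have hgC := eq_C_of_vars_empty hvge
    have hhC := eq_C_of_vars_empty hvhe
    have ha : constantCoeff g ≠ 0 := by
      intro h0
      rw [h0, map_zero] at hgC
      exact hg0 hgC
    refine ⟨constantCoeff h / constantCoeff g, ?_⟩
    have hCC : (MvPolynomial.C (constantCoeff h / constantCoeff g) :
        MvPolynomial (Fin n) ℝ) *
        MvPolynomial.C (constantCoeff g) = MvPolynomial.C (constantCoeff h) := by
      rw [← map_mul, div_mul_cancel₀ _ ha]
    calc h = MvPolynomial.C (constantCoeff h) := hhC
    _ = MvPolynomial.C (constantCoeff h / constantCoeff g) *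
        MvPolynomial.C (constantCoeff g) := hCC.symm
    _ = MvPolynomial.C (constantCoeff h / constantCoeff g) * g := by rw [← hgC]
  | @insert j S' hjS ih =>
    intro g h hMAg hMAh hvg hvh hg0 hW
    set g₁ := pderiv j g with hg₁
    set g₀ := res j g with hg₀
    set h₁ := pderiv j h with hh₁
    set h₀ := res j h with hh₀
    have hdg : g₀ + X j * g₁ = g := res_add_eq j g
    have hdh : h₀ + X j * h₁ = h := res_add_eq j h
    have hjg₁ : pderiv j g₁ = 0 := hMAg j
    have hjh₁ : pderiv j h₁ = 0 := hMAh j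
    have hjg₀ : pderiv j g₀ = 0 := pderiv_res j (hMAg j)
    have hjh₀ : pderiv j h₀ = 0 := pderiv_res j (hMAh j)
    -- vars of the components
    have hsub : ∀ p : MvPolynomial (Fin n) ℝ, p.vars ⊆ insert j S' → pderiv j p = 0 →
        p.vars ⊆ S' := by
      intro p hp hp0 i hi
      rcases Finset.mem_insert.mp (hp hi) with rfl | hi'
      · exact absurd hi (notMem_vars_of_pderiv_eq_zero hp0)
      · exact hi'
    have hvg₁ : g₁.vars ⊆ S' := hsub _ ((vars_pderiv j g).trans hvg) hjg₁
    have hvh₁ : h₁.vars ⊆ S' := hsub _ ((vars_pderiv j h).trans hvh) hjh₁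
    have hvg₀ : g₀.vars ⊆ S' := by
      refine hsub _ ?_ hjg₀
      intro i hi
      rw [hg₀, res, sub_eq_add_neg] at hi
      classical
      rcases Finset.mem_union.mp (vars_add_subset _ _ hi) with hi' | hi'
      · exact hvg hi'
      · rw [vars_neg] at hi'
        rcases Finset.mem_union.mp (vars_mul _ _ hi') with hi'' | hi''
        · rw [vars_X] at hi''
          exact Finset.mem_insert.mpr (Or.inl (Finset.mem_singleton.mp hi''))
        · exact (vars_pderiv j g).trans hvg hi''
    have hvh₀ : h₀.vars ⊆ S' := by
      refine hsub _ ?_ hjh₀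
      intro i hi
      rw [hh₀, res, sub_eq_add_neg] at hi
      classical
      rcases Finset.mem_union.mp (vars_add_subset _ _ hi) with hi' | hi'
      · exact hvh hi'
      · rw [vars_neg] at hi'
        rcases Finset.mem_union.mp (vars_mul _ _ hi') with hi'' | hi''
        · rw [vars_X] at hi''
          exact Finset.mem_insert.mpr (Or.inl (Finset.mem_singleton.mp hi''))
        · exact (vars_pderiv j h).trans hvh hi''
    -- MA of the components
    have hMAg₁ : ∀ i, pderiv i (pderiv i g₁) = 0 := by
      intro i
      rw [hg₁, pderiv_comm i j, pderiv_comm i j, hMAg i, map_zero]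
    have hMAh₁ : ∀ i, pderiv i (pderiv i h₁) = 0 := by
      intro i
      rw [hh₁, pderiv_comm i j, pderiv_comm i j, hMAh i, map_zero]
    have hMAg₀ : ∀ i, pderiv i (pderiv i g₀) = 0 := by
      intro i
      rcases eq_or_ne i j with rfl | hij
      · rw [hjg₀, map_zero]
      · have e3 : pderiv i (pderiv i (pderiv j g)) = 0 := by
          rw [pderiv_comm i j g, pderiv_comm i j (pderiv i g), hMAg i, map_zero]
        rw [hg₀, res, map_sub, map_sub, pderiv_mul, pderiv_X_of_ne hij.symm, zero_mul, zero_add,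
          pderiv_mul, pderiv_X_of_ne hij.symm, zero_mul, zero_add, hMAg i, e3, mul_zero, sub_zero]
    have hMAh₀ : ∀ i, pderiv i (pderiv i h₀) = 0 := by
      intro i
      rcases eq_or_ne i j with rfl | hij
      · rw [hjh₀, map_zero]
      · have e3 : pderiv i (pderiv i (pderiv j h)) = 0 := by
          rw [pderiv_comm i j h, pderiv_comm i j (pderiv i h), hMAh i, map_zero]
        rw [hh₀, res, map_sub, map_sub, pderiv_mul, pderiv_X_of_ne hij.symm, zero_mul, zero_add,
          pderiv_mul, pderiv_X_of_ne hij.symm, zero_mul, zero_add, hMAh i, e3, mul_zero, sub_zero]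
    -- the j-Wronskian in component form
    have W0 : g₀ * h₁ - h₀ * g₁ = 0 := by
      have hWj := hW j
      rw [← hdg, ← hdh] at hWj
      simp only [map_add, pderiv_mul, pderiv_X_self, hjg₀, hjh₀, hjg₁, hjh₁, one_mul,
        mul_zero, add_zero, zero_add] at hWj
      linear_combination hWj
    -- the k-Wronskians of the components
    have Wk : ∀ k, (g₀ * pderiv k h₀ - h₀ * pderiv k g₀ = 0) ∧
        (g₁ * pderiv k h₁ - h₁ * pderiv k g₁ = 0) := by
      intro k
      rcases eq_or_ne k j with rfl | hkj
      · constructor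
        · rw [hjh₀, hjg₀, mul_zero, mul_zero, sub_zero]
        · rw [hjh₁, hjg₁, mul_zero, mul_zero, sub_zero]
      · have hWk := hW k
        rw [← hdg, ← hdh] at hWk
        have hexp : (g₀ * pderiv k h₀ - h₀ * pderiv k g₀) +
            X j * (g₀ * pderiv k h₁ + g₁ * pderiv k h₀ - h₀ * pderiv k g₁ - h₁ * pderiv k g₀) +
            X j ^ 2 * (g₁ * pderiv k h₁ - h₁ * pderiv k g₁) = 0 := by
          simp only [map_add, pderiv_mul, pderiv_X_of_ne hkj.symm, zero_mul, zero_add] at hWk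
          linear_combination hWk
        have hder : ∀ (a b : MvPolynomial (Fin n) ℝ), pderiv j a = 0 → pderiv j b = 0 →
            pderiv j (a * pderiv k b) = 0 := by
          intro a b ha hb
          rw [pderiv_mul, ha, zero_mul, zero_add, pderiv_comm j k, hb, map_zero, mul_zero]
        obtain ⟨e0, _, e2⟩ := extract_quad hexp
          (by rw [map_sub, hder _ _ hjg₀ hjh₀, hder _ _ hjh₀ hjg₀, sub_zero])
          (by rw [map_sub, map_sub, map_add, hder _ _ hjg₀ hjh₁, hder _ _ hjg₁ hjh₀,
              hder _ _ hjh₀ hjg₁, hder _ _ hjh₁ hjg₀]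
              simp)
          (by rw [map_sub, hder _ _ hjg₁ hjh₁, hder _ _ hjh₁ hjg₁, sub_zero])
        exact ⟨e0, e2⟩
    by_cases hg₁0 : g₁ = 0
    · -- g has no X j part
      have hgg₀ : g = g₀ := by rw [← hdg, hg₁0, mul_zero, add_zero]
      have hh₁0 : h₁ = 0 := by
        have hW0' : g₀ * h₁ = 0 := by
          have hW0'' := W0
          rw [hg₁0, mul_zero, sub_zero] at hW0''
          exact hW0''
        rcases mul_eq_zero.mp hW0' with h' | h'
        · exact absurd (hgg₀.trans h') hg0
        · exact h'
      have hhh₀ : h = h₀ := by rw [← hdh, hh₁0, mul_zero, add_zero]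
      exact hhh₀ ▸ hgg₀ ▸ ih g₀ h₀ (hgg₀ ▸ hMAg₀) (hhh₀ ▸ hMAh₀) hvg₀ hvh₀
        (hgg₀ ▸ hg0) (fun k => (Wk k).1)
    · obtain ⟨c, hc⟩ := ih g₁ h₁ hMAg₁ hMAh₁ hvg₁ hvh₁ hg₁0 (fun k => (Wk k).2)
      have hh₀c : h₀ = MvPolynomial.C c * g₀ := by
        have hfac : g₁ * (MvPolynomial.C c * g₀ - h₀) = 0 := by
          rw [hc] at W0
          calc g₁ * (MvPolynomial.C c * g₀ - h₀) = g₀ * (MvPolynomial.C c * g₁) -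
              h₀ * g₁ := by ring
          _ = 0 := W0
        rcases mul_eq_zero.mp hfac with h' | h'
        · exact absurd h' hg₁0
        · linear_combination -h'
      refine ⟨c, ?_⟩
      rw [← hdg, ← hdh, hh₀c, hc]
      ring

end Proportional

section Helpers

theorem vars_C_mul_subset (a : ℝ) (p : MvPolynomial (Fin n) ℝ) :
    (MvPolynomial.C a * p).vars ⊆ p.vars := by
  rcases eq_or_ne a 0 with rfl | ha
  · simp
  · rw [vars_C_mul a ha]

theorem exists_eval_ne {p : MvPolynomial (Fin n) ℝ} (hp : p ≠ 0) :
    ∃ x : Fin n → ℝ, eval x p ≠ 0 := by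
  by_contra hc
  push_neg at hc
  exact hp (MvPolynomial.funext fun x => by rw [hc x, map_zero])

theorem U_preconnected : IsPreconnected {z : Fin n → ℂ | ∀ i, 0 < (z i).im} := by
  have hconv : Convex ℝ {z : Fin n → ℂ | ∀ i, 0 < (z i).im} := by
    have : {z : Fin n → ℂ | ∀ i, 0 < (z i).im} = ⋂ i, {z : Fin n → ℂ | 0 < (z i).im} := by
      ext z; simp
    rw [this]
    refine convex_iInter fun i => ?_
    exact convex_halfSpace_gt (⟨fun a b => by simp, fun c a => by
      simp [Complex.smul_im]⟩ : IsLinearMap ℝ fun z : Fin n → ℂ => (z i).im) 0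
  exact hconv.isPreconnected

/-- the Rayleigh property -/
def Ray (f : MvPolynomial (Fin n) ℝ) : Prop :=
  ∀ (x : Fin n → ℝ) (i j : Fin n),
    0 ≤ eval x (pderiv i f) * eval x (pderiv j f) -
      eval x (pderiv i (pderiv j f)) * eval x f

theorem eval_update_of_notMem_vars {m : Fin n} {p : MvPolynomial (Fin n) ℝ}
    (hm : m ∉ p.vars) (x : Fin n → ℝ) (t : ℝ) :
    eval (Function.update x m t) p = eval x p := by
  rw [← aeval_real, ← aeval_real, aeval_update_of_notMem_vars hm]

end Helpers

theorem im_mul_conj_aff (a b c d : ℝ) :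
    (((a : ℂ) + Complex.I * (b : ℂ)) * (starRingEnd ℂ) ((c : ℂ) + Complex.I * (d : ℂ))).im =
      b * c - a * d := by
  simp [Complex.mul_im, Complex.add_re, Complex.add_im, Complex.mul_re]
  ring

theorem main_stable (S : Finset (Fin n)) :
    ∀ f : MvPolynomial (Fin n) ℝ,
    (∀ i, pderiv i (pderiv i f) = 0) → f.vars ⊆ S → Ray f →
    f = 0 ∨ ∀ z : Fin n → ℂ, (∀ i, 0 < (z i).im) → aeval z f ≠ 0 := by
  induction S using Finset.induction_on with
  | empty =>
    intro f _ hv _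
    have hC := eq_C_of_vars_empty (Finset.subset_empty.mp hv)
    rcases eq_or_ne (constantCoeff f) 0 with h0 | h0
    · left; rw [hC, h0, map_zero]
    · right
      intro z _
      rw [hC, aeval_C]
      simpa using h0
  | @insert m S' hmS ih =>
    intro f hMAf hvf hRf
    set g := pderiv m f with hg
    set h := res m f with hh
    have hdg : h + X m * g = f := res_add_eq m f
    have hmg : pderiv m g = 0 := hMAf m
    have hmh : pderiv m h = 0 := pderiv_res m (hMAf m)
    have hsub : ∀ p : MvPolynomial (Fin n) ℝ, p.vars ⊆ insert m S' → pderiv m p = 0 →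
        p.vars ⊆ S' := by
      intro p hp hp0 i hi
      rcases Finset.mem_insert.mp (hp hi) with rfl | hi'
      · exact absurd hi (notMem_vars_of_pderiv_eq_zero hp0)
      · exact hi'
    have hvg : g.vars ⊆ S' := hsub _ ((vars_pderiv m f).trans hvf) hmg
    have hvh : h.vars ⊆ S' := by
      refine hsub _ ?_ hmh
      intro i hi
      rw [hh, res, sub_eq_add_neg] at hi
      classical
      rcases Finset.mem_union.mp (vars_add_subset _ _ hi) with hi' | hi'
      · exact hvf hi'
      · rw [vars_neg] at hi'
        rcases Finset.mem_union.mp (vars_mul _ _ hi') with hi'' | hi''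
        · rw [vars_X] at hi''
          exact Finset.mem_insert.mpr (Or.inl (Finset.mem_singleton.mp hi''))
        · exact (vars_pderiv m f).trans hvf hi''
    have hMAg : ∀ i, pderiv i (pderiv i g) = 0 := by
      intro i
      rw [hg, pderiv_comm i m f, pderiv_comm i m (pderiv i f), hMAf i, map_zero]
    have hMAh : ∀ i, pderiv i (pderiv i h) = 0 := by
      intro i
      rcases eq_or_ne i m with rfl | him
      · rw [hmh, map_zero]
      · have e3 : pderiv i (pderiv i (pderiv m f)) = 0 := by
          rw [pderiv_comm i m f, pderiv_comm i m (pderiv i f), hMAf i, map_zero]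
        rw [hh, res, map_sub, map_sub, pderiv_mul, pderiv_X_of_ne him.symm, zero_mul, zero_add,
          pderiv_mul, pderiv_X_of_ne him.symm, zero_mul, zero_add, hMAf i, e3, mul_zero, sub_zero]
    have hnm : ∀ p : MvPolynomial (Fin n) ℝ, pderiv m p = 0 → ∀ i, m ∉ (pderiv i p).vars :=
      fun p hp i hx => notMem_vars_of_pderiv_eq_zero hp (vars_pderiv i p hx)
    have hnm2 : ∀ p : MvPolynomial (Fin n) ℝ, pderiv m p = 0 → ∀ i j,
        m ∉ (pderiv i (pderiv j p)).vars :=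
      fun p hp i j hx => notMem_vars_of_pderiv_eq_zero hp
        (vars_pderiv j p (vars_pderiv i (pderiv j p) hx))
    have hdi : ∀ i, i ≠ m → pderiv i f = pderiv i h + X m * pderiv i g := by
      intro i him
      rw [← hdg, map_add, pderiv_mul, pderiv_X_of_ne him.symm, zero_mul, zero_add]
    have hdij : ∀ i j, i ≠ m → j ≠ m →
        pderiv i (pderiv j f) = pderiv i (pderiv j h) + X m * pderiv i (pderiv j g) := by
      intro i j him hjm
      rw [hdi j hjm, map_add, pderiv_mul, pderiv_X_of_ne him.symm, zero_mul, zero_add]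
    -- the quadratic inequality in the variable `m`
    have hquad : ∀ (x : Fin n → ℝ) (i j : Fin n), i ≠ m → j ≠ m → ∀ t : ℝ,
        0 ≤ (eval x (pderiv i g) * eval x (pderiv j g) -
              eval x (pderiv i (pderiv j g)) * eval x g) * t ^ 2 +
            (eval x (pderiv i h) * eval x (pderiv j g) + eval x (pderiv i g) * eval x (pderiv j h)
              - eval x (pderiv i (pderiv j g)) * eval x h
              - eval x (pderiv i (pderiv j h)) * eval x g) * t +
            (eval x (pderiv i h) * eval x (pderiv j h) -
              eval x (pderiv i (pderiv j h)) * eval x h) := by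
      intro x i j him hjm t
      have hr := hRf (Function.update x m t) i j
      have Ef : eval (Function.update x m t) f = eval x h + t * eval x g := by
        rw [← hdg, map_add, map_mul, eval_X, Function.update_self,
          eval_update_of_notMem_vars (notMem_vars_of_pderiv_eq_zero hmh),
          eval_update_of_notMem_vars (notMem_vars_of_pderiv_eq_zero hmg)]
      have Ei : eval (Function.update x m t) (pderiv i f)
          = eval x (pderiv i h) + t * eval x (pderiv i g) := by
        rw [hdi i him, map_add, map_mul, eval_X, Function.update_self,
          eval_update_of_notMem_vars (hnm h hmh i),
          eval_update_of_notMem_vars (hnm g hmg i)]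
      have Ej : eval (Function.update x m t) (pderiv j f)
          = eval x (pderiv j h) + t * eval x (pderiv j g) := by
        rw [hdi j hjm, map_add, map_mul, eval_X, Function.update_self,
          eval_update_of_notMem_vars (hnm h hmh j),
          eval_update_of_notMem_vars (hnm g hmg j)]
      have Eij : eval (Function.update x m t) (pderiv i (pderiv j f))
          = eval x (pderiv i (pderiv j h)) + t * eval x (pderiv i (pderiv j g)) := by
        rw [hdij i j him hjm, map_add, map_mul, eval_X, Function.update_self,
          eval_update_of_notMem_vars (hnm2 h hmh i j),
          eval_update_of_notMem_vars (hnm2 g hmg i j)]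
      rw [Ei, Ej, Eij, Ef] at hr
      calc (0:ℝ) ≤ (eval x (pderiv i h) + t * eval x (pderiv i g)) *
            (eval x (pderiv j h) + t * eval x (pderiv j g)) -
            (eval x (pderiv i (pderiv j h)) + t * eval x (pderiv i (pderiv j g))) *
            (eval x h + t * eval x g) := hr
      _ = _ := by ring
    have hRg : Ray g := by
      intro x i j
      rcases eq_or_ne i m with him | him
      · subst him
        have h1 : pderiv i (pderiv j g) = 0 := by rw [pderiv_comm i j g, hmg, map_zero]
        rw [hmg, h1]
        simp
      rcases eq_or_ne j m with hjm | hjm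
      · subst hjm
        rw [hmg]
        simp
      exact quad_A (hquad x i j him hjm)
    have hRh : Ray h := by
      intro x i j
      rcases eq_or_ne i m with him | him
      · subst him
        have h1 : pderiv i (pderiv j h) = 0 := by rw [pderiv_comm i j h, hmh, map_zero]
        rw [hmh, h1]
        simp
      rcases eq_or_ne j m with hjm | hjm
      · subst hjm
        rw [hmh]
        simp
      have := hquad x i j him hjm 0
      simpa using this
    -- the Rayleigh property for the pencil
    have hPd : ∀ (a b : ℝ) (k : Fin n) (p q : MvPolynomial (Fin n) ℝ),
        pderiv k (MvPolynomial.C a * p + MvPolynomial.C b * q) =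
          MvPolynomial.C a * pderiv k p + MvPolynomial.C b * pderiv k q := by
      intro a b k p q
      rw [map_add, pderiv_C_mul, pderiv_C_mul]
    have hPm : ∀ a b : ℝ, pderiv m (MvPolynomial.C a * g + MvPolynomial.C b * h) = 0 := by
      intro a b
      rw [hPd, hmg, hmh, mul_zero, mul_zero, add_zero]
    have hRP : ∀ a b : ℝ, Ray (MvPolynomial.C a * g + MvPolynomial.C b * h) := by
      intro a b x i j
      rcases eq_or_ne i m with him | him
      · subst him
        have h1 : pderiv i (pderiv j (MvPolynomial.C a * g + MvPolynomial.C b * h)) = 0 := by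
          rw [pderiv_comm i j _, hPm, map_zero]
        rw [hPm, h1]
        simp
      rcases eq_or_ne j m with hjm | hjm
      · subst hjm
        rw [hPm]
        simp
      have Ei : ∀ k, eval x (pderiv k (MvPolynomial.C a * g + MvPolynomial.C b * h)) =
          a * eval x (pderiv k g) + b * eval x (pderiv k h) := by
        intro k
        rw [hPd, map_add, map_mul, map_mul, eval_C, eval_C]
      have Eij : eval x (pderiv i (pderiv j (MvPolynomial.C a * g + MvPolynomial.C b * h))) =
          a * eval x (pderiv i (pderiv j g)) + b * eval x (pderiv i (pderiv j h)) := by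
        rw [hPd, map_add, pderiv_C_mul, pderiv_C_mul, map_add, map_mul, map_mul, eval_C, eval_C]
      have EP : eval x (MvPolynomial.C a * g + MvPolynomial.C b * h) =
          a * eval x g + b * eval x h := by
        rw [map_add, map_mul, map_mul, eval_C, eval_C]
      rw [Ei i, Ei j, Eij, EP]
      have hq := hquad x i j him hjm
      have hA := quad_A hq
      have hCn : 0 ≤ eval x (pderiv i h) * eval x (pderiv j h) -
          eval x (pderiv i (pderiv j h)) * eval x h := by simpa using hq 0
      have hB := quad_disc hq
      have hp := quad_pencil hA hCn hB a b
      calc (0:ℝ) ≤ a ^ 2 * (eval x (pderiv i g) * eval x (pderiv j g) -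
              eval x (pderiv i (pderiv j g)) * eval x g) +
            a * b * (eval x (pderiv i h) * eval x (pderiv j g) +
              eval x (pderiv i g) * eval x (pderiv j h)
              - eval x (pderiv i (pderiv j g)) * eval x h
              - eval x (pderiv i (pderiv j h)) * eval x g) +
            b ^ 2 * (eval x (pderiv i h) * eval x (pderiv j h) -
              eval x (pderiv i (pderiv j h)) * eval x h) := hp
      _ = _ := by ring
    have hMAP : ∀ (a b : ℝ) (i : Fin n),
        pderiv i (pderiv i (MvPolynomial.C a * g + MvPolynomial.C b * h)) = 0 := by
      intro a b i
      rw [hPd, hPd, hMAg i, hMAh i, mul_zero, mul_zero, add_zero]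
    have hvP : ∀ a b : ℝ, (MvPolynomial.C a * g + MvPolynomial.C b * h).vars ⊆ S' := by
      intro a b i hi
      classical
      rcases Finset.mem_union.mp (vars_add_subset _ _ hi) with hi' | hi'
      · exact hvg (vars_C_mul_subset a g hi')
      · exact hvh (vars_C_mul_subset b h hi')
    -- nonnegativity of the Wronskians at real points
    have hWev : ∀ (j : Fin n) (x : Fin n → ℝ), j ≠ m →
        0 ≤ eval x (g * pderiv j h - h * pderiv j g) := by
      intro j x hjm
      have hr := hRf x m j
      have e2 : pderiv m (pderiv j f) = pderiv j g := by
        rw [pderiv_comm m j f]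
      rw [e2, ← hg, hdi j hjm] at hr
      rw [map_sub, map_mul, map_mul]
      have Ef : eval x f = eval x h + x m * eval x g := by
        rw [← hdg, map_add, map_mul, eval_X]
      rw [Ef, map_add, map_mul, eval_X] at hr
      calc (0:ℝ) ≤ eval x g * (eval x (pderiv j h) + x m * eval x (pderiv j g)) -
          eval x (pderiv j g) * (eval x h + x m * eval x g) := hr
      _ = _ := by ring
    -- case analysis
    rcases eq_or_ne g 0 with hg0 | hg0
    · have hfh : f = h := by rw [← hdg, hg0, mul_zero, add_zero]
      rw [hfh]
      exact ih h hMAh hvh hRh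
    by_cases hWall : ∀ j, g * pderiv j h - h * pderiv j g = 0
    · -- proportional case
      obtain ⟨c, hc⟩ := prop_of_wronskian_zero S' g h hMAg hMAh hvg hvh hg0 hWall
      rcases ih g hMAg hvg hRg with hgz | hgs
      · exact absurd hgz hg0
      · right
        intro z hz
        have hfz : aeval z f = ((c : ℂ) + z m) * aeval z g := by
          rw [← hdg, hc, map_add, map_mul, map_mul, aeval_X, aeval_C, Complex.coe_algebraMap]
          ring
        rw [hfz]
        refine mul_ne_zero ?_ (hgs z hz)
        intro h0
        have him : 0 < ((c : ℂ) + z m).im := by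
          rw [Complex.add_im, Complex.ofReal_im, zero_add]
          exact hz m
        rw [h0] at him
        simp at him
    · -- nondegenerate pencil case
      push_neg at hWall
      obtain ⟨j₀, hWj₀⟩ := hWall
      have hj₀m : j₀ ≠ m := by
        rintro rfl
        exact hWj₀ (by rw [hmh, hmg, mul_zero, mul_zero, sub_zero])
      have hpen : ∀ a b : ℝ, ¬(a = 0 ∧ b = 0) →
          MvPolynomial.C a * g + MvPolynomial.C b * h ≠ 0 := by
        intro a b hab heq
        rcases eq_or_ne b 0 with rfl | hb
        · have ha : a ≠ 0 := fun ha => hab ⟨ha, rfl⟩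
          rw [map_zero, zero_mul, add_zero] at heq
          rcases mul_eq_zero.mp heq with h' | h'
          · exact ha (MvPolynomial.C_eq_zero.mp h')
          · exact hg0 h'
        · have hch : h = MvPolynomial.C (-a / b) * g := by
            have hbC : (MvPolynomial.C b : MvPolynomial (Fin n) ℝ) ≠ 0 :=
              fun hb0 => hb (MvPolynomial.C_eq_zero.mp hb0)
            apply mul_left_cancel₀ hbC
            have e1 : MvPolynomial.C b * (MvPolynomial.C (-a / b) * g) =
                MvPolynomial.C (-a) * g := by
              rw [← mul_assoc, ← map_mul]
              congr 2
              field_simp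
            rw [e1, map_neg]
            linear_combination heq
          apply hWj₀
          rw [hch, pderiv_C_mul]
          ring
      have hpenS : ∀ a b : ℝ, ¬(a = 0 ∧ b = 0) → ∀ z : Fin n → ℂ, (∀ i, 0 < (z i).im) →
          (a : ℂ) * aeval z g + (b : ℂ) * aeval z h ≠ 0 := by
        intro a b hab z hz
        rcases ih (MvPolynomial.C a * g + MvPolynomial.C b * h) (hMAP a b) (hvP a b)
          (hRP a b) with h0 | hs
        · exact absurd h0 (hpen a b hab)
        · have := hs z hz
          rw [map_add, map_mul, map_mul, aeval_C, aeval_C] at this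
          simpa using this
      have hgs : ∀ z : Fin n → ℂ, (∀ i, 0 < (z i).im) → aeval z g ≠ 0 := by
        intro z hz h0
        refine hpenS 1 0 (by norm_num) z hz ?_
        rw [h0]
        simp
      right
      intro z hz hfz0
      set F : (Fin n → ℂ) → ℝ :=
        fun w => ((aeval w h) * (starRingEnd ℂ) (aeval w g)).im with hF
      have hFcont : Continuous F := by
        apply Complex.continuous_im.comp
        exact (continuous_aeval h).mul (Complex.continuous_conj.comp (continuous_aeval g))
      have hF0 : ∀ w : Fin n → ℂ, (∀ i, 0 < (w i).im) → F w ≠ 0 := by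
        intro w hw hFw
        have hAg : aeval w g ≠ 0 := hgs w hw
        have hnsq : Complex.normSq (aeval w g) ≠ 0 := by
          simpa [Complex.normSq_eq_zero] using hAg
        set r : ℝ := ((aeval w h) * (starRingEnd ℂ) (aeval w g)).re /
          Complex.normSq (aeval w g) with hr
        have h1 : (aeval w h) * (starRingEnd ℂ) (aeval w g) =
            ((((aeval w h) * (starRingEnd ℂ) (aeval w g)).re : ℝ) : ℂ) := by
          apply Complex.ext
          · simp
          · simp only [Complex.ofReal_im]
            exact hFw
        have h2 : (starRingEnd ℂ) (aeval w g) * (aeval w g) =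
            ((Complex.normSq (aeval w g) : ℝ) : ℂ) := by
          rw [mul_comm]
          exact Complex.mul_conj _
        have h3 : aeval w h * ((Complex.normSq (aeval w g) : ℝ) : ℂ) =
            ((((aeval w h) * (starRingEnd ℂ) (aeval w g)).re : ℝ) : ℂ) * aeval w g := by
          rw [← h2, ← h1]
          ring
        have key : aeval w h = (r : ℂ) * aeval w g := by
          rw [hr, Complex.ofReal_div, div_mul_eq_mul_div, eq_comm, div_eq_iff (by
            exact_mod_cast hnsq)]
          rw [← h3]
        refine hpenS (-r) 1 (by norm_num) w hw ?_
        rw [key]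
        push_cast
        ring
      -- F is negative at z
      have hAhz : aeval z h = -(z m) * aeval z g := by
        have hzf : aeval z h + z m * aeval z g = 0 := by
          rw [← hfz0, ← hdg, map_add, map_mul, aeval_X]
        linear_combination hzf
      have hFzneg : F z < 0 := by
        have hnormpos : 0 < Complex.normSq (aeval z g) := Complex.normSq_pos.mpr (hgs z hz)
        have hFz : F z = -(z m).im * Complex.normSq (aeval z g) := by
          simp only [hF]
          rw [hAhz, mul_assoc, Complex.mul_conj, Complex.mul_im]
          simp
        rw [hFz]
        have hzm := hz m
        nlinarith
      -- a point where F is positive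
      obtain ⟨x₀, hx₀⟩ := exists_eval_ne hWj₀
      have hWpos : 0 < eval x₀ (g * pderiv j₀ h - h * pderiv j₀ g) :=
        lt_of_le_of_ne (hWev j₀ x₀ hj₀m) (Ne.symm hx₀)
      set ζ : Fin n → ℂ := Function.update (fun k => ((x₀ k : ℝ) : ℂ)) j₀ Complex.I with hζ
      have hFζ : F ζ = eval x₀ (g * pderiv j₀ h - h * pderiv j₀ g) := by
        have e1 : aeval ζ h = ((eval x₀ (res j₀ h) : ℝ) : ℂ) +
            Complex.I * ((eval x₀ (pderiv j₀ h) : ℝ) : ℂ) := by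
          rw [hζ, aeval_update j₀ (hMAh j₀), aeval_ofReal, aeval_ofReal]
        have e2 : aeval ζ g = ((eval x₀ (res j₀ g) : ℝ) : ℂ) +
            Complex.I * ((eval x₀ (pderiv j₀ g) : ℝ) : ℂ) := by
          rw [hζ, aeval_update j₀ (hMAg j₀), aeval_ofReal, aeval_ofReal]
        have e3 : eval x₀ g = eval x₀ (res j₀ g) + x₀ j₀ * eval x₀ (pderiv j₀ g) := by
          conv_lhs => rw [← res_add_eq j₀ g]
          rw [map_add, map_mul, eval_X]
        have e4 : eval x₀ h = eval x₀ (res j₀ h) + x₀ j₀ * eval x₀ (pderiv j₀ h) := by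
          conv_lhs => rw [← res_add_eq j₀ h]
          rw [map_add, map_mul, eval_X]
        simp only [hF]
        rw [e1, e2, im_mul_conj_aff, map_sub, map_mul, map_mul, e3, e4]
        ring
      set φ : ℝ → (Fin n → ℂ) := fun ε k => ζ k + (ε : ℂ) * Complex.I with hφ
      have hφcont : Continuous φ := continuous_pi fun k =>
        continuous_const.add (Complex.continuous_ofReal.mul continuous_const)
      have hφ0 : φ 0 = ζ := by
        funext k
        simp [hφ]
      have hopen : IsOpen {ε : ℝ | 0 < F (φ ε)} :=
        isOpen_lt continuous_const (hFcont.comp hφcont)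
      have h0mem : (0 : ℝ) ∈ {ε : ℝ | 0 < F (φ ε)} := by
        simp only [Set.mem_setOf_eq, hφ0, hFζ]
        exact hWpos
      obtain ⟨δ, hδpos, hball⟩ := Metric.isOpen_iff.mp hopen 0 h0mem
      have hζim : ∀ k, 0 ≤ (ζ k).im := by
        intro k
        rw [hζ]
        rcases eq_or_ne k j₀ with rfl | hk
        · rw [Function.update_self]
          norm_num
        · rw [Function.update_of_ne hk]
          simp
      have hφU : φ (δ / 2) ∈ {w : Fin n → ℂ | ∀ i, 0 < (w i).im} := by
        intro k
        simp only [hφ]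
        rw [Complex.add_im]
        have : ((δ / 2 : ℝ) * Complex.I : ℂ).im = δ / 2 := by simp
        rw [this]
        have := hζim k
        linarith
      have hφF : 0 < F (φ (δ / 2)) := by
        have : dist (δ / 2) (0 : ℝ) < δ := by
          rw [Real.dist_eq, sub_zero, abs_of_pos (by linarith)]
          linarith
        exact hball this
      obtain ⟨w, hwU, hwF⟩ := U_preconnected.intermediate_value₂
        (show z ∈ {w : Fin n → ℂ | ∀ i, 0 < (w i).im} from hz) hφU
        hFcont.continuousOn continuousOn_const (le_of_lt hFzneg) (le_of_lt hφF)
      exact hF0 w hwU hwF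

theorem im_mul_conj_aff' (a b c d : ℝ) :
    (((b : ℂ) * Complex.I + (d : ℂ)) * (starRingEnd ℂ) ((a : ℂ) * Complex.I + (c : ℂ))).im =
      b * c - d * a := by
  simp [Complex.mul_im, Complex.add_re, Complex.add_im, Complex.mul_re]
  ring

theorem MA_pderiv {f : MvPolynomial (Fin n) ℝ} (hMA : ∀ i, pderiv i (pderiv i f) = 0)
    (j i : Fin n) : pderiv i (pderiv i (pderiv j f)) = 0 := by
  rw [pderiv_comm i j f, pderiv_comm i j (pderiv i f), hMA i, map_zero]

theorem MA_res {f : MvPolynomial (Fin n) ℝ} (hMA : ∀ i, pderiv i (pderiv i f) = 0)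
    (j i : Fin n) : pderiv i (pderiv i (res j f)) = 0 := by
  rcases eq_or_ne i j with rfl | hij
  · rw [pderiv_res i (hMA i), map_zero]
  · rw [res, map_sub, map_sub, pderiv_mul, pderiv_X_of_ne hij.symm, zero_mul, zero_add,
      pderiv_mul, pderiv_X_of_ne hij.symm, zero_mul, zero_add, hMA i, MA_pderiv hMA j i,
      mul_zero, sub_zero]

/-- stability implies the Rayleigh property, for multiaffine polynomials -/
theorem ray_of_stable {f : MvPolynomial (Fin n) ℝ}
    (hMA : ∀ i, pderiv i (pderiv i f) = 0)
    (hs : ∀ z : Fin n → ℂ, (∀ i, 0 < (z i).im) → aeval z f ≠ 0) : Ray f := by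
  intro x i j
  rcases eq_or_ne i j with rfl | hij
  · rw [hMA i]
    simpa using mul_self_nonneg (eval x (pderiv i f))
  -- the four coefficient functions
  set A : ℝ → ℂ := fun ε => aeval (fun k => ((x k : ℝ) : ℂ) + (ε : ℂ) * Complex.I)
    (pderiv i (pderiv j f)) with hA
  set Bc : ℝ → ℂ := fun ε => aeval (fun k => ((x k : ℝ) : ℂ) + (ε : ℂ) * Complex.I)
    (pderiv i (res j f)) with hB
  set Cc : ℝ → ℂ := fun ε => aeval (fun k => ((x k : ℝ) : ℂ) + (ε : ℂ) * Complex.I)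
    (res i (pderiv j f)) with hC
  set D : ℝ → ℂ := fun ε => aeval (fun k => ((x k : ℝ) : ℂ) + (ε : ℂ) * Complex.I)
    (res i (res j f)) with hD
  set G : ℝ → ℝ := fun ε =>
    ((Bc ε * Complex.I + D ε) * (starRingEnd ℂ) (A ε * Complex.I + Cc ε)).im with hG
  have hptc : Continuous (fun ε : ℝ => (fun k => ((x k : ℝ) : ℂ) + (ε : ℂ) * Complex.I)) :=
    continuous_pi fun k => continuous_const.add (Complex.continuous_ofReal.mul continuous_const)
  have hGc : Continuous G := by
    apply Complex.continuous_im.comp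
    apply Continuous.mul
    · exact (((continuous_aeval _).comp hptc).mul continuous_const).add
        ((continuous_aeval _).comp hptc)
    · exact Complex.continuous_conj.comp
        ((((continuous_aeval _).comp hptc).mul continuous_const).add
          ((continuous_aeval _).comp hptc))
  have hGnn : ∀ ε : ℝ, 0 < ε → 0 ≤ G ε := by
    intro ε hε
    have hexp : ∀ s t : ℂ,
        aeval (Function.update (Function.update
          (fun k => ((x k : ℝ) : ℂ) + (ε : ℂ) * Complex.I) i s) j t) f =
        A ε * s * t + Bc ε * s + Cc ε * t + D ε := by
      intro s t
      rw [aeval_update j (hMA j), aeval_update i (MA_res hMA j i),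
        aeval_update i (MA_pderiv hMA j i), hA, hB, hC, hD]
      ring
    have hst : ∀ s t : ℂ, 0 < s.im → 0 < t.im →
        A ε * s * t + Bc ε * s + Cc ε * t + D ε ≠ 0 := by
      intro s t hsim htim
      rw [← hexp s t]
      apply hs
      intro k
      rcases eq_or_ne k j with rfl | hkj
      · rw [Function.update_self]
        exact htim
      · rw [Function.update_of_ne hkj]
        rcases eq_or_ne k i with rfl | hki
        · rw [Function.update_self]
          exact hsim
        · rw [Function.update_of_ne hki]
          simpa using hε
    have := mob hst Complex.I (by simp)
    calc (0:ℝ) ≤ ((Bc ε * Complex.I + D ε) *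
        (starRingEnd ℂ) (A ε * Complex.I + Cc ε)).im := this
    _ = G ε := rfl
  have hG0 : 0 ≤ G 0 := by
    have htd : Filter.Tendsto G (nhdsWithin 0 (Set.Ioi 0)) (nhds (G 0)) :=
      (hGc.tendsto 0).mono_left nhdsWithin_le_nhds
    exact ge_of_tendsto htd (Filter.eventually_iff_exists_mem.mpr
      ⟨Set.Ioi 0, self_mem_nhdsWithin, fun ε hε => hGnn ε hε⟩)
  -- identify G 0
  have hz0 : (fun k => ((x k : ℝ) : ℂ) + ((0:ℝ) : ℂ) * Complex.I) = fun k => ((x k : ℝ) : ℂ) := by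
    funext k
    simp
  have hA0 : A 0 = ((eval x (pderiv i (pderiv j f)) : ℝ) : ℂ) := by
    rw [hA]
    simp only [hz0]
    exact aeval_ofReal x _
  have hB0 : Bc 0 = ((eval x (pderiv i (res j f)) : ℝ) : ℂ) := by
    rw [hB]
    simp only [hz0]
    exact aeval_ofReal x _
  have hC0 : Cc 0 = ((eval x (res i (pderiv j f)) : ℝ) : ℂ) := by
    rw [hC]
    simp only [hz0]
    exact aeval_ofReal x _
  have hD0 : D 0 = ((eval x (res i (res j f)) : ℝ) : ℂ) := by
    rw [hD]
    simp only [hz0]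
    exact aeval_ofReal x _
  have hG0val : G 0 = eval x (pderiv i (res j f)) * eval x (res i (pderiv j f)) -
      eval x (res i (res j f)) * eval x (pderiv i (pderiv j f)) := by
    rw [hG]
    simp only []
    rw [hA0, hB0, hC0, hD0]
    exact im_mul_conj_aff' _ _ _ _
  rw [hG0val] at hG0
  -- decomposition identities at `x`
  have e1 : eval x (pderiv i f) = eval x (pderiv i (res j f)) +
      x j * eval x (pderiv i (pderiv j f)) := by
    have hid : pderiv i f = pderiv i (res j f) + X j * pderiv i (pderiv j f) := by
      conv_lhs => rw [← res_add_eq j f]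
      rw [map_add, pderiv_mul, pderiv_X_of_ne hij.symm, zero_mul, zero_add]
    rw [hid, map_add, map_mul, eval_X]
  have e2 : eval x (pderiv j f) = eval x (res i (pderiv j f)) +
      x i * eval x (pderiv i (pderiv j f)) := by
    conv_lhs => rw [← res_add_eq i (pderiv j f)]
    rw [map_add, map_mul, eval_X]
  have e3 : eval x f = eval x (res i (res j f)) + x i * eval x (pderiv i (res j f)) +
      x j * (eval x (res i (pderiv j f)) + x i * eval x (pderiv i (pderiv j f))) := by
    conv_lhs => rw [← res_add_eq j f]
    rw [map_add, map_mul, eval_X]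
    congr 1
    · conv_lhs => rw [← res_add_eq i (res j f)]
      rw [map_add, map_mul, eval_X]
    · rw [← e2]
  rw [e1, e2, e3]
  nlinarith [hG0]

section Assembly

theorem pderiv_prod_X (i : Fin n) (A : Finset (Fin n)) :
    pderiv i (∏ k ∈ A, (X k : MvPolynomial (Fin n) ℝ)) =
      if i ∈ A then ∏ k ∈ A.erase i, X k else 0 := by
  induction A using Finset.induction_on with
  | empty => simp
  | @insert a A ha ihA =>
    rw [Finset.prod_insert ha, pderiv_mul, ihA]
    rcases eq_or_ne i a with rfl | hia
    · rw [pderiv_X_self, if_neg ha, mul_zero, add_zero, one_mul,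
        if_pos (Finset.mem_insert_self i A), Finset.erase_insert ha]
    · rw [pderiv_X_of_ne hia.symm, zero_mul, zero_add]
      by_cases hiA : i ∈ A
      · rw [if_pos hiA, if_pos (Finset.mem_insert_of_mem hiA),
          Finset.erase_insert_of_ne hia.symm,
          Finset.prod_insert (fun hmem => ha (Finset.mem_of_mem_erase hmem))]
      · rw [if_neg hiA, mul_zero, if_neg (fun hmem => by
          rcases Finset.mem_insert.mp hmem with h' | h'
          · exact hia h'
          · exact hiA h')]

theorem MA_M (Bs : Finset (Finset (Fin n))) (i : Fin n) :
    pderiv i (pderiv i (∑ b ∈ Bs, ∏ k ∈ b, (X k : MvPolynomial (Fin n) ℝ))) = 0 := by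
  rw [map_sum, map_sum]
  refine Finset.sum_eq_zero fun b _ => ?_
  rw [pderiv_prod_X]
  by_cases hib : i ∈ b
  · rw [if_pos hib, pderiv_prod_X, if_neg (Finset.notMem_erase i b)]
  · rw [if_neg hib, map_zero]

theorem M_ne_zero (Bs : Finset (Finset (Fin n))) (hne : Bs.Nonempty) :
    (∑ b ∈ Bs, ∏ k ∈ b, (X k : MvPolynomial (Fin n) ℝ)) ≠ 0 := by
  obtain ⟨b₀, hb₀⟩ := hne
  intro h0
  have hprod : ∀ b : Finset (Fin n), (∏ k ∈ b, (X k : MvPolynomial (Fin n) ℝ)) =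
      monomial (∑ a ∈ b, Finsupp.single a 1) 1 := by
    intro b
    induction b using Finset.induction_on with
    | empty => simp [MvPolynomial.monomial_zero']
    | @insert a A ha ihA =>
      rw [Finset.prod_insert ha, ihA, Finset.sum_insert ha]
      rw [show (X a : MvPolynomial (Fin n) ℝ) = monomial (Finsupp.single a 1) 1 from rfl,
        MvPolynomial.monomial_mul, one_mul]
  have hco := congrArg (coeff (∑ a ∈ b₀, Finsupp.single a 1)) h0
  rw [coeff_zero, MvPolynomial.coeff_sum] at hco
  simp only [hprod, coeff_monomial] at hco
  have hnn : ∀ b ∈ Bs, (0:ℝ) ≤ if (∑ a ∈ b, Finsupp.single a 1 : Fin n →₀ ℕ) =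
      ∑ a ∈ b₀, Finsupp.single a 1 then 1 else 0 := by
    intro b _
    split <;> norm_num
  have := (Finset.sum_eq_zero_iff_of_nonneg hnn).mp hco b₀ hb₀
  rw [if_pos rfl] at this
  norm_num at this

theorem aeval_smul_hom (Bs : Finset (Finset (Fin n))) (r : ℕ)
    (hcard : ∀ b ∈ Bs, b.card = r) (c : ℂ) (z : Fin n → ℂ) :
    aeval (fun k => c * z k) (∑ b ∈ Bs, ∏ k ∈ b, (X k : MvPolynomial (Fin n) ℝ)) =
      c ^ r * aeval z (∑ b ∈ Bs, ∏ k ∈ b, (X k : MvPolynomial (Fin n) ℝ)) := by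
  rw [map_sum, map_sum, Finset.mul_sum]
  refine Finset.sum_congr rfl fun b hb => ?_
  rw [map_prod, map_prod]
  simp only [aeval_X]
  rw [Finset.prod_mul_distrib, Finset.prod_const, hcard b hb]

theorem negI_mul_re (ζ : ℂ) : (-Complex.I * ζ).re = ζ.im := by
  simp

end Assembly

end Stmt15

open Stmt15 in
/-- A matroid is strongly Rayleigh if and only if it has the half-plane
property: the basis generating polynomial `M(z) = ∑_{B∈𝔅} ∏_{i∈B} zᵢ` has
the half-plane property iff `Δᵢⱼ(M)(x) ≥ 0` for all `x ∈ ℝⁿ` and `i, j`. -/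
theorem stmt_15 {n : ℕ} (B : Finset (Finset (Fin n)))
    (hne : B.Nonempty)
    (hcard : ∀ A ∈ B, ∀ A' ∈ B, A.card = A'.card)
    (hex : ∀ A ∈ B, ∀ A' ∈ B, ∀ x ∈ A \ A', ∃ y ∈ A' \ A, insert y (A.erase x) ∈ B)
    (M : MvPolynomial (Fin n) ℝ)
    (hM : M = ∑ b ∈ B, ∏ i ∈ b, X i) :
    (∃ w : ℂ, w ≠ 0 ∧ ∀ z : Fin n → ℂ, (∀ i, 0 < (w * z i).re) → aeval z M ≠ 0) ↔
      ∀ (x : Fin n → ℝ) (i j : Fin n),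
        0 ≤ eval x (pderiv i M) * eval x (pderiv j M) -
              eval x (pderiv i (pderiv j M)) * eval x M := by
  subst hM
  have hMA : ∀ i, pderiv i (pderiv i (∑ b ∈ B, ∏ k ∈ b, (X k : MvPolynomial (Fin n) ℝ))) = 0 :=
    MA_M B
  obtain ⟨b₀, hb₀⟩ := hne
  have hcard' : ∀ b ∈ B, b.card = b₀.card := fun b hb => hcard b hb b₀ hb₀
  constructor
  · rintro ⟨w, hw, hstab⟩
    have hstable : ∀ z : Fin n → ℂ, (∀ i, 0 < (z i).im) →
        aeval z (∑ b ∈ B, ∏ k ∈ b, (X k : MvPolynomial (Fin n) ℝ)) ≠ 0 := by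
      intro z hz h0
      set c : ℂ := -Complex.I / w with hc
      have hcne : c ≠ 0 := div_ne_zero (by simp) hw
      have hwc : w * c = -Complex.I := by
        rw [hc]
        field_simp
      have h1 := hstab (fun k => c * z k) (by
        intro k
        rw [← mul_assoc, hwc, negI_mul_re]
        exact hz k)
      apply h1
      rw [aeval_smul_hom B b₀.card hcard', h0, mul_zero]
    exact ray_of_stable hMA hstable
  · intro hray
    refine ⟨-Complex.I, by simp, ?_⟩
    intro z hz
    rcases main_stable Finset.univ _ hMA (Finset.subset_univ _) hray with h0 | hstab
    · exact absurd h0 (M_ne_zero B ⟨b₀, hb₀⟩)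
    · apply hstab
      intro i
      have := hz i
      rwa [negI_mul_re] at this
end

section
/- Let f ∈ ℂ[z₁,…,zₙ] be a polynomial with the half-plane property. Then there exists a real stable polynomial f̃ ∈ ℝ[z₁,…,zₙ] with supp(f̃) = supp(f). -/
open MvPolynomial

private lemma mv_aeval_eq_eval {n : ℕ} (w : Fin n → ℂ) (P : MvPolynomial (Fin n) ℂ) :
    MvPolynomial.aeval w P = MvPolynomial.eval w P := by
  rw [MvPolynomial.aeval_def, MvPolynomial.eval, Algebra.algebraMap_self]
  rfl

private lemma line_eval {n : ℕ} (P : MvPolynomial (Fin n) ℂ) (u v : Fin n → ℂ) (s : ℂ) :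
    Polynomial.eval s
      (MvPolynomial.aeval (fun i => Polynomial.C (u i) + Polynomial.C (v i) * Polynomial.X) P)
      = MvPolynomial.eval (fun i => u i + v i * s) P := by
  have h := MvPolynomial.comp_aeval_apply
    (f := fun i => Polynomial.C (u i) + Polynomial.C (v i) * Polynomial.X)
    (Polynomial.aeval s : Polynomial ℂ →ₐ[ℂ] ℂ) P
  simp only [map_add, map_mul, Polynomial.aeval_C, Polynomial.aeval_X,
    Algebra.algebraMap_self, RingHom.id_apply] at h
  rw [← mv_aeval_eq_eval, ← h, Polynomial.aeval_def, Polynomial.eval, Algebra.algebraMap_self]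

private lemma norm_conj_eval_le {n : ℕ} (F : MvPolynomial (Fin n) ℂ)
    (hF : ∀ z : Fin n → ℂ, (∀ i, 0 < (z i).im) → MvPolynomial.eval z F ≠ 0)
    (z : Fin n → ℂ) (hz : ∀ i, 0 < (z i).im) :
    ‖MvPolynomial.eval (fun i => starRingEnd ℂ (z i)) F‖ ≤ ‖MvPolynomial.eval z F‖ := by
  set x : Fin n → ℂ := fun i => ((z i).re : ℂ) with hx
  set y : Fin n → ℂ := fun i => ((z i).im : ℂ) with hy
  set φ : Polynomial ℂ :=
    MvPolynomial.aeval (fun i => Polynomial.C (x i) + Polynomial.C (y i) * Polynomial.X) F with hφ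
  have hline : ∀ s : ℂ, φ.eval s = MvPolynomial.eval (fun i => x i + y i * s) F :=
    line_eval F x y
  have hstab : ∀ s : ℂ, 0 < s.im → φ.eval s ≠ 0 := by
    intro s hs
    rw [hline]
    apply hF
    intro i
    simp only [hx, hy, Complex.add_im, Complex.ofReal_im, Complex.mul_im, Complex.ofReal_re]
    have := hz i
    have : 0 < (z i).im * s.im := by positivity
    simpa using this
  have hzI : (fun i => x i + y i * Complex.I) = z := funext fun i => by
    simp only [hx, hy]
    exact Complex.re_add_im (z i)
  have hφI : φ.eval Complex.I = MvPolynomial.eval z F := by rw [hline, hzI]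
  have hφne : φ ≠ 0 := by
    intro h0
    exact hF z hz (by rw [← hφI, h0, Polynomial.eval_zero])
  have hroots : ∀ r ∈ φ.roots, r.im ≤ 0 := by
    intro r hr
    by_contra h
    exact hstab r (lt_of_not_ge h) (Polynomial.isRoot_of_mem_roots hr)
  have hzmI : (fun i => x i + y i * (-Complex.I)) = fun i => starRingEnd ℂ (z i) :=
    funext fun i => by
      apply Complex.ext <;> simp [hx, hy]
  have hφmI : φ.eval (-Complex.I) = MvPolynomial.eval (fun i => starRingEnd ℂ (z i)) F := by
    rw [hline, hzmI]
  rw [← hφI, ← hφmI]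
  have hfac := Polynomial.Splits.eq_prod_roots
    (IsAlgClosed.splits φ)
  have evprod : ∀ s : ℂ, φ.eval s
      = φ.leadingCoeff * ((φ.roots.map (fun r => s - r)).prod) := by
    intro s
    conv_lhs => rw [hfac]
    rw [Polynomial.eval_mul, Polynomial.eval_C, Polynomial.eval_multiset_prod,
      Multiset.map_map]
    congr 2
    apply Multiset.map_congr rfl
    intro r _
    simp
  rw [evprod, evprod, norm_mul, norm_mul]
  simp only [← normHom_apply]
  rw [map_multiset_prod, map_multiset_prod, Multiset.map_map, Multiset.map_map]
  apply mul_le_mul_of_nonneg_left _ (by rw [normHom_apply]; exact norm_nonneg _)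
  apply Multiset.prod_map_le_prod_map₀
  · intro r _; simp only [Function.comp_apply, normHom_apply]; exact norm_nonneg _
  · intro r hr
    have him := hroots r hr
    simp only [Function.comp_apply, normHom_apply]
    rw [Complex.norm_def, Complex.norm_def]
    apply Real.sqrt_le_sqrt
    simp only [Complex.normSq_apply, Complex.sub_re, Complex.sub_im, Complex.neg_re,
      Complex.neg_im, Complex.I_re, Complex.I_im]
    nlinarith



private lemma eval_map_conj {n : ℕ} (F : MvPolynomial (Fin n) ℂ) (z : Fin n → ℂ) :
    MvPolynomial.eval z (MvPolynomial.map (starRingEnd ℂ) F)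
      = starRingEnd ℂ (MvPolynomial.eval (fun i => starRingEnd ℂ (z i)) F) := by
  have h := MvPolynomial.eval₂_comp_left (starRingEnd ℂ) (RingHom.id ℂ)
    (fun i => starRingEnd ℂ (z i)) F
  simp only [RingHom.comp_id, Function.comp_def, Complex.conj_conj] at h
  rw [MvPolynomial.eval_map, ← h]
  rfl

private lemma subst_scale {n : ℕ} (f : MvPolynomial (Fin n) ℂ) (c : ℂ) (hc : c ≠ 0) :
    ∃ F : MvPolynomial (Fin n) ℂ, F.support = f.support ∧
      ∀ z : Fin n → ℂ, MvPolynomial.eval z F = MvPolynomial.eval (fun i => c * z i) f := by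
  classical
  set F := f.support.sum (fun α => MvPolynomial.monomial α
      (c ^ (α.sum fun _ e => e) * MvPolynomial.coeff α f)) with hF
  have hcoeff : ∀ β, MvPolynomial.coeff β F
      = if β ∈ f.support then c ^ (β.sum fun _ e => e) * MvPolynomial.coeff β f else 0 := by
    intro β
    rw [hF, MvPolynomial.coeff_sum]
    simp only [MvPolynomial.coeff_monomial]
    rw [Finset.sum_ite_eq' f.support β
      (fun α => c ^ (α.sum fun _ e => e) * MvPolynomial.coeff α f)]
  have hsupp : F.support = f.support := by
    ext β
    rw [MvPolynomial.mem_support_iff, hcoeff β]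
    by_cases hβ : β ∈ f.support
    · simp only [hβ, if_true, iff_true]
      exact mul_ne_zero (pow_ne_zero _ hc) (MvPolynomial.mem_support_iff.mp hβ)
    · simp only [hβ, if_false, iff_false]
      simp
  refine ⟨F, hsupp, ?_⟩
  intro z
  rw [MvPolynomial.eval_eq', MvPolynomial.eval_eq', hsupp]
  apply Finset.sum_congr rfl
  intro β hβ
  rw [hcoeff β, if_pos hβ]
  have h1 : ∀ i : Fin n, (c * z i) ^ (β i) = c ^ (β i) * (z i) ^ (β i) :=
    fun i => mul_pow _ _ _
  rw [Finset.prod_congr rfl (fun i _ => h1 i), Finset.prod_mul_distrib,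
    Finset.prod_pow_eq_pow_sum]
  have h2 : (β.sum fun _ e => e) = ∑ i : Fin n, β i :=
    Finsupp.sum_fintype _ _ (fun _ => rfl)
  rw [h2]
  ring

private lemma vanish_of_upper {n : ℕ} (P : MvPolynomial (Fin n) ℂ)
    (h : ∀ z : Fin n → ℂ, (∀ i, 0 < (z i).im) → MvPolynomial.eval z P = 0) : P = 0 := by
  apply MvPolynomial.funext
  intro z
  rw [map_zero]
  set B : ℝ := ∑ i : Fin n, |(z i).im| with hB
  have hBi : ∀ i, -(z i).im ≤ B := by
    intro i
    calc -(z i).im ≤ |(z i).im| := neg_le_abs _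
    _ ≤ B := Finset.single_le_sum (f := fun i => |(z i).im|)
        (fun _ _ => abs_nonneg _) (Finset.mem_univ i)
  set ψ : Polynomial ℂ := MvPolynomial.aeval
    (fun i => Polynomial.C (z i) + Polynomial.C 1 * Polynomial.X) P with hψdef
  have hline : ∀ s : ℂ, ψ.eval s = MvPolynomial.eval (fun i => z i + 1 * s) P :=
    line_eval P z 1
  have hψ : ψ = 0 := by
    apply Polynomial.eq_zero_of_infinite_isRoot
    apply Set.infinite_of_injective_forall_mem
      (f := fun k : ℕ => Complex.I * ((B : ℂ) + 1 + (k : ℂ))) ?_ ?_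
    · intro a b hab
      have h2 := congrArg Complex.im hab
      simp only [Complex.mul_im, Complex.I_re, Complex.I_im, Complex.add_re,
        Complex.ofReal_re, Complex.one_re, Complex.natCast_re, Complex.add_im,
        Complex.ofReal_im, Complex.one_im, Complex.natCast_im] at h2
      have : (a : ℝ) = b := by linarith
      exact_mod_cast this
    · intro k
      simp only [Set.mem_setOf_eq, Polynomial.IsRoot, hline]
      apply h
      intro i
      simp only [Complex.add_im, one_mul, Complex.mul_im, Complex.I_re, Complex.I_im,
        Complex.add_re, Complex.ofReal_re, Complex.one_re, Complex.natCast_re,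
        Complex.add_im, Complex.ofReal_im, Complex.one_im, Complex.natCast_im]
      have := hBi i
      have hk : (0:ℝ) ≤ k := Nat.cast_nonneg k
      nlinarith
  have h0 := hline 0
  rw [hψ] at h0
  simp only [Polynomial.eval_zero] at h0
  have hz0 : (fun i => z i + 1 * (0:ℂ)) = z := by funext i; simp
  rw [hz0] at h0
  exact h0.symm



private lemma build_g {n : ℕ} (F : MvPolynomial (Fin n) ℂ) (μ : ℂ)
    (h1 : ∀ α ∈ F.support, (μ * MvPolynomial.coeff α F).re ≠ 0)
    (h2 : ∀ z : Fin n → ℂ, (∀ i, 0 < (z i).im) →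
      μ * MvPolynomial.eval z F + (starRingEnd ℂ) μ *
        MvPolynomial.eval z (MvPolynomial.map (starRingEnd ℂ) F) ≠ 0) :
    ∃ g : MvPolynomial (Fin n) ℝ,
      (∀ z : Fin n → ℂ, (∀ i, 0 < (z i).im) → MvPolynomial.aeval z g ≠ 0) ∧
      g.support = F.support := by
  classical
  set g : MvPolynomial (Fin n) ℝ := F.support.sum (fun α => MvPolynomial.monomial α
      ((μ * MvPolynomial.coeff α F).re)) with hg
  have hcoeff : ∀ β, MvPolynomial.coeff β g
      = if β ∈ F.support then (μ * MvPolynomial.coeff β F).re else 0 := by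
    intro β
    rw [hg, MvPolynomial.coeff_sum]
    simp only [MvPolynomial.coeff_monomial]
    rw [Finset.sum_ite_eq' F.support β (fun α => (μ * MvPolynomial.coeff α F).re)]
  have hsupp : g.support = F.support := by
    ext β
    rw [MvPolynomial.mem_support_iff, hcoeff β]
    by_cases hβ : β ∈ F.support
    · simp only [hβ, if_true, iff_true]
      exact h1 β hβ
    · simp only [hβ, if_false, iff_false]
      simp
  refine ⟨g, ?_, hsupp⟩
  intro z hz
  have hkey : 2 * (MvPolynomial.aeval z g : ℂ)
      = μ * MvPolynomial.eval z F + (starRingEnd ℂ) μ *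
        MvPolynomial.eval z (MvPolynomial.map (starRingEnd ℂ) F) := by
    have hevF : MvPolynomial.eval z F
        = ∑ α ∈ F.support, MvPolynomial.coeff α F * (α.prod fun i e => z i ^ e) := by
      conv_lhs => rw [← MvPolynomial.support_sum_monomial_coeff F]
      rw [map_sum]
      simp only [MvPolynomial.eval_monomial]
    have hsuppFc : (MvPolynomial.map (starRingEnd ℂ) F).support = F.support :=
      MvPolynomial.support_map_of_injective F (starRingEnd ℂ).injective
    have hevFc : MvPolynomial.eval z (MvPolynomial.map (starRingEnd ℂ) F)
        = ∑ α ∈ F.support, (starRingEnd ℂ) (MvPolynomial.coeff α F)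
            * (α.prod fun i e => z i ^ e) := by
      conv_lhs => rw [← MvPolynomial.support_sum_monomial_coeff
        (MvPolynomial.map (starRingEnd ℂ) F)]
      rw [map_sum, hsuppFc]
      simp only [MvPolynomial.eval_monomial, MvPolynomial.coeff_map]
    have hevg : (MvPolynomial.aeval z g : ℂ)
        = ∑ α ∈ F.support, (((μ * MvPolynomial.coeff α F).re : ℂ))
            * (α.prod fun i e => z i ^ e) := by
      rw [hg, map_sum]
      simp only [MvPolynomial.aeval_monomial]
      rfl
    rw [hevg, hevF, hevFc, Finset.mul_sum, Finset.mul_sum, Finset.mul_sum,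
      ← Finset.sum_add_distrib]
    apply Finset.sum_congr rfl
    intro α _
    rw [← mul_assoc, ← mul_assoc, ← mul_assoc, ← add_mul]
    congr 1
    rw [← map_mul]
    rw [mul_comm (2:ℂ) _]
    rw [Complex.add_conj]
    push_cast
    ring
  intro hzero
  apply h2 z hz
  rw [← hkey, hzero]
  simp

private lemma diff_eval {n : ℕ} (P : MvPolynomial (Fin n) ℂ) :
    Differentiable ℂ (fun z : Fin n → ℂ => MvPolynomial.eval z P) := by
  induction P using MvPolynomial.induction_on with
  | C a => simpa using differentiable_const a
  | add p q hp hq => simp only [map_add]; exact hp.add hq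
  | mul_X p i hp =>
      simp only [map_mul, MvPolynomial.eval_X]; exact hp.mul (ContinuousLinearMap.proj (R := ℂ) (φ := fun _ : Fin n => ℂ) i).differentiable



/-- If `f` has the half-plane property then there is a real stable polynomial
with the same support. -/
theorem stmt_19 {n : ℕ} (f : MvPolynomial (Fin n) ℂ)
    (hpp : ∃ w : ℂ, w ≠ 0 ∧ ∀ z : Fin n → ℂ, (∀ i, 0 < (w * z i).re) → eval z f ≠ 0) :
    ∃ g : MvPolynomial (Fin n) ℝ,
      (∀ z : Fin n → ℂ, (∀ i, 0 < (z i).im) → aeval z g ≠ 0) ∧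
      g.support = f.support := by
  classical
  obtain ⟨w, hw, hstabf⟩ := hpp
  set c : ℂ := -Complex.I / w with hcdef
  have hc : c ≠ 0 := div_ne_zero (neg_ne_zero.mpr Complex.I_ne_zero) hw
  obtain ⟨F, hFsupp, hFeval⟩ := subst_scale f c hc
  have hwc : w * c = -Complex.I := by
    rw [hcdef]; field_simp
  have hFstab : ∀ z : Fin n → ℂ, (∀ i, 0 < (z i).im) → eval z F ≠ 0 := by
    intro z hz
    rw [hFeval]
    apply hstabf
    intro i
    have h5 : w * (c * z i) = -Complex.I * z i := by rw [← mul_assoc, hwc]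
    rw [h5]
    simp only [Complex.mul_re, Complex.neg_re, Complex.I_re, Complex.neg_im, Complex.I_im]
    simpa using hz i
  set Fc := MvPolynomial.map (starRingEnd ℂ) F with hFcdef
  have hA : ∀ z : Fin n → ℂ, (∀ i, 0 < (z i).im) → ‖eval z Fc‖ ≤ ‖eval z F‖ := by
    intro z hz
    rw [hFcdef, eval_map_conj, RCLike.norm_conj]
    exact norm_conj_eval_le F hFstab z hz
  by_cases hE : ∃ z₀ : Fin n → ℂ, (∀ i, 0 < (z₀ i).im) ∧ ‖eval z₀ Fc‖ = ‖eval z₀ F‖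
  · obtain ⟨z₀, hz₀, heq⟩ := hE
    set U : Set (Fin n → ℂ) := {z | ∀ i, 0 < (z i).im} with hU
    have hUopen : IsOpen U := by
      have h7 : U = ⋂ i : Fin n, {z : Fin n → ℂ | 0 < (z i).im} := by
        ext z; simp [hU]
      rw [h7]
      apply isOpen_iInter_of_finite
      intro i
      exact isOpen_lt continuous_const ((Complex.continuous_im).comp (continuous_apply i))
    have hUconv : Convex ℝ U := by
      intro p hp q hq a b ha hb hab i
      have hpi := hp i
      have hqi := hq i
      have him : ((a • p + b • q) i).im = a * (p i).im + b * (q i).im := by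
        simp [Complex.add_im, Complex.smul_im]
      show 0 < ((a • p + b • q) i).im
      rw [him]
      rcases eq_or_lt_of_le ha with h|h
      · have hb1 : b = 1 := by linarith
        rw [← h, hb1]
        simpa using hqi
      · nlinarith [mul_nonneg hb hqi.le]
    set R : (Fin n → ℂ) → ℂ := fun z => eval z Fc * (eval z F)⁻¹ with hR
    have hRdiff : DifferentiableOn ℂ R U := by
      have hd1 : DifferentiableOn ℂ (fun z : Fin n → ℂ => eval z Fc) U :=
        (diff_eval Fc).differentiableOn
      have hd2 : DifferentiableOn ℂ (fun z : Fin n → ℂ => eval z F) U :=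
        (diff_eval F).differentiableOn
      rw [hR]
      exact hd1.mul (hd2.inv (fun z hz => hFstab z hz))
    have hz₀U : z₀ ∈ U := hz₀
    have hF00 : ‖eval z₀ F‖ ≠ 0 := norm_ne_zero_iff.mpr (hFstab z₀ hz₀)
    have hmax : IsMaxOn (norm ∘ R) U z₀ := by
      rw [isMaxOn_iff]
      intro z hz
      simp only [Function.comp_apply, hR, norm_mul, norm_inv]
      rw [heq, mul_inv_cancel₀ hF00, ← div_eq_mul_inv]
      exact (div_le_one (norm_pos_iff.mpr (hFstab z hz))).mpr (hA z hz)
    have heqOn := Complex.eqOn_of_isPreconnected_of_isMaxOn_norm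
      hUconv.isPreconnected hUopen hRdiff hz₀U hmax
    set ω : ℂ := R z₀ with hω
    have hid : ∀ z, z ∈ U → eval z Fc = ω * eval z F := by
      intro z hz
      have h3 := heqOn hz
      simp only [Function.const_apply] at h3
      rw [hR] at h3
      rw [mul_inv_eq_iff_eq_mul₀ (hFstab z hz)] at h3
      exact h3
    have hP : Fc - MvPolynomial.C ω * F = 0 := by
      apply vanish_of_upper
      intro z hz
      rw [map_sub, map_mul, MvPolynomial.eval_C, hid z hz]
      ring
    have hcrel : ∀ α, (starRingEnd ℂ) (coeff α F) = ω * coeff α F := by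
      intro α
      have h4 := congrArg (MvPolynomial.coeff α) hP
      rw [MvPolynomial.coeff_sub, MvPolynomial.coeff_zero, MvPolynomial.coeff_C_mul,
        sub_eq_zero] at h4
      rw [hFcdef, MvPolynomial.coeff_map] at h4
      exact h4
    have hωnorm : ‖ω‖ = 1 := by
      rw [hω, hR]
      simp only [norm_mul, norm_inv]
      rw [heq, mul_inv_cancel₀ hF00]
    have hωne : ω ≠ 0 := by
      intro h0
      rw [h0] at hωnorm
      simp at hωnorm
    set ν : ℂ := Complex.exp (Complex.log ω / 2) with hν
    have hν2 : ν ^ 2 = ω := by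
      have h6 : ((2:ℕ):ℂ) * (Complex.log ω / 2) = Complex.log ω := by push_cast; ring
      rw [hν, ← Complex.exp_nat_mul, h6, Complex.exp_log hωne]
    have hνne : ν ≠ 0 := Complex.exp_ne_zero _
    have hνconj : (starRingEnd ℂ) ν * ω = ν := by
      have hnsq : (Complex.normSq ν : ℂ) = 1 := by
        have h8 : ‖ν‖^2 = 1 := by
          rw [← norm_pow, hν2, hωnorm]
        have h9 : Complex.normSq ν = 1 := by
          rw [Complex.normSq_eq_norm_sq, h8]
        rw [h9]
        simp
      calc (starRingEnd ℂ) ν * ω = (starRingEnd ℂ) ν * (ν * ν) := by rw [← hν2]; ring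
      _ = (ν * (starRingEnd ℂ) ν) * ν := by ring
      _ = (Complex.normSq ν : ℂ) * ν := by rw [Complex.mul_conj]
      _ = ν := by rw [hnsq, one_mul]
    have hb1 : ∀ α ∈ F.support, (ν * MvPolynomial.coeff α F).re ≠ 0 := by
      intro α hα
      have ha : coeff α F ≠ 0 := MvPolynomial.mem_support_iff.mp hα
      have hreal : (starRingEnd ℂ) (ν * coeff α F) = ν * coeff α F := by
        rw [map_mul, hcrel α, ← mul_assoc, hνconj]
      have hνa : ν * coeff α F ≠ 0 := mul_ne_zero hνne ha
      intro h0
      apply hνa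
      have him : (ν * coeff α F).im = 0 := Complex.conj_eq_iff_im.mp hreal
      exact Complex.ext h0 him
    have hb2 : ∀ z : Fin n → ℂ, (∀ i, 0 < (z i).im) →
        ν * MvPolynomial.eval z F + (starRingEnd ℂ) ν *
          MvPolynomial.eval z (MvPolynomial.map (starRingEnd ℂ) F) ≠ 0 := by
      intro z hz
      rw [← hFcdef, hid z hz]
      have h10 : ν * eval z F + (starRingEnd ℂ) ν * (ω * eval z F)
          = 2 * (ν * eval z F) := by
        rw [← mul_assoc, hνconj]
        ring
      rw [h10]
      exact mul_ne_zero two_ne_zero (mul_ne_zero hνne (hFstab z hz))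
    obtain ⟨g, hgstab, hgsupp⟩ := build_g F ν hb1 hb2
    exact ⟨g, hgstab, by rw [hgsupp, hFsupp]⟩
  · push_neg at hE
    have hstrict : ∀ z : Fin n → ℂ, (∀ i, 0 < (z i).im) → ‖eval z Fc‖ < ‖eval z F‖ :=
      fun z hz => lt_of_le_of_ne (hA z hz) (hE z hz)
    obtain ⟨t, ht⟩ := Infinite.exists_notMem_finset
      (F.support.image (fun α => (coeff α F).re / (coeff α F).im))
    set μ : ℂ := 1 + (t : ℂ) * Complex.I with hμ
    have hμre1 : μ.re = 1 := by simp [hμ]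
    have hμim : μ.im = t := by simp [hμ]
    have hμre : ∀ a : ℂ, (μ * a).re = a.re - t * a.im := by
      intro a
      rw [Complex.mul_re, hμre1, hμim]
      ring
    have hμne : μ ≠ 0 := by
      intro h0
      have h1 := congrArg Complex.re h0
      rw [hμre1] at h1
      simp at h1
    have hb1 : ∀ α ∈ F.support, (μ * MvPolynomial.coeff α F).re ≠ 0 := by
      intro α hα
      rw [hμre]
      have ha : coeff α F ≠ 0 := MvPolynomial.mem_support_iff.mp hα
      by_cases him : (coeff α F).im = 0
      · rw [him, mul_zero, sub_zero]
        intro hre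
        exact ha (Complex.ext hre him)
      · intro h0
        apply ht
        rw [Finset.mem_image]
        refine ⟨α, hα, ?_⟩
        rw [div_eq_iff him]
        linarith
    have hb2 : ∀ z : Fin n → ℂ, (∀ i, 0 < (z i).im) →
        μ * MvPolynomial.eval z F + (starRingEnd ℂ) μ *
          MvPolynomial.eval z (MvPolynomial.map (starRingEnd ℂ) F) ≠ 0 := by
      intro z hz h0
      rw [← hFcdef] at h0
      have h4 : μ * eval z F = -((starRingEnd ℂ) μ * eval z Fc) := by
        linear_combination h0
      have h5 : ‖μ‖ * ‖eval z F‖ = ‖μ‖ * ‖eval z Fc‖ := by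
        calc ‖μ‖ * ‖eval z F‖ = ‖μ * eval z F‖ := (norm_mul _ _).symm
        _ = ‖(starRingEnd ℂ) μ * eval z Fc‖ := by rw [h4, norm_neg]
        _ = ‖μ‖ * ‖eval z Fc‖ := by rw [norm_mul, RCLike.norm_conj]
      have h3 := mul_lt_mul_of_pos_left (hstrict z hz) (norm_pos_iff.mpr hμne)
      linarith
    obtain ⟨g, hgstab, hgsupp⟩ := build_g F μ hb1 hb2
    exact ⟨g, hgstab, by rw [hgsupp, hFsupp]⟩
end
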